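/- arXiv:math/0501061 — 2 statements merged into one kernel-verified Lean document; each statement's English description precedes it below -/
import Mathlib

section
/- Let I ⊆ S and let Z_W(W_I) denote the centralizer of W_I in W. Then for every w ∈ Z_W(W_I) and s ∈ I one has w·α_s = ±α_s, and the map A : Z_W(W_I) → (subsets of I under symmetric difference), A(w) = {s ∈ I : w·α_s = -α_s}, is a group homomorphism whose kernel is C_I. Moreover, for every w ∈ Z_W(W_I), the set A(w) is of finite type and is a union of irreducible components of I. -/
noncomputable section

namespace CoxCentralizer

open Classical

variable {B : Type*} {W : Type*} [Group W] {V : Type*} [AddCommGroup V] [Module ℝ V]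

/-- The geometric representation of a Coxeter system `(W, S)` (with `S` indexed by `B`):
a vector space `V` with a linearly independent family of simple roots `α`, a `W`-invariant
symmetric bilinear form determined by the Coxeter matrix, and a faithful action of `W`
for which the simple reflections act by the usual formula. -/
structure GeomRep (M : CoxeterMatrix B) (cs : CoxeterSystem M W)
    (V : Type*) [AddCommGroup V] [Module ℝ V] : Type _ where
  α : B → V
  indep : LinearIndependent ℝ α
  spans : ⊤ ≤ Submodule.span ℝ (Set.range α)
  form : V →ₗ[ℝ] V →ₗ[ℝ] ℝ
  symm : ∀ u v : V, form u v = form v u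
  ρ : W →* (V ≃ₗ[ℝ] V)
  faithful : Function.Injective ρ
  invariant : ∀ (w : W) (u v : V), form (ρ w u) (ρ w v) = form u v
  form_simple_fin : ∀ i j : B, M i j ≠ 0 →
    form (α i) (α j) = - Real.cos (Real.pi / (M i j : ℝ))
  form_simple_inf : ∀ i j : B, M i j = 0 → form (α i) (α j) = -1
  simple_act : ∀ (i : B) (v : V), ρ (cs.simple i) v = v - (2 * form (α i) v) • α i

variable {M : CoxeterMatrix B} {cs : CoxeterSystem M W}

namespace GeomRep

variable (G : GeomRep M cs V)

/-- The root system `Φ = W · Π`. -/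
def Phi : Set V := {v | ∃ (w : W) (i : B), G.ρ w (G.α i) = v}

/-- The set `Π` of simple roots. -/
def Pi0 : Set V := Set.range G.α

/-- The positive roots: roots that are nonnegative linear combinations of simple roots. -/
def PhiPos : Set V :=
  {v ∈ G.Phi | ∃ c : B →₀ ℝ, (∀ i, 0 ≤ c i) ∧ v = c.sum fun i r => r • G.α i}

/-- The negative roots `Φ⁻ = -Φ⁺`. -/
def PhiNeg : Set V := {v | -v ∈ G.PhiPos}

/-- The reflection `s_γ = w s w⁻¹` along a root `γ = w · α_s`. -/
def reflAlong (γ : V) : W :=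
  if h : γ ∈ G.Phi then h.choose * cs.simple h.choose_spec.choose * h.choose⁻¹ else 1

/-- `Ψ[w] = {γ ∈ Ψ ∩ Φ⁺ : w · γ ∈ Φ⁻}`. -/
def inver (Ψ : Set V) (w : W) : Set V := {γ ∈ Ψ ∩ G.PhiPos | G.ρ w γ ∈ G.PhiNeg}

/-- `W(Ψ)`: the reflection subgroup generated by the reflections along the roots in `Ψ`. -/
def WR (Ψ : Set V) : Subgroup W := Subgroup.closure (G.reflAlong '' Ψ)

/-- The set `H · A` for a subgroup `H ≤ W` and a set `A ⊆ V`. -/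
def act (H : Subgroup W) (A : Set V) : Set V := {v | ∃ w ∈ H, ∃ a ∈ A, G.ρ w a = v}

/-- The orbit `W(Ψ) · Ψ`. -/
def orbit (Ψ : Set V) : Set V := G.act (G.WR Ψ) Ψ

/-- `Π(Ψ)`: the simple system of the reflection subgroup `W(Ψ)`; the roots
`γ ∈ (W(Ψ)·Ψ) ∩ Φ⁺` such that in every expression of `γ` as a positive linear combination
of roots in `(W(Ψ)·Ψ) ∩ Φ⁺`, all the roots involved equal `γ`. -/
def simpleSet (Ψ : Set V) : Set V :=
  {γ ∈ G.orbit Ψ ∩ G.PhiPos |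
    ∀ (n : ℕ) (c : Fin n → ℝ) (β : Fin n → V),
      (∀ k, 0 < c k) → (∀ k, β k ∈ G.orbit Ψ ∩ G.PhiPos) →
      γ = ∑ k, c k • β k → ∀ k, β k = γ}

/-- `S(Ψ) = {s_γ : γ ∈ Π(Ψ)}`, the canonical Coxeter generating set of `W(Ψ)`. -/
def SR (Ψ : Set V) : Set W := G.reflAlong '' G.simpleSet Ψ

/-- `Π_I = {α_s : s ∈ I}`. -/
def PiI (I : Set B) : Set V := G.α '' I

/-- `Φ_J = Φ ∩ span(Π_J)`. -/
def PhiIn (J : Set B) : Set V := G.Phi ∩ (Submodule.span ℝ (G.PiI J) : Set V)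

/-- `Φ_J^{⊥I}`: the roots of `Φ_J` orthogonal to all simple roots indexed by `I`. -/
def perpIn (J I : Set B) : Set V := {γ ∈ G.PhiIn J | ∀ s ∈ I, G.form γ (G.α s) = 0}

/-- `Φ^{⊥I}`: the roots orthogonal to all simple roots indexed by `I`. -/
def perp (I : Set B) : Set V := {γ ∈ G.Phi | ∀ s ∈ I, G.form γ (G.α s) = 0}

/-- `W^{⊥I} = W(Φ^{⊥I})`. -/
def Wperp (I : Set B) : Subgroup W := G.WR (G.perp I)

/-- `R^I = S(Φ^{⊥I})`. -/
def RI (I : Set B) : Set W := G.SR (G.perp I)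

/-- `Π^I = Π(Φ^{⊥I})`. -/
def PiPerp (I : Set B) : Set V := G.simpleSet (G.perp I)

/-- `C_I = {w ∈ W : w · α_s = α_s for all s ∈ I}`. -/
def CI (I : Set B) : Set W := {w : W | ∀ s ∈ I, G.ρ w (G.α s) = G.α s}

/-- `Y_I = {w ∈ C_I : w · (Φ^{⊥I} ∩ Φ⁺) = Φ^{⊥I} ∩ Φ⁺}`. -/
def YI (I : Set B) : Set W :=
  {w ∈ G.CI I | (fun v => G.ρ w v) '' (G.perp I ∩ G.PhiPos) = G.perp I ∩ G.PhiPos}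

/-- A root basis: a set of positive roots whose pairwise form values are governed by the
orders of the products of the corresponding reflections. -/
def IsRootBasis (Ψ : Set V) : Prop :=
  Ψ ⊆ G.PhiPos ∧ ∀ β ∈ Ψ, ∀ γ ∈ Ψ,
    (orderOf (G.reflAlong β * G.reflAlong γ) ≠ 0 →
      G.form β γ = - Real.cos (Real.pi / (orderOf (G.reflAlong β * G.reflAlong γ) : ℝ))) ∧
    (orderOf (G.reflAlong β * G.reflAlong γ) = 0 → G.form β γ ≤ -1)

end GeomRep

/-- Adjacency in the Coxeter graph: distinct vertices with bond `m ≥ 3` (or `∞`, coded `0`). -/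
def adj (M : CoxeterMatrix B) (a b : B) : Prop := a ≠ b ∧ M a b ≠ 2

/-- Connectivity within the subgraph of the Coxeter graph induced on `A`. -/
def connIn (M : CoxeterMatrix B) (A : Set B) (a b : B) : Prop :=
  Relation.ReflTransGen (fun x y => x ∈ A ∧ y ∈ A ∧ adj M x y) a b

/-- `J_{∼K}`: the union of the connected components of the Coxeter graph induced on `J ∪ K`
that have nonempty intersection with `K`. -/
def compUnion (M : CoxeterMatrix B) (J K : Set B) : Set B :=
  {a ∈ J ∪ K | ∃ k ∈ K, connIn M (J ∪ K) a k}

/-- The connected component of `s` in the Coxeter graph induced on `I`. -/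
def component (M : CoxeterMatrix B) (I : Set B) (s : B) : Set B := {t ∈ I | connIn M I s t}

/-- `A` is an irreducible component of `I`. -/
def IsComponent (M : CoxeterMatrix B) (I A : Set B) : Prop := ∃ s ∈ I, A = component M I s

/-- `A` is a union of irreducible components of `I`. -/
def IsComponentUnion (M : CoxeterMatrix B) (I A : Set B) : Prop :=
  A ⊆ I ∧ ∀ a ∈ A, component M I a ⊆ A

variable (cs : CoxeterSystem M W)

/-- The standard parabolic subgroup `W_I`. -/
def par (I : Set B) : Subgroup W := Subgroup.closure (cs.simple '' I)

/-- `I` is of finite type if `W_I` is finite. -/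
def finType (I : Set B) : Prop := (par cs I : Set W).Finite

/-- The longest element `w₀(I)` of a finite-type standard parabolic subgroup `W_I`. -/
def w0 (I : Set B) : W :=
  if h : ∃ w ∈ par cs I, ∀ u ∈ par cs I, cs.length u ≤ cs.length w then h.choose else 1

/-- The element `ν = w₀(J_{∼s}) · w₀(J_{∼s} ∖ {s})`. -/
def nu (J : Set B) (s : B) : W :=
  w0 cs (compUnion M J {s}) * w0 cs (compUnion M J {s} \ {s})

/-- Adjacency of two reflections in the Coxeter graph of a reflection subgroup:
their product has order at least 3 (possibly infinite). -/
def cadj (r r' : W) : Prop := r ≠ r' ∧ r * r' ≠ r' * r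

/-- Connectivity within the Coxeter graph on a set `R` of reflections. -/
def cconn (R : Set W) (a b : W) : Prop :=
  Relation.ReflTransGen (fun x y => x ∈ R ∧ y ∈ R ∧ cadj x y) a b

/-- The connected component of `r` in the Coxeter graph on `R`. -/
def ccomp (R : Set W) (r : W) : Set W := {r' ∈ R | cconn R r r'}

/-- The product of all the irreducible components of finite type of the Coxeter system
with generating set `R`. -/
def finPart (R : Set W) : Subgroup W :=
  Subgroup.closure {r ∈ R | (Subgroup.closure (ccomp R r) : Set W).Finite}

/-- The product of all the irreducible components of non-finite type of the Coxeter system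
with generating set `R`. -/
def infPart (R : Set W) : Subgroup W :=
  Subgroup.closure {r ∈ R | ¬ (Subgroup.closure (ccomp R r) : Set W).Finite}


variable (G : GeomRep M cs V)

/-- `Z(W_I)`: the center of the standard parabolic subgroup `W_I`, as a subset of `W`. -/
def ZWI (I : Set B) : Set W := {w ∈ (par cs I : Set W) | ∀ u ∈ par cs I, w * u = u * w}

/-- `B̃_I = {w ∈ Z_W(W_I) : w · (Φ^{⊥I} ∩ Φ⁺) = Φ^{⊥I} ∩ Φ⁺}`. -/
def Btilde (I : Set B) : Set W :=
  {w ∈ (Subgroup.centralizer ((par cs I : Set W)) : Set W) |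
    (fun v => G.ρ w v) '' (G.perp I ∩ G.PhiPos) = G.perp I ∩ G.PhiPos}

/-- A subset of `S` is irreducible if its induced Coxeter graph is connected. -/
def IsIrred (M : CoxeterMatrix B) (J : Set B) : Prop := ∀ a ∈ J, ∀ b ∈ J, connIn M J a b

/-- An irreducible subset `J ⊆ S` of finite type is of `(-1)`-type if its longest element
`w₀(J)` maps every simple root `α_s`, `s ∈ J`, to `-α_s`. -/
def IsMinusOneType (J : Set B) : Prop :=
  IsIrred M J ∧ finType cs J ∧ ∀ s ∈ J, G.ρ (w0 cs J) (G.α s) = - G.α s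

/-- `B_I`: the elements of `B̃_I` fixing every simple root `α_s` with `s ∈ I` lying in an
irreducible component of `I` of `(-1)`-type. -/
def BI (I : Set B) : Set W :=
  {w ∈ Btilde cs G I |
    ∀ s ∈ I, IsMinusOneType cs G (component M I s) → G.ρ w (G.α s) = G.α s}

/-- `N_I = {w ∈ W : w · Π_I = Π_I}`. -/
def NIset (I : Set B) : Set W := {w : W | (fun v => G.ρ w v) '' G.PiI I = G.PiI I}

/-- `Ỹ_I = {w ∈ N_I : w · (Φ^{⊥I} ∩ Φ⁺) = Φ^{⊥I} ∩ Φ⁺}`. -/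
def Ytilde (I : Set B) : Set W :=
  {w ∈ NIset cs G I | (fun v => G.ρ w v) '' (G.perp I ∩ G.PhiPos) = G.perp I ∩ G.PhiPos}

/-- `A` is (the vertex set of) a Coxeter graph of type `A_n` with `2 ≤ n < ∞`:
a finite path with `n ≥ 2` vertices, all of whose edges have label `3`. -/
def IsTypeA (M : CoxeterMatrix B) (A : Set B) : Prop :=
  ∃ (n : ℕ) (e : Fin n → B), 2 ≤ n ∧ Function.Injective e ∧ Set.range e = A ∧
    ∀ k l : Fin n, M (e k) (e l) =
      if (k : ℕ) + 1 = l ∨ (l : ℕ) + 1 = k then 3 else if k = l then 1 else 2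

/-- A standard expression `w = ν_m ⋯ ν_1` of `w` starting at `I`: a factorization of `w`
into elements `ν_k = w₀((I_{k-1})_{∼ s_k}) · w₀((I_{k-1})_{∼ s_k} ∖ {s_k})` with
`ν_k · Π_{I_{k-1}} = Π_{I_k}` and `ℓ(w) = Σ_k ℓ(ν_k)`. -/
structure StdExpr (cs : CoxeterSystem M W) (G : GeomRep M cs V) (I : Set B) (w : W) :
    Type _ where
  m : ℕ
  Iseq : Fin (m + 1) → Set B
  sseq : Fin m → B
  base : Iseq 0 = I
  not_mem : ∀ k : Fin m, sseq k ∉ Iseq k.castSucc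
  fin : ∀ k : Fin m, finType cs (compUnion M (Iseq k.castSucc) {sseq k})
  maps : ∀ k : Fin m,
    (fun v => G.ρ (nu cs (Iseq k.castSucc) (sseq k)) v) '' G.PiI (Iseq k.castSucc) =
      G.PiI (Iseq k.succ)
  prod_eq : w = (List.ofFn fun k : Fin m => nu cs (Iseq k.castSucc) (sseq k)).reverse.prod
  len_eq : cs.length w = ∑ k : Fin m, cs.length (nu cs (Iseq k.castSucc) (sseq k))

/-- The factor `ν_k` of a standard expression is a loop if it fixes `Π_{I_{k-1}}` pointwise. -/
def StdExpr.IsLoop {cs : CoxeterSystem M W} {G : GeomRep M cs V} {I : Set B} {w : W}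
    (E : StdExpr cs G I w) (k : Fin E.m) : Prop :=
  ∀ t ∈ E.Iseq k.castSucc,
    G.ρ (nu cs (E.Iseq k.castSucc) (E.sseq k)) (G.α t) = G.α t

/-- The product `ν_k ⋯ ν_1` of the first (rightmost) `k` factors of a standard expression. -/
def StdExpr.tail {cs : CoxeterSystem M W} {G : GeomRep M cs V} {I : Set B} {w : W}
    (E : StdExpr cs G I w) (k : ℕ) : W :=
  ((List.ofFn fun j : Fin E.m => nu cs (E.Iseq j.castSucc) (E.sseq j)).take k).reverse.prod

/-! ### Auxiliary development for Statement 12 -/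

section Aux

local notation "σ" => cs.simple
local notation "π" => cs.wordProd
local notation "ℓ" => cs.length

/-- `ρ` of a product. -/
theorem rho_mul (a b : W) (v : V) : G.ρ (a * b) v = G.ρ a (G.ρ b v) := by
  rw [map_mul]; rfl

theorem form_alpha_self (i : B) : G.form (G.α i) (G.α i) = 1 := by
  have h := G.form_simple_fin i i (by rw [M.diagonal]; norm_num)
  rw [M.diagonal] at h
  simp [Real.cos_pi] at h
  simpa using h

theorem rho_simple_alpha (i : B) : G.ρ (σ i) (G.α i) = - G.α i := by
  rw [G.simple_act, form_alpha_self]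
  module

theorem root_norm {γ : V} (h : γ ∈ G.Phi) : G.form γ γ = 1 := by
  obtain ⟨w, i, rfl⟩ := h
  rw [G.invariant, form_alpha_self]

theorem alpha_ne_zero (i : B) : G.α i ≠ 0 := G.indep.ne_zero i

theorem alpha_ne_neg (i : B) : G.α i ≠ - G.α i := by
  intro h
  have h2 : (2 : ℝ) • G.α i = 0 := by
    rw [two_smul]; nth_rw 2 [h]; abel
  exact alpha_ne_zero cs G i (by simpa using (smul_eq_zero.mp h2).resolve_left (by norm_num))

theorem Phi_stable {γ : V} (h : γ ∈ G.Phi) (w : W) : G.ρ w γ ∈ G.Phi := by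
  obtain ⟨u, i, rfl⟩ := h
  exact ⟨w * u, i, by rw [rho_mul]⟩

theorem alpha_mem_Phi (i : B) : G.α i ∈ G.Phi := ⟨1, i, by simp⟩

theorem neg_mem_Phi {γ : V} (h : γ ∈ G.Phi) : -γ ∈ G.Phi := by
  obtain ⟨u, i, rfl⟩ := h
  refine ⟨u * σ i, i, ?_⟩
  rw [rho_mul, rho_simple_alpha, map_neg]

/-- The sum in the definition of `PhiPos` is a linear combination. -/
theorem sum_eq_lincomb (c : B →₀ ℝ) :
    (c.sum fun i r => r • G.α i) = Finsupp.linearCombination ℝ G.α c := by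
  rw [Finsupp.linearCombination_apply]

theorem lincomb_injective :
    Function.Injective (Finsupp.linearCombination ℝ G.α) := by
  exact G.indep

theorem alpha_mem_PhiPos (i : B) : G.α i ∈ G.PhiPos := by
  refine ⟨alpha_mem_Phi cs G i, Finsupp.single i 1, fun j => ?_, ?_⟩
  · rcases eq_or_ne i j with rfl | h
    · simp
    · simp [Finsupp.single_apply_eq_zero.mpr fun h' => absurd h'.symm h]
  · rw [sum_eq_lincomb, Finsupp.linearCombination_single, one_smul]

theorem pos_neg_disjoint {γ : V} (hp : γ ∈ G.PhiPos) (hn : γ ∈ G.PhiNeg) : False := by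
  obtain ⟨hγ, c, hc, hγc⟩ := hp
  obtain ⟨hγ', c', hc', hγc'⟩ := hn
  have hsum : Finsupp.linearCombination ℝ G.α (c + c') = 0 := by
    rw [map_add, ← sum_eq_lincomb, ← sum_eq_lincomb, ← hγc, ← hγc']
    abel
  have hcc : c + c' = 0 := by
    apply lincomb_injective cs G
    simpa using hsum
  have hc0 : c = 0 := by
    ext j
    have h1 := hc j
    have h2 := hc' j
    have h3 : c j + c' j = 0 := by
      have := Finsupp.ext_iff.mp hcc j
      simpa using this
    simp only [Finsupp.coe_zero, Pi.zero_apply]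
    linarith
  have h0 : γ = 0 := by rw [hγc, hc0]; simp
  have h1 := root_norm cs G hγ
  rw [h0] at h1
  simp at h1

/-! #### Dihedral subgroup combinatorics -/

/-- `x` is a product of simple reflections with indices in `{i, t}`. -/
def DW (i t : B) (x : W) : Prop :=
  ∃ l : List B, (∀ j ∈ l, j = i ∨ j = t) ∧ x = π l

/-- The length of `x` with respect to the alphabet `{i, t}`. -/
def dlen (i t : B) (x : W) : ℕ :=
  sInf {n | ∃ l : List B, (∀ j ∈ l, j = i ∨ j = t) ∧ l.length = n ∧ x = π l}

theorem dlen_le {i t : B} {x : W} {l : List B} (hl : ∀ j ∈ l, j = i ∨ j = t)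
    (hx : x = π l) : dlen cs i t x ≤ l.length :=
  Nat.sInf_le ⟨l, hl, rfl, hx⟩

theorem exists_min_word {i t : B} {x : W} (h : DW cs i t x) :
    ∃ l : List B, (∀ j ∈ l, j = i ∨ j = t) ∧ l.length = dlen cs i t x ∧ x = π l := by
  obtain ⟨l, hl, hx⟩ := h
  have hne : {n | ∃ l : List B, (∀ j ∈ l, j = i ∨ j = t) ∧ l.length = n ∧ x = π l}.Nonempty :=
    ⟨l.length, l, hl, rfl, hx⟩
  exact Nat.sInf_mem hne

theorem length_wordProd_mod_two (l : List B) : ℓ (π l) % 2 = l.length % 2 := by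
  induction l with
  | nil => simp
  | cons j l ih =>
      rw [cs.wordProd_cons]
      rcases cs.length_simple_mul (π l) j with h | h <;> simp only [List.length_cons] <;> omega

theorem dlen_mod_two {i t : B} {x : W} (h : DW cs i t x) :
    dlen cs i t x % 2 = ℓ x % 2 := by
  obtain ⟨l, _, hlen, hx⟩ := exists_min_word cs h
  calc dlen cs i t x % 2 = l.length % 2 := by rw [hlen]
    _ = ℓ (π l) % 2 := (length_wordProd_mod_two cs l).symm
    _ = ℓ x % 2 := by rw [hx]

theorem DW.one (i t : B) : DW cs i t 1 := ⟨[], by simp, by simp⟩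

theorem dlen_one (i t : B) : dlen cs i t 1 = 0 :=
  Nat.le_zero.mp (dlen_le cs (l := []) (by simp) (by simp))

theorem DW.mul_simple {i t : B} {x : W} (h : DW cs i t x) {j : B} (hj : j = i ∨ j = t) :
    DW cs i t (x * σ j) := by
  obtain ⟨l, hl, hx⟩ := h
  refine ⟨l ++ [j], ?_, ?_⟩
  · intro a ha
    rcases List.mem_append.mp ha with ha | ha
    · exact hl a ha
    · simp at ha; subst ha; exact hj
  · rw [cs.wordProd_append, cs.wordProd_singleton, hx]

theorem DW.simple_mul {i t : B} {x : W} (h : DW cs i t x) {j : B} (hj : j = i ∨ j = t) :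
    DW cs i t (σ j * x) := by
  obtain ⟨l, hl, hx⟩ := h
  refine ⟨j :: l, ?_, ?_⟩
  · intro a ha
    rcases List.mem_cons.mp ha with ha | ha
    · subst ha; exact hj
    · exact hl a ha
  · rw [cs.wordProd_cons, hx]

theorem dlen_mul_simple_le {i t : B} {x : W} (h : DW cs i t x) {j : B} (hj : j = i ∨ j = t) :
    dlen cs i t (x * σ j) ≤ dlen cs i t x + 1 := by
  obtain ⟨l, hl, hlen, hx⟩ := exists_min_word cs h
  have : x * σ j = π (l ++ [j]) := by rw [cs.wordProd_append, cs.wordProd_singleton, hx]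
  calc dlen cs i t (x * σ j) ≤ (l ++ [j]).length := by
        apply dlen_le cs ?_ this
        intro a ha
        rcases List.mem_append.mp ha with ha | ha
        · exact hl a ha
        · simp at ha; subst ha; exact hj
    _ = dlen cs i t x + 1 := by simp [hlen]

theorem dlen_mul_simple_ne {i t : B} {x : W} (h : DW cs i t x) {j : B} (hj : j = i ∨ j = t) :
    dlen cs i t (x * σ j) ≠ dlen cs i t x := by
  have h1 := dlen_mod_two cs h
  have h2 := dlen_mod_two cs (h.mul_simple cs hj)
  rcases cs.length_mul_simple x j with h3 | h3 <;> omega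

theorem alternatingWord_letters (i t : B) :
    ∀ n, ∀ j ∈ CoxeterSystem.alternatingWord i t n, j = i ∨ j = t := by
  intro n
  induction n with
  | zero => simp [CoxeterSystem.alternatingWord]
  | succ m ih =>
      rw [CoxeterSystem.alternatingWord_succ']
      intro j hj
      rcases List.mem_cons.mp hj with hj | hj
      · by_cases he : Even m <;> simp [he] at hj <;> [exact Or.inr hj; exact Or.inl hj]
      · exact ih j hj

/-- Right recursion for alternating word products. -/
theorem awY_succ (i t : B) (n : ℕ) :
    π (CoxeterSystem.alternatingWord i t (n + 1)) =
      π (CoxeterSystem.alternatingWord t i n) * σ t := by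
  rw [CoxeterSystem.alternatingWord_succ, ← cs.wordProd_concat]

/-- Left recursion for alternating word products. -/
theorem awY_succ' (i t : B) (n : ℕ) :
    π (CoxeterSystem.alternatingWord i t (n + 1)) =
      σ (if Even n then t else i) * π (CoxeterSystem.alternatingWord i t n) := by
  rw [CoxeterSystem.alternatingWord_succ', cs.wordProd_cons]

theorem braid_eq (i t : B) :
    π (CoxeterSystem.alternatingWord i t (M i t)) =
      π (CoxeterSystem.alternatingWord t i (M i t)) := by
  have := cs.wordProd_braidWord_eq i t
  unfold CoxeterSystem.braidWord at this
  rwa [M.symmetric t i] at this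

theorem alt_of_DW (i t : B) : ∀ n x, DW cs i t x → dlen cs i t x = n →
    x = π (CoxeterSystem.alternatingWord t i n) ∨
    x = π (CoxeterSystem.alternatingWord i t n) := by
  intro n
  induction n using Nat.strong_induction_on with
  | _ n ih =>
    intro x hx hn
    obtain ⟨l, hl, hlen, hxl⟩ := exists_min_word cs hx
    match n with
    | 0 =>
        rw [hn] at hlen
        rw [List.length_eq_zero_iff] at hlen
        subst hlen
        simp only [CoxeterSystem.wordProd_nil] at hxl
        left
        simp [CoxeterSystem.alternatingWord, hxl]
    | m + 1 =>
        rcases List.eq_nil_or_concat l with rfl | ⟨l', j, rfl⟩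
        · rw [hn] at hlen; simp at hlen
        · have hj : j = i ∨ j = t := hl j (by simp [List.concat_eq_append])
          have hl' : ∀ a ∈ l', a = i ∨ a = t := fun a ha =>
            hl a (by simp [List.concat_eq_append, ha])
          have hxj : x * σ j = π l' := by
            rw [hxl, List.concat_eq_append, cs.wordProd_append, cs.wordProd_singleton]
            simp
          have hlen' : l'.length = m := by
            rw [hn] at hlen; simpa [List.concat_eq_append] using hlen
          have hDW' : DW cs i t (x * σ j) := ⟨l', hl', hxj⟩
          have hd1 : dlen cs i t (x * σ j) ≤ m := by
            rw [← hlen']; exact dlen_le cs hl' hxj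
          have hd2 : dlen cs i t x ≤ dlen cs i t (x * σ j) + 1 := by
            have := dlen_mul_simple_le cs (x := x * σ j) hDW' hj
            simpa using this
          have hd : dlen cs i t (x * σ j) = m := by omega
          have := ih m (by omega) (x * σ j) hDW' hd
          have hxrec : x = (x * σ j) * σ j := by simp
          rcases this with hz | hy
          · -- x σ j = Z m  (word in aw t i, ends with i)
            rcases hj with hj' | hj' <;> rw [hj'] at hz hxrec
            · -- j = i : x = Z m * σ i = Y' (m+1) in aw t i? no: aw t i (m+1) = (aw i t m).concat i
              -- Z m * σ i : this is "y_n σ i" with roles swapped: aw t i m ends with i.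
              -- appending i to a word ending in i: need the degenerate/contradiction case
              match m with
              | 0 =>
                  -- x σ i = 1, x = σ i = π (aw t i 1)
                  left
                  rw [hxrec, hz]
                  rw [awY_succ cs t i 0]
                  simp [CoxeterSystem.alternatingWord]
              | k + 1 =>
                  -- aw t i (k+1) = (aw i t k).concat i, so Z (k+1) σ i = π (aw i t k)
                  exfalso
                  have : x = π (CoxeterSystem.alternatingWord i t k) := by
                    rw [hxrec, hz, awY_succ cs t i k]
                    simp
                  have hle : dlen cs i t x ≤ k :=
                    le_trans (dlen_le cs (alternatingWord_letters i t k) this)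
                      (by simp)
                  omega
            · -- j = t : x = Z m * σ t = Y (m+1)
              right
              rw [hxrec, hz, ← awY_succ cs i t m]
          · -- x σ j = Y m (word in aw i t, ends with t)
            rcases hj with hj' | hj' <;> rw [hj'] at hy hxrec
            · -- j = i : x = Y m * σ i = Z (m+1)
              left
              rw [hxrec, hy, ← awY_succ cs t i m]
            · -- j = t : degenerate
              match m with
              | 0 =>
                  right
                  rw [hxrec, hy]
                  rw [awY_succ cs i t 0]
                  simp [CoxeterSystem.alternatingWord]
              | k + 1 =>
                  exfalso
                  have : x = π (CoxeterSystem.alternatingWord t i k) := by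
                    rw [hxrec, hy, awY_succ cs i t k]
                    simp
                  have hle : dlen cs i t x ≤ k :=
                    le_trans (dlen_le cs (fun a ha =>
                      (alternatingWord_letters t i k a ha).symm) this) (by simp)
                  omega

theorem even_succ_if {γ : Type*} (a b : B) (m : ℕ) :
    (if Even (m + 1) then a else b) = (if Even m then b else a) := by
  rcases Nat.even_or_odd m with he | ho
  · have h1 : ¬ Even (m + 1) := by simp [Nat.even_add_one, he]
    rw [if_neg h1, if_pos he]
  · have hne : ¬ Even m := Nat.not_even_iff_odd.mpr ho
    have h1 : Even (m + 1) := by simp [Nat.even_add_one, hne]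
    rw [if_pos h1, if_neg hne]

theorem step_lemma (i t : B) (hM : M i t ≠ 0) (k : ℕ) (hk : k ≤ M i t) (j : B)
    (hj : j = i ∨ j = t) :
    ∃ k' ≤ M i t, σ j * π (CoxeterSystem.alternatingWord i t k) =
        π (CoxeterSystem.alternatingWord i t k') ∨
      σ j * π (CoxeterSystem.alternatingWord i t k) =
        π (CoxeterSystem.alternatingWord t i k') := by
  by_cases hjc : j = (if Even k then t else i)
  · -- extending letter
    rcases Nat.lt_or_ge k (M i t) with hlt | hge
    · refine ⟨k + 1, by omega, Or.inl ?_⟩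
      rw [awY_succ' cs i t k, hjc]
    · -- k = M i t : use the braid relation and reduce on the other side
      have hkM : k = M i t := le_antisymm hk hge
      obtain ⟨m, rfl⟩ : ∃ m, k = m + 1 := ⟨k - 1, by omega⟩
      refine ⟨m, by omega, Or.inr ?_⟩
      rw [hkM, braid_eq cs i t, ← hkM, awY_succ' cs t i m, ← mul_assoc, hjc,
        even_succ_if (γ := Unit) t i m]
      rcases Nat.even_or_odd m with he | ho
      · rw [if_pos he]; simp
      · rw [if_neg (Nat.not_even_iff_odd.mpr ho)]; simp
  · -- reducing letter
    have hj' : j = (if Even k then i else t) := by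
      rcases Nat.even_or_odd k with he | ho
      · rw [if_pos he] at hjc; rw [if_pos he]; tauto
      · rw [if_neg (Nat.not_even_iff_odd.mpr ho)] at hjc
        rw [if_neg (Nat.not_even_iff_odd.mpr ho)]; tauto
    rcases Nat.eq_zero_or_pos k with rfl | hpos
    · -- k = 0, so j = i and σ i = π (aw t i 1)
      rw [if_pos Even.zero] at hj'
      refine ⟨1, by omega, Or.inr ?_⟩
      rw [hj']
      simp [CoxeterSystem.alternatingWord]
    · obtain ⟨m, rfl⟩ : ∃ m, k = m + 1 := ⟨k - 1, by omega⟩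
      refine ⟨m, by omega, Or.inl ?_⟩
      rw [awY_succ' cs i t m, ← mul_assoc, hj', even_succ_if (γ := Unit) i t m]
      rcases Nat.even_or_odd m with he | ho
      · rw [if_pos he]; simp
      · rw [if_neg (Nat.not_even_iff_odd.mpr ho)]; simp

theorem bound_lemma (i t : B) (hM : M i t ≠ 0) :
    ∀ l : List B, (∀ j ∈ l, j = i ∨ j = t) →
    ∃ k ≤ M i t, π l = π (CoxeterSystem.alternatingWord i t k) ∨
      π l = π (CoxeterSystem.alternatingWord t i k) := by
  intro l
  induction l with
  | nil =>
      intro _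
      exact ⟨0, by omega, Or.inl (by simp [CoxeterSystem.alternatingWord])⟩
  | cons j l ih =>
      intro hl
      obtain ⟨k, hk, hcase⟩ := ih (fun a ha => hl a (List.mem_cons_of_mem _ ha))
      have hj : j = i ∨ j = t := hl j (List.mem_cons_self)
      rw [cs.wordProd_cons]
      rcases hcase with h | h
      · rw [h]
        obtain ⟨k', hk', hc⟩ := step_lemma cs i t hM k hk j hj
        exact ⟨k', hk', hc⟩
      · rw [h]
        have hM' : M t i ≠ 0 := by rwa [M.symmetric t i]
        have hk2 : k ≤ M t i := by rwa [M.symmetric t i]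
        obtain ⟨k', hk', hc⟩ := step_lemma cs t i hM' k hk2 j hj.symm
        rw [M.symmetric t i] at hk'
        exact ⟨k', hk', hc.symm⟩

theorem dlen_le_M {i t : B} (hM : M i t ≠ 0) {x : W} (h : DW cs i t x) :
    dlen cs i t x ≤ M i t := by
  obtain ⟨l, hl, hx⟩ := h
  obtain ⟨k, hk, hcase⟩ := bound_lemma cs i t hM l hl
  rcases hcase with hc | hc
  · calc dlen cs i t x ≤ (CoxeterSystem.alternatingWord i t k).length :=
        dlen_le cs (alternatingWord_letters i t k) (by rw [hx, hc])
      _ = k := by simp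
      _ ≤ M i t := hk
  · calc dlen cs i t x ≤ (CoxeterSystem.alternatingWord t i k).length :=
        dlen_le cs (fun a ha => (alternatingWord_letters t i k a ha).symm) (by rw [hx, hc])
      _ = k := by simp
      _ ≤ M i t := hk

/-! #### The coefficient sequence for dihedral root computations -/

end Aux

/-- The Chebyshev-like sequence governing dihedral root coefficients. -/
def dseq (e : ℝ) : ℕ → ℝ
  | 0 => 0
  | 1 => 1
  | n + 2 => -2 * e * dseq e (n + 1) - dseq e n

@[simp] theorem dseq_zero (e : ℝ) : dseq e 0 = 0 := rfl
@[simp] theorem dseq_one (e : ℝ) : dseq e 1 = 1 := rfl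
theorem dseq_add_two (e : ℝ) (n : ℕ) :
    dseq e (n + 2) = -2 * e * dseq e (n + 1) - dseq e n := rfl

theorem dseq_neg_one (k : ℕ) : dseq (-1) k = k := by
  induction k using Nat.strong_induction_on with
  | _ k ih =>
    match k with
    | 0 => simp
    | 1 => simp
    | n + 2 =>
        rw [dseq_add_two, ih (n+1) (by omega), ih n (by omega)]
        push_cast
        ring

theorem dseq_cos (m : ℕ) (hm : 2 ≤ m) (k : ℕ) :
    dseq (-Real.cos (Real.pi / m)) k =
      Real.sin (k * (Real.pi / m)) / Real.sin (Real.pi / m) := by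
  have hθpos : 0 < Real.pi / m := by
    apply div_pos Real.pi_pos
    exact_mod_cast Nat.lt_of_lt_of_le (by norm_num) hm
  have hθlt : Real.pi / m < Real.pi := by
    rw [div_lt_iff₀ (by exact_mod_cast Nat.lt_of_lt_of_le (by norm_num) hm)]
    nth_rw 1 [← mul_one Real.pi]
    apply mul_lt_mul_of_pos_left _ Real.pi_pos
    exact_mod_cast hm
  have hsin : 0 < Real.sin (Real.pi / m) := Real.sin_pos_of_pos_of_lt_pi hθpos hθlt
  induction k using Nat.strong_induction_on with
  | _ k ih =>
    match k with
    | 0 => simp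
    | 1 => simp [div_self hsin.ne']
    | n + 2 =>
        rw [dseq_add_two, ih (n+1) (by omega), ih n (by omega)]
        have key : Real.sin ((n + 2 : ℕ) * (Real.pi / m)) =
            2 * Real.cos (Real.pi / m) * Real.sin ((n + 1 : ℕ) * (Real.pi / m)) -
              Real.sin ((n : ℕ) * (Real.pi / m)) := by
          have h1 : ((n + 2 : ℕ) : ℝ) * (Real.pi / m) =
              ((n + 1 : ℕ) : ℝ) * (Real.pi / m) + Real.pi / m := by push_cast; ring
          have h2 : ((n : ℕ) : ℝ) * (Real.pi / m) =
              ((n + 1 : ℕ) : ℝ) * (Real.pi / m) - Real.pi / m := by push_cast; ring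
          rw [h1, h2, Real.sin_add, Real.sin_sub]
          ring
        rw [key]
        field_simp <;> ring

theorem dseq_nonneg_of_cos (m : ℕ) (hm : 2 ≤ m) (k : ℕ) (hk : k ≤ m) :
    0 ≤ dseq (-Real.cos (Real.pi / m)) k := by
  rw [dseq_cos m hm k]
  have hθpos : 0 < Real.pi / m := by
    apply div_pos Real.pi_pos
    exact_mod_cast Nat.lt_of_lt_of_le (by norm_num) hm
  have hθlt : Real.pi / m < Real.pi := by
    rw [div_lt_iff₀ (by exact_mod_cast Nat.lt_of_lt_of_le (by norm_num) hm)]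
    nth_rw 1 [← mul_one Real.pi]
    apply mul_lt_mul_of_pos_left _ Real.pi_pos
    exact_mod_cast hm
  have hsin : 0 < Real.sin (Real.pi / m) := Real.sin_pos_of_pos_of_lt_pi hθpos hθlt
  apply div_nonneg _ hsin.le
  apply Real.sin_nonneg_of_nonneg_of_le_pi
  · positivity
  · have hkm : (k : ℝ) ≤ (m : ℝ) := by exact_mod_cast hk
    have hm0 : (m : ℝ) ≠ 0 := Nat.cast_ne_zero.mpr (by omega)
    calc (k : ℝ) * (Real.pi / m) ≤ (m : ℝ) * (Real.pi / m) :=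
        mul_le_mul_of_nonneg_right hkm hθpos.le
      _ = Real.pi := by field_simp

theorem dseq_nonneg_inf (k : ℕ) : 0 ≤ dseq (-1) k := by
  rw [dseq_neg_one]; positivity

section Aux2

local notation "σ" => cs.simple
local notation "π" => cs.wordProd
local notation "ℓ" => cs.length

/-- The root `ρ(alternatingWord i t n) α_i` in coordinates. -/
theorem vec_formula (i t : B) : ∀ n : ℕ,
    G.ρ (π (CoxeterSystem.alternatingWord i t n)) (G.α i) =
      dseq (G.form (G.α i) (G.α t)) (if Even n then n + 1 else n) • G.α i +
        dseq (G.form (G.α i) (G.α t)) (if Even n then n else n + 1) • G.α t := by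
  set e := G.form (G.α i) (G.α t) with he
  intro n
  induction n with
  | zero =>
      simp [CoxeterSystem.alternatingWord]
  | succ n ih =>
      rw [awY_succ' cs i t n, rho_mul, ih]
      rcases Nat.even_or_odd n with hev | hod
      · have hno : ¬ Even (n + 1) := by simp [Nat.even_add_one, hev]
        rw [if_pos hev, if_pos hev, if_neg hno, if_neg hno, if_pos hev, G.simple_act]
        simp only [map_add, map_smul, LinearMap.add_apply, LinearMap.smul_apply,
          smul_eq_mul]
        rw [G.symm (G.α t) (G.α i), ← he, form_alpha_self]
        have hd : dseq e (n + 2) = -2 * e * dseq e (n + 1) - dseq e n := dseq_add_two e n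
        match_scalars
        · ring
        · rw [hd]; ring
      · have hne : ¬ Even n := Nat.not_even_iff_odd.mpr hod
        have hyes : Even (n + 1) := by simp [Nat.even_add_one, hne]
        rw [if_neg hne, if_neg hne, if_pos hyes, if_pos hyes, if_neg hne, G.simple_act]
        simp only [map_add, map_smul, LinearMap.add_apply, LinearMap.smul_apply,
          smul_eq_mul]
        rw [form_alpha_self, ← he]
        have hd : dseq e (n + 2) = -2 * e * dseq e (n + 1) - dseq e n := dseq_add_two e n
        match_scalars
        · rw [hd]; ring
        · ring

/-- The dihedral positivity lemma: if `ℓ'(x σ_i) > ℓ'(x)` within the dihedral group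
generated by `σ_i, σ_t`, then `x · α_i` is a nonnegative combination of `α_i, α_t`. -/
theorem dihedral_pos {i t : B} (hit : i ≠ t) {x : W} (hx : DW cs i t x)
    (h : dlen cs i t x < dlen cs i t (x * σ i)) :
    ∃ a b : ℝ, 0 ≤ a ∧ 0 ≤ b ∧ G.ρ x (G.α i) = a • G.α i + b • G.α t := by
  set n := dlen cs i t x with hn
  have halt := alt_of_DW cs i t n x hx rfl
  -- first, reduce to the case x = π (aw i t n)
  have hY : x = π (CoxeterSystem.alternatingWord i t n) := by
    rcases halt with hz | hy
    · rcases Nat.eq_zero_or_pos n with h0 | hpos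
      · rw [h0] at hz ⊢
        simpa [CoxeterSystem.alternatingWord] using hz
      · exfalso
        obtain ⟨m, hm⟩ : ∃ m, n = m + 1 := ⟨n - 1, by omega⟩
        have hxi : x * σ i = π (CoxeterSystem.alternatingWord i t m) := by
          rw [hz, hm, awY_succ cs t i m]
          simp
        have : dlen cs i t (x * σ i) ≤ m :=
          le_trans (dlen_le cs (alternatingWord_letters i t m) hxi) (by simp)
        omega
    · exact hy
  -- in the finite case, n + 1 ≤ M i t
  have hbound : M i t ≠ 0 → n + 1 ≤ M i t := by
    intro hM
    have hle : n ≤ M i t := by rw [hn]; exact dlen_le_M cs hM hx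
    rcases Nat.lt_or_ge n (M i t) with hlt | hge
    · omega
    · exfalso
      have hnM : n = M i t := le_antisymm hle hge
      obtain ⟨m, hm⟩ : ∃ m, n = m + 1 := ⟨n - 1, by omega⟩
      have hxi : x * σ i = π (CoxeterSystem.alternatingWord i t m) := by
        rw [hY, hnM, braid_eq cs i t, ← hnM, hm, awY_succ cs t i m]
        simp
      have : dlen cs i t (x * σ i) ≤ m :=
        le_trans (dlen_le cs (alternatingWord_letters i t m) hxi) (by simp)
      omega
  have hvec := vec_formula cs G i t n
  rw [← hY] at hvec
  refine ⟨_, _, ?_, ?_, hvec⟩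
  · -- nonnegativity of first coefficient
    rcases Nat.eq_zero_or_pos (M i t) with hM | hM
    · rw [G.form_simple_inf i t hM]
      exact dseq_nonneg_inf _
    · have h2 : 2 ≤ M i t := by
        have := M.off_diagonal i t hit
        omega
      rw [G.form_simple_fin i t (by omega)]
      apply dseq_nonneg_of_cos (M i t) h2
      have := hbound (by omega)
      split <;> omega
  · rcases Nat.eq_zero_or_pos (M i t) with hM | hM
    · rw [G.form_simple_inf i t hM]
      exact dseq_nonneg_inf _
    · have h2 : 2 ≤ M i t := by
        have := M.off_diagonal i t hit
        omega
      rw [G.form_simple_fin i t (by omega)]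
      apply dseq_nonneg_of_cos (M i t) h2
      have := hbound (by omega)
      split <;> omega

end Aux2

section Aux3

local notation "σ" => cs.simple
local notation "π" => cs.wordProd
local notation "ℓ" => cs.length

theorem length_le_dlen {i t : B} {x : W} (h : DW cs i t x) : ℓ x ≤ dlen cs i t x := by
  obtain ⟨l, _, hlen, hx⟩ := exists_min_word cs h
  calc ℓ x = ℓ (π l) := by rw [hx]
    _ ≤ l.length := cs.length_wordProd_le l
    _ = dlen cs i t x := hlen

theorem dlen_simple_mul_le {i t : B} {x : W} (h : DW cs i t x) {j : B} (hj : j = i ∨ j = t) :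
    dlen cs i t (σ j * x) ≤ dlen cs i t x + 1 := by
  obtain ⟨l, hl, hlen, hx⟩ := exists_min_word cs h
  have hx' : σ j * x = π (j :: l) := by rw [cs.wordProd_cons, hx]
  calc dlen cs i t (σ j * x) ≤ (j :: l).length := by
        apply dlen_le cs ?_ hx'
        intro a ha
        rcases List.mem_cons.mp ha with ha | ha
        · subst ha; exact hj
        · exact hl a ha
    _ = dlen cs i t x + 1 := by simp [hlen]

theorem pos_combo {γ γ₁ γ₂ : V} {a b : ℝ} (hγ : γ ∈ G.Phi) (h1 : γ₁ ∈ G.PhiPos)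
    (h2 : γ₂ ∈ G.PhiPos) (ha : 0 ≤ a) (hb : 0 ≤ b) (heq : γ = a • γ₁ + b • γ₂) :
    γ ∈ G.PhiPos := by
  obtain ⟨-, c1, hc1, hγ1⟩ := h1
  obtain ⟨-, c2, hc2, hγ2⟩ := h2
  refine ⟨hγ, a • c1 + b • c2, ?_, ?_⟩
  · intro j
    simp only [Finsupp.coe_add, Finsupp.coe_smul, Pi.add_apply, Pi.smul_apply, smul_eq_mul]
    have := hc1 j
    have := hc2 j
    positivity
  · rw [sum_eq_lincomb, map_add, map_smul, map_smul, ← sum_eq_lincomb, ← sum_eq_lincomb,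
      ← hγ1, ← hγ2, heq]

/-- **Humphreys 5.4**: if `ℓ(w σ_i) > ℓ(w)` then `w · α_i` is a positive root. -/
theorem pos_of_not_descent : ∀ n : ℕ, ∀ w : W, ℓ w = n → ∀ i : B, ℓ w < ℓ (w * σ i) →
    G.ρ w (G.α i) ∈ G.PhiPos := by
  intro n
  induction n using Nat.strong_induction_on with
  | _ n ih =>
    intro w hw i hi
    rcases Nat.eq_zero_or_pos n with h0 | hpos
    · have hw1 : w = 1 := cs.length_eq_zero_iff.mp (by omega)
      subst hw1
      simpa using alpha_mem_PhiPos cs G i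
    · have hw1 : w ≠ 1 := fun h => by rw [h, cs.length_one] at hw; omega
      obtain ⟨t, ht⟩ := cs.exists_rightDescent_of_ne_one hw1
      rw [CoxeterSystem.IsRightDescent] at ht
      have hti : i ≠ t := by
        intro h; rw [← h] at ht; omega
      set K : Set ℕ :=
        {k | ∃ v x, DW cs i t x ∧ w = v * x ∧ ℓ v = k ∧ ℓ v + dlen cs i t x = ℓ w} with hK
      have hKne : K.Nonempty :=
        ⟨ℓ w, w, 1, DW.one cs i t, by simp, rfl, by simp [dlen_one]⟩
      obtain ⟨v, x, hDW, hvx, hlv, hsum⟩ := Nat.sInf_mem hKne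
      have hlt : sInf K ≤ ℓ w - 1 := by
        apply Nat.sInf_le
        have hwt : ℓ (w * σ t) + 1 = ℓ w := by
          rcases cs.length_mul_simple w t with h | h <;> omega
        have hd1 : dlen cs i t (σ t) = 1 := by
          have hle : dlen cs i t (σ t) ≤ 1 := by
            have := dlen_le cs (i := i) (t := t) (x := σ t) (l := [t]) (by simp) (by simp)
            simpa using this
          have hge : 1 ≤ dlen cs i t (σ t) := by
            have h1 := length_le_dlen cs (i := i) (t := t) (x := σ t) ⟨[t], by simp, by simp⟩
            rw [cs.length_simple] at h1
            exact h1
          omega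
        exact ⟨w * σ t, σ t, ⟨[t], by simp, by simp⟩, by simp, by omega, by omega⟩
      have hlvw : ℓ v < ℓ w := by omega
      -- v has no right descent at i nor t
      have key : ∀ j : B, j = i ∨ j = t → ℓ v < ℓ (v * σ j) := by
        intro j hj
        by_contra hcon
        push_neg at hcon
        have hne := cs.length_mul_simple_ne v j
        have hlt' : ℓ (v * σ j) < ℓ v := by omega
        have heq' : ℓ (v * σ j) = ℓ v - 1 := by
          rcases cs.length_mul_simple v j with h | h <;> omega
        have hDW' : DW cs i t (σ j * x) := hDW.simple_mul cs hj
        have hprod : w = (v * σ j) * (σ j * x) := by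
          rw [mul_assoc, ← mul_assoc (σ j), cs.simple_mul_simple_self, one_mul, hvx]
        have hub : ℓ (v * σ j) + dlen cs i t (σ j * x) ≤ ℓ w := by
          have := dlen_simple_mul_le cs hDW hj
          omega
        have hlb : ℓ w ≤ ℓ (v * σ j) + dlen cs i t (σ j * x) := by
          calc ℓ w = ℓ ((v * σ j) * (σ j * x)) := by rw [← hprod]
            _ ≤ ℓ (v * σ j) + ℓ (σ j * x) := cs.length_mul_le _ _
            _ ≤ ℓ (v * σ j) + dlen cs i t (σ j * x) := by
                have := length_le_dlen cs hDW'
                omega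
        have hmem : (ℓ v - 1) ∈ K :=
          ⟨v * σ j, σ j * x, hDW', hprod, by omega, by omega⟩
        have := Nat.sInf_le hmem
        omega
      have hvi := key i (Or.inl rfl)
      have hvt := key t (Or.inr rfl)
      have hpv_i := ih (ℓ v) (by omega) v rfl i hvi
      have hpv_t := ih (ℓ v) (by omega) v rfl t hvt
      -- x extends on the right by σ i
      have hxinc : dlen cs i t x < dlen cs i t (x * σ i) := by
        have hne := dlen_mul_simple_ne cs hDW (Or.inl rfl)
        by_contra hcon
        push_neg at hcon
        have hlt' : dlen cs i t (x * σ i) < dlen cs i t x := by omega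
        have : ℓ (w * σ i) ≤ ℓ w - 1 := by
          have h1 : w * σ i = v * (x * σ i) := by rw [hvx, mul_assoc]
          calc ℓ (w * σ i) = ℓ (v * (x * σ i)) := by rw [h1]
            _ ≤ ℓ v + ℓ (x * σ i) := cs.length_mul_le _ _
            _ ≤ ℓ v + dlen cs i t (x * σ i) := by
                have := length_le_dlen cs (hDW.mul_simple cs (Or.inl rfl))
                omega
            _ ≤ ℓ w - 1 := by omega
        omega
      obtain ⟨a, b, ha, hb, hab⟩ := dihedral_pos cs G hti hDW hxinc
      have hcomb : G.ρ w (G.α i) = a • G.ρ v (G.α i) + b • G.ρ v (G.α t) := by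
        rw [hvx, rho_mul, hab]
        simp [map_add, map_smul]
      exact pos_combo cs G (Phi_stable cs G (alpha_mem_Phi cs G i) w) hpv_i hpv_t ha hb hcomb

theorem pos_of_lt {w : W} {i : B} (h : ℓ w < ℓ (w * σ i)) : G.ρ w (G.α i) ∈ G.PhiPos :=
  pos_of_not_descent cs G (ℓ w) w rfl i h

theorem neg_of_descent {w : W} {i : B} (h : ℓ (w * σ i) < ℓ w) :
    G.ρ w (G.α i) ∈ G.PhiNeg := by
  have h2 : ℓ (w * σ i) < ℓ ((w * σ i) * σ i) := by
    rw [cs.simple_mul_simple_cancel_right]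
    exact h
  have hpos := pos_of_lt cs G h2
  have hval : G.ρ (w * σ i) (G.α i) = - G.ρ w (G.α i) := by
    rw [rho_mul, rho_simple_alpha, map_neg]
  show - G.ρ w (G.α i) ∈ G.PhiPos
  rwa [hval] at hpos

theorem root_pos_or_neg {γ : V} (h : γ ∈ G.Phi) : γ ∈ G.PhiPos ∨ γ ∈ G.PhiNeg := by
  obtain ⟨w, i, rfl⟩ := h
  rcases cs.length_mul_simple w i with hc | hc
  · exact Or.inl (pos_of_lt cs G (by omega))
  · exact Or.inr (neg_of_descent cs G (by omega))

theorem descent_of_neg {w : W} {i : B} (h : G.ρ w (G.α i) ∈ G.PhiNeg) :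
    ℓ (w * σ i) < ℓ w := by
  rcases cs.length_mul_simple w i with hc | hc
  · exfalso
    exact pos_neg_disjoint cs G (pos_of_lt cs G (by omega)) h
  · omega

/-! #### Parabolic subgroups and the finiteness argument -/

theorem par_exists_word {A : Set B} {u : W} (hu : u ∈ par cs A) :
    ∃ l : List B, (∀ j ∈ l, j ∈ A) ∧ u = π l := by
  induction hu using Subgroup.closure_induction with
  | mem x hx =>
      obtain ⟨a, ha, rfl⟩ := hx
      exact ⟨[a], by simpa using ha, by simp⟩
  | one => exact ⟨[], by simp, by simp⟩
  | mul x y hx hy ihx ihy =>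
      obtain ⟨l1, hl1, rfl⟩ := ihx
      obtain ⟨l2, hl2, rfl⟩ := ihy
      refine ⟨l1 ++ l2, ?_, (cs.wordProd_append l1 l2).symm⟩
      intro j hj
      rcases List.mem_append.mp hj with h | h
      exacts [hl1 j h, hl2 j h]
  | inv x hx ihx =>
      obtain ⟨l, hl, rfl⟩ := ihx
      exact ⟨l.reverse, fun j hj => hl j (List.mem_reverse.mp hj),
        by rw [cs.wordProd_reverse]⟩

theorem rho_word_span {A : Set B} : ∀ l : List B, (∀ j ∈ l, j ∈ A) →
    ∀ v ∈ Submodule.span ℝ (G.α '' A), G.ρ (π l) v ∈ Submodule.span ℝ (G.α '' A) := by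
  intro l
  induction l with
  | nil => intro _ v hv; simpa using hv
  | cons j l ih =>
      intro hl v hv
      rw [cs.wordProd_cons, rho_mul, G.simple_act]
      have h1 := ih (fun a ha => hl a (List.mem_cons_of_mem _ ha)) v hv
      apply Submodule.sub_mem _ h1
      exact Submodule.smul_mem _ _
        (Submodule.subset_span ⟨j, hl j (List.mem_cons_self), rfl⟩)

theorem supp_subset_of_lincomb_mem_span {A : Set B} {c : B →₀ ℝ}
    (h : Finsupp.linearCombination ℝ G.α c ∈ Submodule.span ℝ (G.α '' A)) :
    ∀ j, j ∉ A → c j = 0 := by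
  obtain ⟨c', hc', heq⟩ := (Finsupp.mem_span_image_iff_linearCombination ℝ).mp h
  have hcc : c' = c := lincomb_injective cs G heq
  subst hcc
  intro j hj
  by_contra hne
  exact hj ((Finsupp.mem_supported ℝ c').mp hc' (Finsupp.mem_support_iff.mpr hne))

theorem word_pos_off {A : Set B} : ∀ l : List B, (∀ j ∈ l, j ∈ A) →
    ∀ γ, γ ∈ G.Phi → γ ∈ G.PhiPos → γ ∉ Submodule.span ℝ (G.α '' A) →
    G.ρ (π l) γ ∈ G.Phi ∧ G.ρ (π l) γ ∈ G.PhiPos ∧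
      G.ρ (π l) γ ∉ Submodule.span ℝ (G.α '' A) := by
  intro l
  induction l with
  | nil => intro _ γ h1 h2 h3; simpa using ⟨h1, h2, h3⟩
  | cons j l ih =>
      intro hl γ h1 h2 h3
      obtain ⟨h1', h2', h3'⟩ := ih (fun a ha => hl a (List.mem_cons_of_mem _ ha)) γ h1 h2 h3
      set δ := G.ρ (π l) γ with hδ
      have hja : j ∈ A := hl j (List.mem_cons_self)
      have hPhi : G.ρ (σ j) δ ∈ G.Phi := Phi_stable cs G h1' _
      have hδrec : δ = G.ρ (σ j) δ + (2 * G.form (G.α j) δ) • G.α j := by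
        rw [G.simple_act]; abel
      have hspan : G.ρ (σ j) δ ∉ Submodule.span ℝ (G.α '' A) := by
        intro hmem
        apply h3'
        rw [hδrec]
        exact Submodule.add_mem _ hmem
          (Submodule.smul_mem _ _ (Submodule.subset_span ⟨j, hja, rfl⟩))
      have hPos : G.ρ (σ j) δ ∈ G.PhiPos := by
        rcases root_pos_or_neg cs G hPhi with h | h
        · exact h
        · exfalso
          obtain ⟨hδP, c, hc, hδc⟩ := h2'
          obtain ⟨hnegPhi, c', hc', hnc⟩ := h
          have hkey : c + c' = Finsupp.single j (2 * G.form (G.α j) δ) := by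
            apply lincomb_injective cs G
            rw [map_add, Finsupp.linearCombination_single, ← sum_eq_lincomb,
              ← sum_eq_lincomb, ← hδc, ← hnc, G.simple_act]
            abel
          have hcb : ∀ b, b ≠ j → c b = 0 := by
            intro b hb
            have heval := Finsupp.ext_iff.mp hkey b
            rw [Finsupp.add_apply, Finsupp.single_eq_of_ne' (Ne.symm hb)] at heval
            have := hc b
            have := hc' b
            linarith
          apply h3'
          have hδeq : δ = c j • G.α j := by
            have hcs : c = Finsupp.single j (c j) := by
              ext b
              rcases eq_or_ne b j with rfl | hb
              · simp
              · simp [Finsupp.single_eq_of_ne' (Ne.symm hb), hcb b hb]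
            rw [hδc, sum_eq_lincomb, hcs, Finsupp.linearCombination_single]
            simp
          rw [hδeq]
          exact Submodule.smul_mem _ _ (Submodule.subset_span ⟨j, hja, rfl⟩)
      refine ⟨?_, ?_, ?_⟩
      · rw [cs.wordProd_cons, rho_mul, ← hδ]; exact hPhi
      · rw [cs.wordProd_cons, rho_mul, ← hδ]; exact hPos
      · rw [cs.wordProd_cons, rho_mul, ← hδ]; exact hspan

include G in
theorem exists_descent_in_par {A : Set B} {u : W} (hu : u ∈ par cs A) (hne : u ≠ 1) :
    ∃ s ∈ A, ℓ (u * σ s) < ℓ u := by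
  obtain ⟨t, ht⟩ := cs.exists_rightDescent_of_ne_one hne
  rw [CoxeterSystem.IsRightDescent] at ht
  by_cases htA : t ∈ A
  · exact ⟨t, htA, ht⟩
  · exfalso
    have hneg := neg_of_descent cs G ht
    obtain ⟨l, hl, hword⟩ := par_exists_word cs hu
    have hαt : G.α t ∉ Submodule.span ℝ (G.α '' A) := G.indep.notMem_span_image htA
    have hQ := word_pos_off cs G l hl (G.α t) (alpha_mem_Phi cs G t)
      (alpha_mem_PhiPos cs G t) hαt
    rw [← hword] at hQ
    exact pos_neg_disjoint cs G hQ.2.1 hneg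

theorem rho_neg_on_span {A : Set B} {w : W} (hA : ∀ s ∈ A, G.ρ w (G.α s) = - G.α s)
    {γ : V} (hγ : γ ∈ G.PhiPos) (hsp : γ ∈ Submodule.span ℝ (G.α '' A)) :
    G.ρ w γ = -γ := by
  obtain ⟨-, c, hc, hγc⟩ := hγ
  subst hγc
  rw [sum_eq_lincomb] at hsp
  have hsupp := supp_subset_of_lincomb_mem_span cs G hsp
  rw [Finsupp.sum, map_sum]
  have hterm : ∀ b ∈ c.support, G.ρ w (c b • G.α b) = - (c b • G.α b) := by
    intro b hb
    have hbA : b ∈ A := by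
      by_contra hbn
      exact Finsupp.mem_support_iff.mp hb (hsupp b hbn)
    rw [map_smul, hA b hbA, smul_neg]
  rw [Finset.sum_congr rfl hterm]
  simp

theorem neg_descent_bound {A : Set B} {w : W} (hA : ∀ s ∈ A, G.ρ w (G.α s) = - G.α s) :
    ∀ n : ℕ, ∀ u ∈ par cs A, ℓ u = n →
      ℓ (w * u) + ℓ u ≤ ℓ w ∧
        ∃ l : List B, (∀ j ∈ l, j ∈ A) ∧ l.length = ℓ u ∧ u = π l := by
  intro n
  induction n using Nat.strong_induction_on with
  | _ n ih =>
    intro u hu hn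
    rcases Nat.eq_zero_or_pos n with h0 | hpos
    · have hu1 : u = 1 := cs.length_eq_zero_iff.mp (by omega)
      subst hu1
      refine ⟨by simp, [], by simp, by simp, by simp⟩
    · have hune : u ≠ 1 := fun h => by rw [h, cs.length_one] at hn; omega
      obtain ⟨s, hsA, hdesc⟩ := exists_descent_in_par cs G hu hune
      set u' := u * σ s with hu'
      have hu'par : u' ∈ par cs A :=
        Subgroup.mul_mem _ hu (Subgroup.subset_closure ⟨s, hsA, rfl⟩)
      have hlu' : ℓ u' = n - 1 := by
        rcases cs.length_mul_simple u s with h | h <;> rw [← hu'] at h <;> omega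
      obtain ⟨hbound, l, hlA, hlen, hword⟩ := ih (n - 1) (by omega) u' hu'par hlu'
      have hu'' : u' * σ s = u := by rw [hu', cs.simple_mul_simple_cancel_right]
      have hpos2 : G.ρ u' (G.α s) ∈ G.PhiPos := by
        apply pos_of_lt cs G
        rw [hu'']
        omega
      have hspan : G.ρ u' (G.α s) ∈ Submodule.span ℝ (G.α '' A) := by
        obtain ⟨l', hl', hw'⟩ := par_exists_word cs hu'par
        rw [hw']
        exact rho_word_span cs G l' hl' _ (Submodule.subset_span ⟨s, hsA, rfl⟩)
      have hneg : G.ρ (w * u') (G.α s) ∈ G.PhiNeg := by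
        rw [rho_mul, rho_neg_on_span cs G hA hpos2 hspan]
        show -(-(G.ρ u' (G.α s))) ∈ G.PhiPos
        rwa [neg_neg]
      have hdesc2 : ℓ ((w * u') * σ s) < ℓ (w * u') := descent_of_neg cs G hneg
      have hwu : (w * u') * σ s = w * u := by
        rw [mul_assoc, hu'']
      rw [hwu] at hdesc2
      constructor
      · have h3 : ℓ (w * u) + 1 = ℓ (w * u') := by
          rcases cs.length_mul_simple (w * u') s with h | h <;> rw [hwu] at h <;> omega
        omega
      · refine ⟨l ++ [s], ?_, ?_, ?_⟩
        · intro j hj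
          rcases List.mem_append.mp hj with h | h
          · exact hlA j h
          · simp at h; subst h; exact hsA
        · simp [hlen]; omega
        · rw [cs.wordProd_append, cs.wordProd_singleton, ← hword, hu'']

theorem finite_lists {A : Set B} (hA : A.Finite) :
    ∀ N : ℕ, {l : List B | (∀ j ∈ l, j ∈ A) ∧ l.length ≤ N}.Finite := by
  intro N
  induction N with
  | zero =>
      apply Set.Finite.subset (Set.finite_singleton ([] : List B))
      rintro l ⟨-, hlen⟩
      simp [List.length_eq_zero_iff.mp (Nat.le_zero.mp hlen)]
  | succ N ihN =>
      apply Set.Finite.subset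
        (Set.Finite.insert ([] : List B) (hA.biUnion fun a _ => ihN.image (List.cons a)))
      rintro l ⟨hl, hlen⟩
      match l with
      | [] => exact Set.mem_insert _ _
      | a :: l' =>
          apply Set.mem_insert_of_mem
          refine Set.mem_biUnion (hl a (List.mem_cons_self)) ?_
          exact ⟨l', ⟨fun j hj => hl j (List.mem_cons_of_mem _ hj), by simpa using hlen⟩, rfl⟩

theorem rho_word_diff : ∀ l : List B, ∀ v : V,
    G.ρ (π l) v - v ∈ Submodule.span ℝ (G.α '' {j | j ∈ l}) := by
  intro l
  induction l with
  | nil => intro v; simp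
  | cons j l ih =>
      intro v
      rw [cs.wordProd_cons, rho_mul, G.simple_act]
      have hmono : Submodule.span ℝ (G.α '' {a | a ∈ l}) ≤
          Submodule.span ℝ (G.α '' {a | a ∈ j :: l}) := by
        apply Submodule.span_mono
        apply Set.image_mono
        intro a ha
        exact List.mem_cons_of_mem _ ha
      have h1 : G.ρ (π l) v - v ∈ Submodule.span ℝ (G.α '' {a | a ∈ j :: l}) :=
        hmono (ih v)
      have h2 : (2 * G.form (G.α j) (G.ρ (π l) v)) • G.α j ∈
          Submodule.span ℝ (G.α '' {a | a ∈ j :: l}) :=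
        Submodule.smul_mem _ _ (Submodule.subset_span ⟨j, List.mem_cons_self, rfl⟩)
      have := Submodule.sub_mem _ h1 h2
      convert this using 1
      abel

theorem A_finite_of_neg {A : Set B} {w : W} (hA : ∀ s ∈ A, G.ρ w (G.α s) = - G.α s) :
    A.Finite := by
  obtain ⟨l, hl⟩ := cs.wordProd_surjective w
  apply Set.Finite.subset l.finite_toSet
  intro s hs
  by_contra hsl
  have hdiff := rho_word_diff cs G l (G.α s)
  rw [hl, hA s hs] at hdiff
  have hmem : G.α s ∈ Submodule.span ℝ (G.α '' {j | j ∈ l}) := by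
    have : G.α s = (-(2:ℝ)⁻¹) • (- G.α s - G.α s) := by module
    rw [this]
    exact Submodule.smul_mem _ _ hdiff
  exact G.indep.notMem_span_image hsl hmem

/-- The key finiteness statement: if `w` maps every `α_s`, `s ∈ A`, to `-α_s`,
then `A` is of finite type. -/
theorem finType_of_neg {A : Set B} {w : W} (hA : ∀ s ∈ A, G.ρ w (G.α s) = - G.α s) :
    finType cs A := by
  have hAfin : A.Finite := A_finite_of_neg cs G hA
  have hsub : (par cs A : Set W) ⊆
      (fun l => π l) '' {l : List B | (∀ j ∈ l, j ∈ A) ∧ l.length ≤ ℓ w} := by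
    intro u hu
    obtain ⟨hb, l, hlA, hlen, hword⟩ := neg_descent_bound cs G hA (ℓ u) u hu rfl
    exact ⟨l, ⟨hlA, by omega⟩, hword.symm⟩
  exact Set.Finite.subset ((finite_lists hAfin (ℓ w)).image _) hsub

/-- Part 1: elements of the centralizer send each `α_s`, `s ∈ I`, to `±α_s`. -/
theorem sign_lemma {I : Set B} {w : W} (hw : w ∈ Subgroup.centralizer ((par cs I : Set W)))
    {s : B} (hs : s ∈ I) : G.ρ w (G.α s) = G.α s ∨ G.ρ w (G.α s) = - G.α s := by
  have hσ : σ s ∈ par cs I := Subgroup.subset_closure (Set.mem_image_of_mem _ hs)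
  have hcomm : σ s * w = w * σ s := Subgroup.mem_centralizer_iff.mp hw _ hσ
  set u := G.ρ w (G.α s) with hu
  have key : G.ρ (σ s) u = -u := by
    have h1 : G.ρ (w * σ s) (G.α s) = -u := by
      rw [rho_mul, rho_simple_alpha, map_neg]
    have h2 : G.ρ (σ s * w) (G.α s) = G.ρ (σ s) u := by rw [rho_mul]
    rw [← h1, ← hcomm, h2]
  rw [G.simple_act] at key
  set f := G.form (G.α s) u with hf
  have hu_eq : u = f • G.α s := by
    have h2 : (2 : ℝ) • u = (2 * f) • G.α s := by
      have := key
      rw [sub_eq_iff_eq_add] at this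
      rw [two_smul]
      nth_rw 1 [this]
      rw [mul_smul, two_smul]
      abel
    have := congrArg (fun v => (2⁻¹ : ℝ) • v) h2
    simpa [smul_smul, ← mul_assoc] using this
  have hnorm : G.form u u = 1 := by
    rw [hu, G.invariant, form_alpha_self]
  rw [hu_eq] at hnorm
  simp only [map_smul, LinearMap.smul_apply, smul_eq_mul] at hnorm
  rw [form_alpha_self] at hnorm
  have hf1 : f = 1 ∨ f = -1 := by
    rcases mul_self_eq_one_iff.mp (by linarith [hnorm] : f * f = 1) with h | h
    · exact Or.inl h
    · exact Or.inr h
  rcases hf1 with h | h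
  · left; rw [hu_eq, h, one_smul]
  · right; rw [hu_eq, h]; module

theorem form_ne_zero_of_adj {s t : B} (hst : adj M s t) :
    G.form (G.α s) (G.α t) ≠ 0 := by
  obtain ⟨hne, hM2⟩ := hst
  rcases Nat.eq_zero_or_pos (M s t) with h0 | hpos
  · rw [G.form_simple_inf s t h0]; norm_num
  · have hM1 : M s t ≠ 1 := M.off_diagonal s t hne
    have h3 : 3 ≤ M s t := by omega
    rw [G.form_simple_fin s t (by omega)]
    have hcos : 0 < Real.cos (Real.pi / (M s t : ℝ)) := by
      apply Real.cos_pos_of_mem_Ioo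
      constructor
      · have : 0 < Real.pi / (M s t : ℝ) := by
          apply div_pos Real.pi_pos
          exact_mod_cast Nat.lt_of_lt_of_le (by norm_num) h3
        linarith [Real.pi_pos]
      · have h3' : (3 : ℝ) ≤ (M s t : ℝ) := by exact_mod_cast h3
        calc Real.pi / (M s t : ℝ) ≤ Real.pi / 3 := by
              apply div_le_div_of_nonneg_left Real.pi_pos.le (by norm_num) h3'
          _ < Real.pi / 2 := by
              apply div_lt_div_of_pos_left Real.pi_pos <;> norm_num
    linarith

theorem sign_step {I : Set B} {w : W} (hw : w ∈ Subgroup.centralizer ((par cs I : Set W)))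
    {s t : B} (hs : s ∈ I) (ht : t ∈ I) (hadj : adj M s t)
    (hneg : G.ρ w (G.α s) = - G.α s) : G.ρ w (G.α t) = - G.α t := by
  rcases sign_lemma cs G hw ht with h | h
  · exfalso
    have hinv := G.invariant w (G.α s) (G.α t)
    rw [hneg, h] at hinv
    simp only [map_neg, LinearMap.neg_apply] at hinv
    have : G.form (G.α s) (G.α t) = 0 := by linarith
    exact form_ne_zero_of_adj cs G hadj this
  · exact h

end Aux3

/-- Theorem `exactsequence_Z`, first part. Let `I ⊆ S` and `Z_W(W_I)`
the centralizer of `W_I` in `W`. Every `w ∈ Z_W(W_I)` satisfies `w·α_s = ±α_s` for `s ∈ I`,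
and the map `A(w) = {s ∈ I : w·α_s = -α_s}` is a homomorphism to the subsets of `I` under
symmetric difference, with kernel `C_I`. Moreover each `A(w)` is of finite type and a union
of irreducible components of `I`. -/
theorem statement_12 (I : Set B) :
    (∀ w ∈ Subgroup.centralizer ((par cs I : Set W)), ∀ s ∈ I,
      G.ρ w (G.α s) = G.α s ∨ G.ρ w (G.α s) = - G.α s) ∧
    (∀ w ∈ Subgroup.centralizer ((par cs I : Set W)),
      ∀ w' ∈ Subgroup.centralizer ((par cs I : Set W)),
      {s ∈ I | G.ρ (w * w') (G.α s) = - G.α s} =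
        symmDiff {s ∈ I | G.ρ w (G.α s) = - G.α s} {s ∈ I | G.ρ w' (G.α s) = - G.α s}) ∧
    (∀ w ∈ Subgroup.centralizer ((par cs I : Set W)),
      ({s ∈ I | G.ρ w (G.α s) = - G.α s} = ∅ ↔ w ∈ G.CI I)) ∧
    (∀ w ∈ Subgroup.centralizer ((par cs I : Set W)),
      finType cs {s ∈ I | G.ρ w (G.α s) = - G.α s} ∧
      IsComponentUnion M I {s ∈ I | G.ρ w (G.α s) = - G.α s}) := by
  have part1 : ∀ w ∈ Subgroup.centralizer ((par cs I : Set W)), ∀ s ∈ I,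
      G.ρ w (G.α s) = G.α s ∨ G.ρ w (G.α s) = - G.α s :=
    fun w hw s hs => sign_lemma cs G hw hs
  refine ⟨part1, ?_, ?_, ?_⟩
  · -- Part 2: homomorphism property
    intro w hw w' hw'
    ext s
    by_cases hsI : s ∈ I
    · have hmul : G.ρ (w * w') (G.α s) = G.ρ w (G.ρ w' (G.α s)) := rho_mul cs G w w' _
      have hne := alpha_ne_neg cs G s
      have hne' : -G.α s ≠ G.α s := fun h => hne h.symm
      simp only [Set.mem_setOf_eq, Set.mem_symmDiff]
      rcases part1 w hw s hsI with h1 | h1 <;> rcases part1 w' hw' s hsI with h2 | h2 <;>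
        simp only [hmul, h2, h1, map_neg, neg_neg] <;> tauto
    · simp only [Set.mem_setOf_eq, Set.mem_symmDiff]
      tauto
  · -- Part 3: kernel is C_I
    intro w hw
    constructor
    · intro hemp s hs
      rcases part1 w hw s hs with h | h
      · exact h
      · exfalso
        have hmem : s ∈ {s ∈ I | G.ρ w (G.α s) = - G.α s} := ⟨hs, h⟩
        rw [hemp] at hmem
        exact hmem
    · intro hCI
      ext s
      simp only [Set.mem_setOf_eq, Set.mem_empty_iff_false, iff_false, not_and]
      intro hs hneg
      have := hCI s hs
      rw [this] at hneg
      exact alpha_ne_neg cs G s hneg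
  · -- Part 4
    intro w hw
    constructor
    · exact finType_of_neg cs G (fun s hs => hs.2)
    · refine ⟨fun s hs => hs.1, ?_⟩
      intro a ha t ht
      obtain ⟨htI, hconn⟩ := ht
      clear htI
      induction hconn with
      | refl => exact ha
      | tail h1 step ih =>
          obtain ⟨hbI, hcI, hadj⟩ := step
          exact ⟨hcI, sign_step cs G hw hbI hcI hadj ih.2⟩
end CoxCentralizer
end
end

section
/- Let I ⊆ S, let Z_W(W_I) be the centralizer of W_I in W, put B̃_I = {w ∈ Z_W(W_I) : w·(Φ^{⊥I} ∩ Φ⁺) = Φ^{⊥I} ∩ Φ⁺}, and put B_I = {w ∈ B̃_I : w·α_s = α_s for every s ∈ I that lies in an irreducible component of I of (-1)-type}. Then B̃_I is the internal direct product Z(W_I) × B_I, where Z(W_I) is the center of W_I, and Z_W(W_I) = W^{⊥I} ⋊ (Z(W_I) × B_I) = (Z(W_I) × W^{⊥I}) ⋊ B_I, where B_I acts on W^{⊥I} by automorphisms of the Coxeter system (W^{⊥I},R^I). -/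
noncomputable section

namespace CoxCentralizer

open Classical

variable {B : Type*} {W : Type*} [Group W] {V : Type*} [AddCommGroup V] [Module ℝ V]

variable {M : CoxeterMatrix B} {cs : CoxeterSystem M W}

variable (cs : CoxeterSystem M W)

variable (G : GeomRep M cs V)

/-! ### Auxiliary development for Statement 14 -/

namespace GeomRep

variable {M' : CoxeterMatrix B} {cs' : CoxeterSystem M' W} (G : GeomRep M' cs' V)

/-- The simple roots as a basis of `V`. -/
noncomputable def bas : Module.Basis B ℝ V := Module.Basis.mk G.indep G.spans

@[simp] lemma bas_eq (i : B) : G.bas i = G.α i := Module.Basis.mk_apply _ _ i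

/-- Coordinate of `v` along the simple root `α k`. -/
noncomputable def coord (k : B) (v : V) : ℝ := G.bas.repr v k

@[simp] lemma coord_add (k : B) (u v : V) : G.coord k (u + v) = G.coord k u + G.coord k v := by
  simp [coord]

@[simp] lemma coord_neg (k : B) (v : V) : G.coord k (-v) = - G.coord k v := by simp [coord]

@[simp] lemma coord_smul (k : B) (a : ℝ) (v : V) : G.coord k (a • v) = a * G.coord k v := by
  simp [coord]

@[simp] lemma coord_sub (k : B) (u v : V) : G.coord k (u - v) = G.coord k u - G.coord k v := by
  simp [coord]

@[simp] lemma coord_zero (k : B) : G.coord k (0 : V) = 0 := by simp [coord]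

@[simp] lemma coord_alpha (k l : B) : G.coord k (G.α l) = if l = k then 1 else 0 := by
  rw [coord, ← G.bas_eq l, Module.Basis.repr_self]
  simp [Finsupp.single_apply]

lemma eq_of_coord_eq {u v : V} (h : ∀ k, G.coord k u = G.coord k v) : u = v := by
  have : G.bas.repr u = G.bas.repr v := Finsupp.ext h
  have := congrArg G.bas.repr.symm this
  simpa using this

lemma coord_combo (c : B →₀ ℝ) (k : B) :
    G.coord k (c.sum fun i r => r • G.α i) = c k := by
  rw [coord]
  rw [map_finsuppSum]
  have : ∀ i ∈ c.support, G.bas.repr (c i • G.α i) = Finsupp.single i (c i) := by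
    intro i _
    rw [map_smul, ← G.bas_eq i, Module.Basis.repr_self, Finsupp.smul_single, smul_eq_mul, mul_one]
  rw [Finsupp.sum_congr this]
  classical
  rw [Finsupp.sum_single]

lemma combo_of_coords (v : V) :
    v = (G.bas.repr v).sum fun i r => r • G.α i := by
  conv_lhs => rw [← G.bas.linearCombination_repr v]
  rw [Finsupp.linearCombination_apply]
  exact Finsupp.sum_congr (fun i _ => by rw [G.bas_eq])

/-- Characterization of positive roots by coordinates. -/
lemma mem_phiPos_iff {v : V} :
    v ∈ G.PhiPos ↔ v ∈ G.Phi ∧ ∀ k, 0 ≤ G.coord k v := by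
  constructor
  · rintro ⟨hv, c, hc, rfl⟩
    refine ⟨hv, fun k => ?_⟩
    rw [G.coord_combo]
    exact hc k
  · rintro ⟨hv, h⟩
    refine ⟨hv, G.bas.repr v, h, G.combo_of_coords v⟩

lemma mem_phiNeg_iff {v : V} :
    v ∈ G.PhiNeg ↔ (-v) ∈ G.Phi ∧ ∀ k, G.coord k v ≤ 0 := by
  unfold PhiNeg
  rw [Set.mem_setOf_eq, G.mem_phiPos_iff]
  constructor
  · rintro ⟨h1, h2⟩
    exact ⟨h1, fun k => by have := h2 k; simp at this; linarith⟩
  · rintro ⟨h1, h2⟩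
    exact ⟨h1, fun k => by have := h2 k; simp; linarith⟩

/-- `Φ` is closed under the action of `W`. -/
lemma phi_w_stable {γ : V} (hγ : γ ∈ G.Phi) (w : W) : G.ρ w γ ∈ G.Phi := by
  obtain ⟨u, i, rfl⟩ := hγ
  exact ⟨w * u, i, by rw [map_mul]; rfl⟩

lemma alpha_mem_phi (i : B) : G.α i ∈ G.Phi := ⟨1, i, by simp⟩


lemma rho_rho (w x : W) (v : V) : G.ρ w (G.ρ x v) = G.ρ (w * x) v := by
  rw [map_mul]; rfl

@[simp] lemma rho_one_apply (v : V) : G.ρ 1 v = v := by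
  rw [map_one]; rfl

@[simp] lemma rho_inv_cancel (w : W) (v : V) : G.ρ w (G.ρ w⁻¹ v) = v := by
  rw [G.rho_rho]; simp

@[simp] lemma rho_inv_cancel' (w : W) (v : V) : G.ρ w⁻¹ (G.ρ w v) = v := by
  rw [G.rho_rho]; simp

/-- Symmetric-invariance corollary. -/
lemma form_inv_left (w : W) (u v : V) : G.form (G.ρ w u) v = G.form u (G.ρ w⁻¹ v) := by
  conv_lhs => rw [show v = G.ρ w (G.ρ w⁻¹ v) from (G.rho_inv_cancel w v).symm]
  rw [G.invariant]

lemma simple_act_self (i : B) : G.ρ (cs'.simple i) (G.α i) = - G.α i := by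
  rw [G.simple_act]
  have h1 : G.form (G.α i) (G.α i) = 1 := by
    rw [G.form_simple_fin i i (by simp), M'.diagonal]
    simp [Real.cos_pi]
  rw [h1]
  module

/-- Roots have norm one. -/
lemma root_norm {γ : V} (hγ : γ ∈ G.Phi) : G.form γ γ = 1 := by
  obtain ⟨w, i, rfl⟩ := hγ
  rw [G.invariant, G.form_simple_fin i i (by simp), M'.diagonal]
  simp [Real.cos_pi]

lemma root_ne_zero {γ : V} (hγ : γ ∈ G.Phi) : γ ≠ 0 := by
  intro h
  have := G.root_norm hγ
  rw [h] at this
  simp at this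

/-- `Φ` is closed under negation. -/
lemma phi_neg_closed {γ : V} (hγ : γ ∈ G.Phi) : -γ ∈ G.Phi := by
  obtain ⟨w, i, rfl⟩ := hγ
  refine ⟨w * cs'.simple i, i, ?_⟩
  rw [map_mul]
  show G.ρ w (G.ρ (cs'.simple i) (G.α i)) = _
  rw [G.simple_act_self, map_neg]

lemma pos_neg_disjoint {γ : V} (hγ : γ ∈ G.Phi) (h1 : γ ∈ G.PhiPos) (h2 : γ ∈ G.PhiNeg) :
    False := by
  rw [G.mem_phiPos_iff] at h1
  rw [G.mem_phiNeg_iff] at h2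
  have : γ = 0 := by
    apply G.eq_of_coord_eq
    intro k
    have := h1.2 k
    have := h2.2 k
    simp only [coord_zero]
    linarith
  exact G.root_ne_zero hγ this

/-- If `γ = c • α i` is a root, then `c = ±1`. -/
lemma root_prop_simple {γ : V} (hγ : γ ∈ G.Phi) {i : B} {c : ℝ} (h : γ = c • G.α i) :
    c = 1 ∨ c = -1 := by
  have h1 := G.root_norm hγ
  rw [h] at h1
  simp only [map_smul, LinearMap.smul_apply, smul_eq_mul] at h1
  have h2 : G.form (G.α i) (G.α i) = 1 := G.root_norm (G.alpha_mem_phi i)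
  rw [h2] at h1
  have hcc : c * c = 1 := by nlinarith
  rcases mul_self_eq_one_iff.mp hcc with h | h
  · exact Or.inl h
  · exact Or.inr h

/-- The action of the reflection along a root. -/
lemma reflAlong_act {γ : V} (hγ : γ ∈ G.Phi) (v : V) :
    G.ρ (G.reflAlong γ) v = v - (2 * G.form γ v) • γ := by
  rw [reflAlong, dif_pos hγ]
  set w := hγ.choose with hw
  set i := hγ.choose_spec.choose with hi
  have hspec : G.ρ w (G.α i) = γ := hγ.choose_spec.choose_spec
  rw [map_mul, map_mul]
  show G.ρ w (G.ρ (cs'.simple i) (G.ρ w⁻¹ v)) = _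
  rw [G.simple_act]
  rw [map_sub, map_smul]
  have : G.form (G.α i) (G.ρ w⁻¹ v) = G.form γ v := by
    rw [← hspec, ← G.form_inv_left]
  rw [this]
  congr 1
  · exact G.rho_inv_cancel w v
  · rw [hspec]

/-- Faithfulness: elements acting identically are equal. -/
lemma eq_of_act_eq {x y : W} (h : ∀ v, G.ρ x v = G.ρ y v) : x = y := by
  apply G.faithful
  ext v
  exact h v

lemma reflAlong_eq_of_act {γ : V} (hγ : γ ∈ G.Phi) {x : W}
    (h : ∀ v, G.ρ x v = v - (2 * G.form γ v) • γ) : x = G.reflAlong γ := by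
  apply G.eq_of_act_eq
  intro v
  rw [h v, G.reflAlong_act hγ]

/-- Conjugation formula for reflections. -/
lemma reflAlong_conj {γ : V} (hγ : γ ∈ G.Phi) (w : W) :
    w * G.reflAlong γ * w⁻¹ = G.reflAlong (G.ρ w γ) := by
  apply G.reflAlong_eq_of_act (G.phi_w_stable hγ w)
  intro v
  rw [map_mul, map_mul]
  show G.ρ w (G.ρ (G.reflAlong γ) (G.ρ w⁻¹ v)) = _
  rw [G.reflAlong_act hγ, map_sub, map_smul]
  have : G.form γ (G.ρ w⁻¹ v) = G.form (G.ρ w γ) v := by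
    rw [← G.form_inv_left]
  rw [this]
  congr 1
  exact G.rho_inv_cancel w v

lemma reflAlong_neg {γ : V} (hγ : γ ∈ G.Phi) : G.reflAlong (-γ) = G.reflAlong γ := by
  symm
  apply G.reflAlong_eq_of_act (G.phi_neg_closed hγ)
  intro v
  rw [G.reflAlong_act hγ]
  simp only [map_neg, LinearMap.neg_apply]
  module

lemma reflAlong_simple (i : B) : G.reflAlong (G.α i) = cs'.simple i := by
  symm
  apply G.reflAlong_eq_of_act (G.alpha_mem_phi i)
  intro v
  rw [G.simple_act]

lemma reflAlong_self {γ : V} (hγ : γ ∈ G.Phi) : G.ρ (G.reflAlong γ) γ = -γ := by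
  rw [G.reflAlong_act hγ, G.root_norm hγ]
  module

lemma reflAlong_sq {γ : V} (hγ : γ ∈ G.Phi) : G.reflAlong γ * G.reflAlong γ = 1 := by
  apply G.eq_of_act_eq
  intro v
  rw [← G.rho_rho, G.reflAlong_act hγ, G.reflAlong_act hγ, G.rho_one_apply]
  simp only [map_sub, map_smul, LinearMap.sub_apply, LinearMap.smul_apply, smul_eq_mul,
    G.root_norm hγ]
  match_scalars <;> ring

lemma reflAlong_inv {γ : V} (hγ : γ ∈ G.Phi) : (G.reflAlong γ)⁻¹ = G.reflAlong γ :=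
  eq_inv_of_mul_eq_one_right (G.reflAlong_sq hγ) |>.symm

/-- If the reflection along a root `γ` fixes `v`, i.e. `⟨γ, v⟩ = 0`. -/
lemma reflAlong_fix {γ : V} (hγ : γ ∈ G.Phi) {v : V} (h : G.form γ v = 0) :
    G.ρ (G.reflAlong γ) v = v := by
  rw [G.reflAlong_act hγ, h]
  simp

end GeomRep
namespace GeomRep

variable {M' : CoxeterMatrix B} {cs' : CoxeterSystem M' W} (G : GeomRep M' cs' V)

open CoxeterSystem
set_option maxHeartbeats 1000000

private lemma cheb {θ s x a b : ℝ} (hs : Real.sin θ = s)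
    (ha : a * s = Real.sin ((x + 1) * θ)) (hb : b * s = Real.sin (x * θ)) :
    (2 * Real.cos θ * a - b) * s = Real.sin ((x + 2) * θ) := by
  have key : Real.sin ((x + 1) * θ + θ)
      = 2 * Real.cos θ * Real.sin ((x + 1) * θ) - Real.sin ((x + 1) * θ - θ) := by
    rw [Real.sin_add, Real.sin_sub]; ring
  have e1 : (x + 1) * θ - θ = x * θ := by ring
  have e2 : (x + 1) * θ + θ = (x + 2) * θ := by ring
  rw [e1, e2] at key
  rw [key, ← ha, ← hb]; ring

lemma form_simple_symm (i j : B) : G.form (G.α j) (G.α i) = G.form (G.α i) (G.α j) :=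
  G.symm _ _

lemma two_le_M' {i j : B} (hij : i ≠ j) (hm : M' i j ≠ 0) : 2 ≤ M' i j := by
  have h1 := M'.off_diagonal i j hij
  omega

/-- Closed form for the coefficients of the action of alternating words on `α i`,
finite order case. -/
lemma rank2_closed_fin (i j : B) (hm : M' i j ≠ 0) (p : ℕ) :
    ∃ a b : ℝ,
      G.ρ (cs'.wordProd (alternatingWord i j p)) (G.α i) = a • G.α i + b • G.α j ∧
      a * Real.sin (Real.pi / (M' i j : ℝ))
        = Real.sin ((if Even p then (p : ℝ) + 1 else (p : ℝ)) * (Real.pi / (M' i j : ℝ))) ∧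
      b * Real.sin (Real.pi / (M' i j : ℝ))
        = Real.sin ((if Even p then (p : ℝ) else (p : ℝ) + 1) * (Real.pi / (M' i j : ℝ))) := by
  set θ : ℝ := Real.pi / (M' i j : ℝ) with hθ
  have hc : G.form (G.α i) (G.α j) = - Real.cos θ := G.form_simple_fin i j hm
  have hc' : G.form (G.α j) (G.α i) = - Real.cos θ := by
    rw [G.form_simple_symm]; exact hc
  have hsj_i : G.ρ (cs'.simple j) (G.α i) = G.α i + (2 * Real.cos θ) • G.α j := by
    rw [G.simple_act, hc']; module
  have hsj_j : G.ρ (cs'.simple j) (G.α j) = - G.α j := G.simple_act_self j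
  have hsi_j : G.ρ (cs'.simple i) (G.α j) = G.α j + (2 * Real.cos θ) • G.α i := by
    rw [G.simple_act, hc]; module
  have hsi_i : G.ρ (cs'.simple i) (G.α i) = - G.α i := G.simple_act_self i
  induction p with
  | zero =>
    refine ⟨1, 0, by simp [alternatingWord], by norm_num, by norm_num⟩
  | succ p ih =>
    obtain ⟨a, b, hab, ha, hb⟩ := ih
    rcases Nat.even_or_odd p with hev | hod
    · -- head letter is `j`
      have hnev : ¬ Even (p + 1) := by simp [Nat.even_add_one, hev]
      rw [if_pos hev] at ha hb
      refine ⟨a, 2 * Real.cos θ * a - b, ?_, ?_, ?_⟩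
      · rw [alternatingWord_succ', if_pos hev, wordProd_cons, ← G.rho_rho, hab,
          map_add, map_smul, map_smul, hsj_i, hsj_j]
        module
      · rw [if_neg hnev]; push_cast; exact ha
      · rw [if_neg hnev]; push_cast
        rw [show (p : ℝ) + 1 + 1 = (p : ℝ) + 2 by ring]
        exact cheb rfl ha hb
    · -- head letter is `i`
      have hnev : ¬ Even p := Nat.not_even_iff_odd.mpr hod
      have hev1 : Even (p + 1) := Nat.even_add_one.mpr hnev
      rw [if_neg hnev] at ha hb
      refine ⟨2 * Real.cos θ * b - a, b, ?_, ?_, ?_⟩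
      · rw [alternatingWord_succ', if_neg hnev, wordProd_cons, ← G.rho_rho, hab,
          map_add, map_smul, map_smul, hsi_i, hsi_j]
        module
      · rw [if_pos hev1]; push_cast
        rw [show (p : ℝ) + 1 + 1 = (p : ℝ) + 2 by ring]
        exact cheb rfl hb ha
      · rw [if_pos hev1]; push_cast; exact hb

/-- Closed form, infinite order case. -/
lemma rank2_closed_inf (i j : B) (hm : M' i j = 0) (p : ℕ) :
    ∃ a b : ℝ,
      G.ρ (cs'.wordProd (alternatingWord i j p)) (G.α i) = a • G.α i + b • G.α j ∧
      a = (if Even p then (p : ℝ) + 1 else (p : ℝ)) ∧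
      b = (if Even p then (p : ℝ) else (p : ℝ) + 1) := by
  have hm' : M' j i = 0 := by rw [M'.symmetric]; exact hm
  have hc : G.form (G.α i) (G.α j) = - 1 := G.form_simple_inf i j hm
  have hc' : G.form (G.α j) (G.α i) = - 1 := by rw [G.form_simple_symm]; exact hc
  have hsj_i : G.ρ (cs'.simple j) (G.α i) = G.α i + (2 : ℝ) • G.α j := by
    rw [G.simple_act, hc']; module
  have hsj_j : G.ρ (cs'.simple j) (G.α j) = - G.α j := G.simple_act_self j
  have hsi_j : G.ρ (cs'.simple i) (G.α j) = G.α j + (2 : ℝ) • G.α i := by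
    rw [G.simple_act, hc]; module
  have hsi_i : G.ρ (cs'.simple i) (G.α i) = - G.α i := G.simple_act_self i
  induction p with
  | zero => exact ⟨1, 0, by simp [alternatingWord], by norm_num, by norm_num⟩
  | succ p ih =>
    obtain ⟨a, b, hab, ha, hb⟩ := ih
    rcases Nat.even_or_odd p with hev | hod
    · have hnev : ¬ Even (p + 1) := by simp [Nat.even_add_one, hev]
      rw [if_pos hev] at ha hb
      refine ⟨a, 2 * a - b, ?_, ?_, ?_⟩
      · rw [alternatingWord_succ', if_pos hev, wordProd_cons, ← G.rho_rho, hab,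
          map_add, map_smul, map_smul, hsj_i, hsj_j]
        module
      · rw [if_neg hnev]; push_cast; exact ha
      · rw [if_neg hnev]; push_cast; rw [ha, hb]; ring
    · have hnev : ¬ Even p := Nat.not_even_iff_odd.mpr hod
      have hev1 : Even (p + 1) := Nat.even_add_one.mpr hnev
      rw [if_neg hnev] at ha hb
      refine ⟨2 * b - a, b, ?_, ?_, ?_⟩
      · rw [alternatingWord_succ', if_neg hnev, wordProd_cons, ← G.rho_rho, hab,
          map_add, map_smul, map_smul, hsi_i, hsi_j]
        module
      · rw [if_pos hev1]; push_cast; rw [ha, hb]; ring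
      · rw [if_pos hev1]; push_cast; exact hb

/-- Rank-2 positivity: for `p` below the bound, alternating words send `α i` into the
nonnegative cone spanned by `α i, α j`. -/
lemma rank2_pos (i j : B) (hij : i ≠ j) (p : ℕ) (hp : M' i j = 0 ∨ p + 1 ≤ M' i j) :
    ∃ a b : ℝ, 0 ≤ a ∧ 0 ≤ b ∧
      G.ρ (cs'.wordProd (alternatingWord i j p)) (G.α i) = a • G.α i + b • G.α j := by
  rcases hp with hm | hp
  · obtain ⟨a, b, hab, ha, hb⟩ := G.rank2_closed_inf i j hm p
    refine ⟨a, b, ?_, ?_, hab⟩ <;>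
    · first
        | (rw [ha]; split <;> positivity)
        | (rw [hb]; split <;> positivity)
  · have hm : M' i j ≠ 0 := by omega
    obtain ⟨a, b, hab, ha, hb⟩ := G.rank2_closed_fin i j hm p
    set θ : ℝ := Real.pi / (M' i j : ℝ) with hθ
    have hM2 : 2 ≤ M' i j := two_le_M' hij hm
    have hMR : (2 : ℝ) ≤ (M' i j : ℝ) := by exact_mod_cast hM2
    have hθpos : 0 < θ := by
      rw [hθ]
      apply div_pos Real.pi_pos
      linarith
    have hθle : θ ≤ Real.pi / 2 := by
      rw [hθ]
      gcongr
    have hsin : 0 < Real.sin θ :=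
      Real.sin_pos_of_pos_of_lt_pi hθpos (by linarith [Real.pi_pos])
    have key : ∀ q : ℕ, q ≤ M' i j → 0 ≤ Real.sin ((q : ℝ) * θ) := by
      intro q hq
      apply Real.sin_nonneg_of_nonneg_of_le_pi
      · positivity
      · have : (q : ℝ) ≤ (M' i j : ℝ) := by exact_mod_cast hq
        calc (q : ℝ) * θ ≤ (M' i j : ℝ) * θ := by
              apply mul_le_mul_of_nonneg_right this hθpos.le
          _ = Real.pi := by
              rw [hθ]
              field_simp
    have h1 : 0 ≤ a := by
      have : 0 ≤ a * Real.sin θ := by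
        rw [ha]
        split
        · have := key (p + 1) hp
          push_cast at this ⊢
          convert this using 2
        · have := key p (by omega)
          convert this using 2
      nlinarith
    have h2 : 0 ≤ b := by
      have : 0 ≤ b * Real.sin θ := by
        rw [hb]
        split
        · have := key p (by omega)
          convert this using 2
        · have := key (p + 1) hp
          push_cast at this ⊢
          convert this using 2
      nlinarith
    exact ⟨a, b, h1, h2, hab⟩

end GeomRep
namespace GeomRep

variable {M' : CoxeterMatrix B} {cs' : CoxeterSystem M' W} (G : GeomRep M' cs' V)

open CoxeterSystem
set_option maxHeartbeats 1000000

lemma alpha_mem_phiPos (i : B) : G.α i ∈ G.PhiPos := by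
  rw [G.mem_phiPos_iff]
  refine ⟨G.alpha_mem_phi i, fun k => ?_⟩
  rw [G.coord_alpha]
  split <;> norm_num

/-- Greedy alternating strip. -/
lemma strip (n : ℕ) : ∀ (w : W) (i j : B), cs'.length w ≤ n → i ≠ j →
    cs'.length (w * cs'.simple j) < cs'.length w →
    ∃ p v, 1 ≤ p ∧ w = v * cs'.wordProd (alternatingWord i j p) ∧
      cs'.length w = cs'.length v + p ∧
      cs'.length v < cs'.length (v * cs'.simple i) ∧
      cs'.length v < cs'.length (v * cs'.simple j) := by
  induction n with
  | zero =>
    intro w i j hw _ hdesc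
    interval_cases h : cs'.length w
    · omega
  | succ n ih =>
    intro w i j hw hij hdesc
    have hlen1 : cs'.length (w * cs'.simple j) + 1 = cs'.length w := by
      rcases cs'.length_mul_simple w j with h | h
      · omega
      · exact h
    have hwback : (w * cs'.simple j) * cs'.simple j = w := by
      rw [mul_assoc, cs'.simple_mul_simple_self, mul_one]
    by_cases hca : cs'.length (w * cs'.simple j)
        < cs'.length ((w * cs'.simple j) * cs'.simple i)
    · refine ⟨1, w * cs'.simple j, le_refl 1, ?_, by omega, hca, ?_⟩
      · have h5 : alternatingWord i j 1 = [j] := rfl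
        rw [h5, cs'.wordProd_singleton, hwback]
      · rw [hwback]; omega
    · have hca' : cs'.length ((w * cs'.simple j) * cs'.simple i)
          < cs'.length (w * cs'.simple j) := by
        have := cs'.length_mul_simple_ne (w * cs'.simple j) i
        omega
      obtain ⟨p, v, hp1, hveq, hvlen, hvi, hvj⟩ :=
        ih (w * cs'.simple j) j i (by omega) (Ne.symm hij) hca'
      refine ⟨p + 1, v, by omega, ?_, by omega, hvj, hvi⟩
      have h6 : alternatingWord i j (p + 1) = (alternatingWord j i p).concat j := rfl
      rw [h6, cs'.wordProd_concat, ← mul_assoc, ← hveq, hwback]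

/-- **The fundamental lemma** of the geometric representation:
if `ℓ(w sᵢ) > ℓ(w)` then `w · αᵢ` is a positive root. -/
theorem pos_of_ascent' : ∀ (n : ℕ) (w : W), cs'.length w = n →
    ∀ i : B, cs'.length w < cs'.length (w * cs'.simple i) → G.ρ w (G.α i) ∈ G.PhiPos := by
  intro n
  induction n using Nat.strong_induction_on with
  | _ n ih =>
    intro w hw i hasc
    rcases eq_or_ne w 1 with rfl | hne
    · simpa using G.alpha_mem_phiPos i
    · obtain ⟨j, hj⟩ := cs'.exists_rightDescent_of_ne_one hne
      have hj' : cs'.length (w * cs'.simple j) < cs'.length w := hj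
      have hij : i ≠ j := by
        rintro rfl
        omega
      obtain ⟨p, v, hp1, hw_eq, hlen, hvi, hvj⟩ :=
        strip (cs' := cs') n w i j (le_of_eq hw) hij hj'
      have hlv : cs'.length v < n := by omega
      have hvpos_i : G.ρ v (G.α i) ∈ G.PhiPos := ih _ hlv v rfl i hvi
      have hvpos_j : G.ρ v (G.α j) ∈ G.PhiPos := ih _ hlv v rfl j hvj
      by_cases hcase : M' i j = 0 ∨ p + 1 ≤ M' i j
      · obtain ⟨a, b, ha, hb, hab⟩ := G.rank2_pos i j hij p hcase
        have hcomb : G.ρ w (G.α i) = a • G.ρ v (G.α i) + b • G.ρ v (G.α j) := by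
          rw [hw_eq, ← G.rho_rho, hab, map_add, map_smul, map_smul]
        rw [G.mem_phiPos_iff]
        refine ⟨⟨w, i, rfl⟩, fun k => ?_⟩
        rw [hcomb, coord_add, coord_smul, coord_smul]
        rw [G.mem_phiPos_iff] at hvpos_i hvpos_j
        have h1 := hvpos_i.2 k
        have h2 := hvpos_j.2 k
        positivity
      · push_neg at hcase
        obtain ⟨hm, hple⟩ := hcase
        -- p ≤ M i j, hence p = M i j
        have hyle : cs'.length (cs'.wordProd (alternatingWord i j p)) ≤ p := by
          have := cs'.length_wordProd_le (alternatingWord i j p)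
          rwa [length_alternatingWord] at this
      -- lower bound on the length of the alternating word
        have hyge : p ≤ cs'.length (cs'.wordProd (alternatingWord i j p)) := by
          have := cs'.length_mul_le v (cs'.wordProd (alternatingWord i j p))
          rw [← hw_eq] at this
          omega
        have hred : cs'.IsReduced (alternatingWord i j p) := by
          rw [CoxeterSystem.IsReduced, length_alternatingWord]
          omega
        have hpM : p = M' i j := by
          by_contra hne'
          have hgt : p > M' i j := by omega
          exact cs'.not_isReduced_alternatingWord i j hm hgt hred
        -- braid relation
        have hbraid : cs'.wordProd (alternatingWord i j p)
            = cs'.wordProd (alternatingWord j i p) := by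
          have e : M' i j * 2 - p = p := by omega
          have h2 := cs'.prod_alternatingWord_eq_prod_alternatingWord_sub i j p
            (by omega : p ≤ M' i j * 2)
          rw [h2, e]
        have hconcat : alternatingWord j i p = (alternatingWord i j (p - 1)).concat i := by
          have : p = (p - 1) + 1 := by omega
          rw [this]
          rfl
        have hwsi : w * cs'.simple i = v * cs'.wordProd (alternatingWord i j (p - 1)) := by
          rw [hw_eq, hbraid, hconcat, cs'.wordProd_concat, mul_assoc, mul_assoc,
            cs'.simple_mul_simple_self, mul_one]
        have : cs'.length (w * cs'.simple i) ≤ cs'.length v + (p - 1) := by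
          rw [hwsi]
          have h3 := cs'.length_mul_le v (cs'.wordProd (alternatingWord i j (p - 1)))
          have h4 := cs'.length_wordProd_le (alternatingWord i j (p - 1))
          rw [length_alternatingWord] at h4
          omega
        omega

lemma pos_of_ascent {w : W} {i : B} (h : cs'.length w < cs'.length (w * cs'.simple i)) :
    G.ρ w (G.α i) ∈ G.PhiPos :=
  G.pos_of_ascent' (cs'.length w) w rfl i h

lemma neg_of_descent {w : W} {i : B} (h : cs'.length (w * cs'.simple i) < cs'.length w) :
    G.ρ w (G.α i) ∈ G.PhiNeg := by
  have hasc : cs'.length (w * cs'.simple i)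
      < cs'.length ((w * cs'.simple i) * cs'.simple i) := by
    rwa [cs'.simple_mul_simple_cancel_right]
  have hpos := G.pos_of_ascent hasc
  show - G.ρ w (G.α i) ∈ G.PhiPos
  have : - G.ρ w (G.α i) = G.ρ (w * cs'.simple i) (G.α i) := by
    rw [← G.rho_rho, G.simple_act_self, map_neg]
  rwa [this]

/-- Dichotomy: every root is positive or negative. -/
lemma root_pos_or_neg {γ : V} (hγ : γ ∈ G.Phi) : γ ∈ G.PhiPos ∨ γ ∈ G.PhiNeg := by
  obtain ⟨w, i, rfl⟩ := hγ
  rcases cs'.length_mul_simple w i with h | h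
  · exact Or.inl (G.pos_of_ascent (by omega))
  · exact Or.inr (G.neg_of_descent (by omega))

lemma pos_iff_ascent (w : W) (i : B) :
    G.ρ w (G.α i) ∈ G.PhiPos ↔ cs'.length w < cs'.length (w * cs'.simple i) := by
  constructor
  · intro h
    rcases cs'.length_mul_simple w i with h' | h'
    · omega
    · exfalso
      exact G.pos_neg_disjoint (G.phi_w_stable (G.alpha_mem_phi i) w) h
        (G.neg_of_descent (by omega))
  · exact fun h => G.pos_of_ascent h

lemma neg_iff_descent (w : W) (i : B) :
    G.ρ w (G.α i) ∈ G.PhiNeg ↔ cs'.length (w * cs'.simple i) < cs'.length w := by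
  constructor
  · intro h
    rcases cs'.length_mul_simple w i with h' | h'
    · exfalso
      exact G.pos_neg_disjoint (G.phi_w_stable (G.alpha_mem_phi i) w)
        (G.pos_of_ascent (by omega)) h
    · omega
  · exact fun h => G.neg_of_descent h

/-- A simple reflection permutes the positive roots other than its own. -/
lemma simple_perm {γ : V} {i : B} (hγ : γ ∈ G.PhiPos) (hne : γ ≠ G.α i) :
    G.ρ (cs'.simple i) γ ∈ G.PhiPos := by
  have hγφ : γ ∈ G.Phi := hγ.1
  have hsγφ : G.ρ (cs'.simple i) γ ∈ G.Phi := G.phi_w_stable hγφ _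
  rcases G.root_pos_or_neg hsγφ with h | h
  · exact h
  · exfalso
    rw [G.mem_phiNeg_iff] at h
    rw [G.mem_phiPos_iff] at hγ
    -- all coordinates of `s_i γ` are ≤ 0, but they agree with those of γ off i
    have hcoordeq : ∀ k, k ≠ i → G.coord k (G.ρ (cs'.simple i) γ) = G.coord k γ := by
      intro k hk
      rw [G.simple_act, coord_sub, coord_smul, G.coord_alpha]
      rw [if_neg (Ne.symm hk)]
      ring
    have hzero : ∀ k, k ≠ i → G.coord k γ = 0 := by
      intro k hk
      have h1 := h.2 k
      rw [hcoordeq k hk] at h1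
      have h2 := hγ.2 k
      linarith
    have hγeq : γ = (G.coord i γ) • G.α i := by
      apply G.eq_of_coord_eq
      intro k
      rw [coord_smul, G.coord_alpha]
      rcases eq_or_ne k i with rfl | hk
      · rw [if_pos rfl]; ring
      · rw [if_neg (Ne.symm hk), hzero k hk]; ring
    rcases G.root_prop_simple hγφ hγeq with h1 | h1
    · apply hne
      rw [hγeq, h1, one_smul]
    · have := hγ.2 i
      rw [h1] at hγeq
      have : γ = - G.α i := by rw [hγeq]; module
      rw [this] at hγ
      have h3 := hγ.2 i
      rw [coord_neg, G.coord_alpha, if_pos rfl] at h3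
      linarith

lemma eq_alpha_of_simple_neg {γ : V} {i : B} (hγ : γ ∈ G.PhiPos)
    (h : G.ρ (cs'.simple i) γ ∈ G.PhiNeg) : γ = G.α i := by
  by_contra hne
  exact G.pos_neg_disjoint (G.phi_w_stable hγ.1 _) (G.simple_perm hγ hne) h

end GeomRep
namespace GeomRep

variable {M' : CoxeterMatrix B} {cs' : CoxeterSystem M' W} (G : GeomRep M' cs' V)

open CoxeterSystem
set_option maxHeartbeats 1000000

lemma pos_of_pos_coord {γ : V} (hγ : γ ∈ G.Phi) {k : B} (h : 0 < G.coord k γ) :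
    γ ∈ G.PhiPos := by
  rcases G.root_pos_or_neg hγ with h1 | h1
  · exact h1
  · exfalso
    rw [G.mem_phiNeg_iff] at h1
    have := h1.2 k
    linarith

lemma neg_of_neg_coord {γ : V} (hγ : γ ∈ G.Phi) {k : B} (h : G.coord k γ < 0) :
    γ ∈ G.PhiNeg := by
  rcases G.root_pos_or_neg hγ with h1 | h1
  · exfalso
    rw [G.mem_phiPos_iff] at h1
    have := h1.2 k
    linarith
  · exact h1

lemma exists_pos_coord_ne {γ : V} (hγ : γ ∈ G.PhiPos) {i : B} (hne : γ ≠ G.α i) :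
    ∃ k, k ≠ i ∧ 0 < G.coord k γ := by
  by_contra hcon
  push_neg at hcon
  have hzero : ∀ k, k ≠ i → G.coord k γ = 0 := by
    intro k hk
    have h1 := hcon k hk
    have h2 := (G.mem_phiPos_iff.mp hγ).2 k
    linarith
  have hγeq : γ = (G.coord i γ) • G.α i := by
    apply G.eq_of_coord_eq
    intro k
    rw [coord_smul, G.coord_alpha]
    rcases eq_or_ne k i with rfl | hk
    · rw [if_pos rfl]; ring
    · rw [if_neg (Ne.symm hk), hzero k hk]; ring
  rcases G.root_prop_simple hγ.1 hγeq with h1 | h1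
  · exact hne (by rw [hγeq, h1, one_smul])
  · have h2 := (G.mem_phiPos_iff.mp hγ).2 i
    rw [h1] at hγeq
    have h3 : G.coord i γ = -1 := by
      have := congrArg (G.coord i) hγeq
      rwa [coord_smul, G.coord_alpha, if_pos rfl, mul_one] at this
    linarith

/-- Deletion: if `w` sends the positive root `γ` to a negative root, a letter of any word
for `w` can be deleted upon multiplying by the reflection along `γ`. -/
lemma delete_letter : ∀ (ω : List B) (γ : V), γ ∈ G.PhiPos →
    G.ρ (cs'.wordProd ω) γ ∈ G.PhiNeg →
    ∃ ω₁ ω₂ k, ω = ω₁ ++ k :: ω₂ ∧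
      cs'.wordProd ω * G.reflAlong γ = cs'.wordProd (ω₁ ++ ω₂) := by
  intro ω
  induction ω with
  | nil =>
    intro γ hγ hneg
    exfalso
    rw [cs'.wordProd_nil] at hneg
    rw [G.rho_one_apply] at hneg
    exact G.pos_neg_disjoint hγ.1 hγ hneg
  | cons k ω' ih =>
    intro γ hγ hneg
    rw [cs'.wordProd_cons, ← G.rho_rho] at hneg
    rcases G.root_pos_or_neg (G.phi_w_stable hγ.1 (cs'.wordProd ω')) with hpos | hneg'
    · -- the inner part keeps γ positive; first letter does the flip
      have heq : G.ρ (cs'.wordProd ω') γ = G.α k := G.eq_alpha_of_simple_neg hpos hneg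
      have hconj := G.reflAlong_conj hγ.1 (cs'.wordProd ω')
      rw [heq, G.reflAlong_simple] at hconj
      refine ⟨[], ω', k, rfl, ?_⟩
      rw [cs'.wordProd_cons, List.nil_append]
      have : cs'.wordProd ω' * G.reflAlong γ = cs'.simple k * cs'.wordProd ω' := by
        have := congrArg (fun x => x * cs'.wordProd ω') hconj
        simpa [mul_assoc] using this
      rw [mul_assoc, this, cs'.simple_mul_simple_cancel_left]
    · obtain ⟨ω₁, ω₂, k', hsplit, hprod⟩ := ih γ hγ hneg'
      refine ⟨k :: ω₁, ω₂, k', by rw [hsplit]; rfl, ?_⟩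
      rw [cs'.wordProd_cons, List.cons_append, cs'.wordProd_cons, mul_assoc, hprod]

/-- If `w·γ < 0 < γ` then `ℓ(w·s_γ) < ℓ(w)`. -/
lemma length_mul_reflAlong_lt {γ : V} (hγ : γ ∈ G.PhiPos) {w : W}
    (h : G.ρ w γ ∈ G.PhiNeg) :
    cs'.length (w * G.reflAlong γ) < cs'.length w := by
  obtain ⟨ω, hred, rfl⟩ := cs'.exists_reduced_word' w
  obtain ⟨ω₁, ω₂, k, hsplit, hprod⟩ := G.delete_letter ω γ hγ h
  rw [hprod]
  calc cs'.length (cs'.wordProd (ω₁ ++ ω₂)) ≤ (ω₁ ++ ω₂).length :=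
        cs'.length_wordProd_le _
    _ < ω.length := by rw [hsplit]; simp
    _ = cs'.length (cs'.wordProd ω) := hred.symm

lemma length_reflAlong_mul_lt {γ : V} (hγ : γ ∈ G.PhiPos) {w : W}
    (h : G.ρ w⁻¹ γ ∈ G.PhiNeg) :
    cs'.length (G.reflAlong γ * w) < cs'.length w := by
  have h1 := G.length_mul_reflAlong_lt hγ h
  have e : G.reflAlong γ * w = (w⁻¹ * G.reflAlong γ)⁻¹ := by
    rw [mul_inv_rev, inv_inv, G.reflAlong_inv hγ.1]
  rw [e, cs'.length_inv]
  have h2 := cs'.length_inv w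
  omega

/-- The inversion set of `w`. -/
def NSet (w : W) : Set V := {γ | γ ∈ G.PhiPos ∧ G.ρ w γ ∈ G.PhiNeg}

lemma nset_finite (w : W) : (G.NSet w).Finite := by
  obtain ⟨ω, rfl⟩ := cs'.wordProd_surjective w
  induction ω with
  | nil =>
    have : G.NSet (cs'.wordProd []) = ∅ := by
      ext γ
      simp only [NSet, Set.mem_setOf_eq, Set.mem_empty_iff_false, iff_false, not_and]
      intro hγ hneg
      rw [cs'.wordProd_nil, G.rho_one_apply] at hneg
      exact G.pos_neg_disjoint hγ.1 hγ hneg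
    rw [this]
    exact Set.finite_empty
  | cons k ω' ih =>
    apply Set.Finite.subset (Set.Finite.union ih
      (Set.finite_singleton (G.ρ (cs'.wordProd ω')⁻¹ (G.α k))))
    intro γ hγ
    obtain ⟨hγpos, hγneg⟩ := hγ
    rw [cs'.wordProd_cons, ← G.rho_rho] at hγneg
    rcases G.root_pos_or_neg (G.phi_w_stable hγpos.1 (cs'.wordProd ω')) with hpos | hneg'
    · have heq : G.ρ (cs'.wordProd ω') γ = G.α k := G.eq_alpha_of_simple_neg hpos hγneg
      right
      rw [Set.mem_singleton_iff, ← heq, G.rho_inv_cancel']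
    · exact Or.inl ⟨hγpos, hneg'⟩

/-- The key length-reduction lemma (`∗`): conjugating the reflection along a
non-simple positive root `γ` with a simple reflection `sᵢ` such that `⟨αᵢ, γ⟩ > 0`
reduces length by 2. -/
lemma star_lemma {γ : V} {i : B} (hγ : γ ∈ G.PhiPos) (hne : γ ≠ G.α i)
    (hform : 0 < G.form (G.α i) γ) :
    G.ρ (cs'.simple i) γ ∈ G.PhiPos ∧
    cs'.length (cs'.simple i * G.reflAlong γ * cs'.simple i) + 2
      = cs'.length (G.reflAlong γ) := by
  have hγΦ : γ ∈ G.Phi := hγ.1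
  refine ⟨G.simple_perm hγ hne, ?_⟩
  obtain ⟨k, hk, hkpos⟩ := G.exists_pos_coord_ne hγ hne
  -- s_γ αᵢ is negative
  have hsneg : G.ρ (G.reflAlong γ) (G.α i) ∈ G.PhiNeg := by
    apply G.neg_of_neg_coord (G.phi_w_stable (G.alpha_mem_phi i) _) (k := k)
    rw [G.reflAlong_act hγΦ, coord_sub, coord_smul, G.coord_alpha, if_neg (Ne.symm hk)]
    have hf : G.form γ (G.α i) = G.form (G.α i) γ := G.symm _ _
    rw [hf]
    nlinarith
  have hdesc1 : cs'.length (G.reflAlong γ * cs'.simple i) < cs'.length (G.reflAlong γ) := by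
    rw [← G.neg_iff_descent]
    exact hsneg
  -- δ := -s_γ αᵢ is positive and ≠ αᵢ
  have hδpos : - G.ρ (G.reflAlong γ) (G.α i) ∈ G.PhiPos := hsneg
  have hδne : - G.ρ (G.reflAlong γ) (G.α i) ≠ G.α i := by
    intro h
    have h2 : G.ρ (G.reflAlong γ) (G.α i) = - G.α i := by
      have := congrArg (fun x => -x) h
      simpa using this
    have h3 := congrArg (G.coord k) h2
    rw [G.reflAlong_act hγΦ, coord_sub, coord_smul, coord_neg, G.coord_alpha,
      if_neg (Ne.symm hk)] at h3
    have hf : G.form γ (G.α i) = G.form (G.α i) γ := G.symm _ _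
    rw [hf] at h3
    nlinarith
  -- descent of sᵢ s_γ at i
  have hdesc2 : cs'.length ((cs'.simple i * G.reflAlong γ) * cs'.simple i)
      < cs'.length (cs'.simple i * G.reflAlong γ) := by
    rw [← G.neg_iff_descent]
    show G.ρ (cs'.simple i * G.reflAlong γ) (G.α i) ∈ G.PhiNeg
    rw [← G.rho_rho]
    have : G.ρ (G.reflAlong γ) (G.α i)
        = - (- G.ρ (G.reflAlong γ) (G.α i)) := by module
    rw [this, map_neg]
    show - (G.ρ (cs'.simple i) (- G.ρ (G.reflAlong γ) (G.α i))) ∈ G.PhiNeg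
    have hpos2 : G.ρ (cs'.simple i) (- G.ρ (G.reflAlong γ) (G.α i)) ∈ G.PhiPos :=
      G.simple_perm hδpos hδne
    show - - (G.ρ (cs'.simple i) (- G.ρ (G.reflAlong γ) (G.α i))) ∈ G.PhiPos
    rwa [neg_neg]
  -- lengths
  have hlr : cs'.length (cs'.simple i * G.reflAlong γ)
      = cs'.length (G.reflAlong γ * cs'.simple i) := by
    have e : cs'.simple i * G.reflAlong γ = (G.reflAlong γ * cs'.simple i)⁻¹ := by
      rw [mul_inv_rev, cs'.inv_simple, G.reflAlong_inv hγΦ]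
    rw [e, cs'.length_inv]
  have h1 : cs'.length (G.reflAlong γ * cs'.simple i) + 1 = cs'.length (G.reflAlong γ) := by
    rcases cs'.length_mul_simple (G.reflAlong γ) i with h | h
    · omega
    · exact h
  have h2 : cs'.length ((cs'.simple i * G.reflAlong γ) * cs'.simple i) + 1
      = cs'.length (cs'.simple i * G.reflAlong γ) := by
    rcases cs'.length_mul_simple (cs'.simple i * G.reflAlong γ) i with h | h
    · omega
    · exact h
  have e2 : cs'.simple i * G.reflAlong γ * cs'.simple i
      = (cs'.simple i * G.reflAlong γ) * cs'.simple i := by group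
  rw [e2]
  omega

/-- There is a simple root pairing positively with any positive root. -/
lemma exists_simple_form_pos {γ : V} (hγ : γ ∈ G.PhiPos) :
    ∃ i, 0 < G.form (G.α i) γ := by
  by_contra hcon
  push_neg at hcon
  have h1 : G.form γ γ = 1 := G.root_norm hγ.1
  obtain ⟨hΦ, c, hc, hcomb⟩ := hγ
  have h2 : G.form γ γ = ∑ i ∈ c.support, c i * G.form (G.α i) γ := by
    nth_rewrite 1 [hcomb]
    have e0 : (c.sum fun i r => r • G.α i) = ∑ i ∈ c.support, c i • G.α i := rfl
    rw [e0, map_sum, LinearMap.sum_apply]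
    apply Finset.sum_congr rfl
    intro i _
    rw [map_smul, LinearMap.smul_apply, smul_eq_mul]
  have h3 : ∑ i ∈ c.support, c i * G.form (G.α i) γ ≤ 0 := by
    apply Finset.sum_nonpos
    intro i _
    have := hc i
    have := hcon i
    nlinarith
  rw [h2] at h1
  linarith

end GeomRep
namespace GeomRep

variable {M' : CoxeterMatrix B} {cs' : CoxeterSystem M' W} (G : GeomRep M' cs' V)

open CoxeterSystem
set_option maxHeartbeats 1000000

/-- A reflection-compatible set of roots. -/
def RC (Ψ : Set V) : Prop :=
  Ψ ⊆ G.Phi ∧ (∀ γ ∈ Ψ, -γ ∈ Ψ) ∧ ∀ γ ∈ Ψ, ∀ δ ∈ Ψ, G.ρ (G.reflAlong γ) δ ∈ Ψ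

/-- The canonical simple roots of a reflection-compatible set. -/
def SigmaSet (Ψ : Set V) : Set V :=
  {δ | δ ∈ Ψ ∧ δ ∈ G.PhiPos ∧
    ∀ β, β ∈ Ψ → β ∈ G.PhiPos → β ≠ δ → G.ρ (G.reflAlong δ) β ∈ G.PhiPos}

/-- The subgroup generated by the canonical reflections. -/
def HGrp (Ψ : Set V) : Subgroup W := Subgroup.closure (G.reflAlong '' G.SigmaSet Ψ)

lemma simple_simple_apply (i : B) (v : V) :
    G.ρ (cs'.simple i) (G.ρ (cs'.simple i) v) = v := by
  rw [G.rho_rho, cs'.simple_mul_simple_self, G.rho_one_apply]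

lemma image_simple_simple (i : B) (S : Set V) :
    (fun v => G.ρ (cs'.simple i) v) '' ((fun v => G.ρ (cs'.simple i) v) '' S) = S := by
  rw [Set.image_image]
  have he : (fun x => G.ρ (cs'.simple i) (G.ρ (cs'.simple i) x)) = id := by
    funext x
    exact G.simple_simple_apply i x
  rw [he, Set.image_id]

lemma conj_act (w x : W) (v : V) : G.ρ (w * x * w⁻¹) (G.ρ w v) = G.ρ w (G.ρ x v) := by
  rw [G.rho_rho, G.rho_rho]
  congr 1
  group

private lemma sandwich {a x : W} (h : a * a = 1) : a * (a * x * a) * a = x := by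
  have e : a * (a * x * a) * a = (a * a) * (x * (a * a)) := by group
  rw [e, h, one_mul, mul_one]

lemma rc_conj {Ψ : Set V} (hΨ : G.RC Ψ) (i : B) :
    G.RC ((fun v => G.ρ (cs'.simple i) v) '' Ψ) := by
  obtain ⟨h1, h2, h3⟩ := hΨ
  refine ⟨?_, ?_, ?_⟩
  · rintro _ ⟨γ, hγ, rfl⟩
    exact G.phi_w_stable (h1 hγ) _
  · rintro _ ⟨γ, hγ, rfl⟩
    refine ⟨-γ, h2 γ hγ, ?_⟩
    show G.ρ (cs'.simple i) (-γ) = - G.ρ (cs'.simple i) γ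
    rw [map_neg]
  · rintro _ ⟨γ, hγ, rfl⟩ _ ⟨δ, hδ, rfl⟩
    refine ⟨G.ρ (G.reflAlong γ) δ, h3 γ hγ δ hδ, ?_⟩
    show G.ρ (cs'.simple i) (G.ρ (G.reflAlong γ) δ)
        = G.ρ (G.reflAlong (G.ρ (cs'.simple i) γ)) (G.ρ (cs'.simple i) δ)
    rw [← G.reflAlong_conj (h1 hγ) (cs'.simple i), G.conj_act]

lemma simple_mem_sigma {Ψ : Set V} {i : B} (hi : G.α i ∈ Ψ) :
    G.α i ∈ G.SigmaSet Ψ := by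
  refine ⟨hi, G.alpha_mem_phiPos i, fun β hβΨ hβpos hβne => ?_⟩
  rw [G.reflAlong_simple]
  exact G.simple_perm hβpos hβne

lemma neg_alpha_not_mem {Ψ : Set V} (hΨ : G.RC Ψ) {i : B} (hi : G.α i ∉ Ψ) :
    - G.α i ∉ Ψ := by
  intro h
  have := hΨ.2.1 _ h
  rw [neg_neg] at this
  exact hi this

lemma pos_conj {Ψ : Set V} (hΨ : G.RC Ψ) {i : B} (hi : G.α i ∉ Ψ) {β : V}
    (hβ : β ∈ Ψ) (hβpos : β ∈ G.PhiPos) : G.ρ (cs'.simple i) β ∈ G.PhiPos := by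
  apply G.simple_perm hβpos
  intro h
  rw [h] at hβ
  exact hi hβ

lemma alpha_not_mem_conj {Ψ : Set V} (hΨ : G.RC Ψ) {i : B} (hi : G.α i ∉ Ψ) :
    G.α i ∉ (fun v => G.ρ (cs'.simple i) v) '' Ψ := by
  rintro ⟨γ, hγ, hγ2⟩
  have : γ = - G.α i := by
    have := congrArg (fun v => G.ρ (cs'.simple i) v) hγ2
    simp only at this
    rw [G.simple_simple_apply, G.simple_act_self] at this
    exact this
  rw [this] at hγ
  exact G.neg_alpha_not_mem hΨ hi hγ

lemma sigma_conj_sub {Ψ : Set V} (hΨ : G.RC Ψ) {i : B} (hi : G.α i ∉ Ψ) :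
    (fun v => G.ρ (cs'.simple i) v) '' G.SigmaSet Ψ
      ⊆ G.SigmaSet ((fun v => G.ρ (cs'.simple i) v) '' Ψ) := by
  rintro _ ⟨δ, ⟨hδΨ, hδpos, hδprop⟩, rfl⟩
  refine ⟨⟨δ, hδΨ, rfl⟩, G.pos_conj hΨ hi hδΨ hδpos, ?_⟩
  rintro _ ⟨β, hβΨ, rfl⟩ hβpos hβne
  have hβpos' : β ∈ G.PhiPos := by
    rcases G.root_pos_or_neg (hΨ.1 hβΨ) with h | h
    · exact h
    · exfalso
      have hmβ : -β ∈ Ψ := hΨ.2.1 β hβΨ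
      have hmβpos : -β ∈ G.PhiPos := h
      have h2 : G.ρ (cs'.simple i) (-β) ∈ G.PhiPos := G.pos_conj hΨ hi hmβ hmβpos
      rw [map_neg] at h2
      have h3 : G.ρ (cs'.simple i) β ∈ G.PhiNeg := h2
      exact G.pos_neg_disjoint (G.phi_w_stable (hΨ.1 hβΨ) _) hβpos h3
  have hβδ : β ≠ δ := by
    intro h
    rw [h] at hβne
    exact hβne rfl
  have hkey : G.ρ (G.reflAlong δ) β ∈ G.PhiPos := hδprop β hβΨ hβpos' hβδ
  have hkeyΨ : G.ρ (G.reflAlong δ) β ∈ Ψ := hΨ.2.2 δ hδΨ β hβΨ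
  have e : G.ρ (G.reflAlong (G.ρ (cs'.simple i) δ)) (G.ρ (cs'.simple i) β)
      = G.ρ (cs'.simple i) (G.ρ (G.reflAlong δ) β) := by
    rw [← G.reflAlong_conj (hΨ.1 hδΨ) (cs'.simple i), G.conj_act]
  show G.ρ (G.reflAlong (G.ρ (cs'.simple i) δ)) (G.ρ (cs'.simple i) β) ∈ G.PhiPos
  rw [e]
  exact G.pos_conj hΨ hi hkeyΨ hkey

lemma sigma_conj {Ψ : Set V} (hΨ : G.RC Ψ) {i : B} (hi : G.α i ∉ Ψ) :
    G.SigmaSet ((fun v => G.ρ (cs'.simple i) v) '' Ψ)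
      = (fun v => G.ρ (cs'.simple i) v) '' G.SigmaSet Ψ := by
  apply Set.Subset.antisymm
  · have h1 := G.sigma_conj_sub (G.rc_conj hΨ i) (G.alpha_not_mem_conj hΨ hi)
    rw [G.image_simple_simple] at h1
    intro x hx
    exact ⟨G.ρ (cs'.simple i) x, h1 ⟨x, hx, rfl⟩, G.simple_simple_apply i x⟩
  · exact G.sigma_conj_sub hΨ hi

lemma hgrp_conj {Ψ : Set V} (hΨ : G.RC Ψ) {i : B} (hi : G.α i ∉ Ψ) :
    G.HGrp ((fun v => G.ρ (cs'.simple i) v) '' Ψ)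
      = Subgroup.map (MulAut.conj (cs'.simple i)).toMonoidHom (G.HGrp Ψ) := by
  rw [HGrp, HGrp, MonoidHom.map_closure]
  congr 1
  rw [G.sigma_conj hΨ hi, ← Set.image_comp, ← Set.image_comp]
  apply Set.image_congr
  intro δ hδ
  have hδΦ : δ ∈ G.Phi := hΨ.1 hδ.1
  show G.reflAlong (G.ρ (cs'.simple i) δ)
      = (MulEquiv.toMonoidHom (MulAut.conj (cs'.simple i))) (G.reflAlong δ)
  rw [MulEquiv.coe_toMonoidHom, MulAut.conj_apply, ← G.reflAlong_conj hδΦ]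

/-- Generation: the reflection along any positive root of a reflection-compatible set
belongs to the subgroup generated by the canonical reflections. -/
theorem refl_mem_hgrp : ∀ (n : ℕ) (Ψ : Set V), G.RC Ψ →
    ∀ γ, γ ∈ Ψ → γ ∈ G.PhiPos → cs'.length (G.reflAlong γ) ≤ n →
    G.reflAlong γ ∈ G.HGrp Ψ := by
  intro n
  induction n using Nat.strong_induction_on with
  | _ n ih =>
    intro Ψ hΨ γ hγΨ hγpos hlen
    by_cases hsimple : ∃ i, γ = G.α i
    · obtain ⟨i, rfl⟩ := hsimple
      apply Subgroup.subset_closure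
      exact ⟨G.α i, G.simple_mem_sigma hγΨ, rfl⟩
    · push_neg at hsimple
      obtain ⟨i, hform⟩ := G.exists_simple_form_pos hγpos
      have hne : γ ≠ G.α i := hsimple i
      obtain ⟨hγ1pos, hstar⟩ := G.star_lemma hγpos hne hform
      have hγΦ : γ ∈ G.Phi := hγpos.1
      have hconj : cs'.simple i * G.reflAlong γ * cs'.simple i
          = G.reflAlong (G.ρ (cs'.simple i) γ) := by
        rw [← G.reflAlong_conj hγΦ (cs'.simple i), cs'.inv_simple]
      have hlen2 : cs'.length (G.reflAlong (G.ρ (cs'.simple i) γ)) + 2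
          = cs'.length (G.reflAlong γ) := by
        rw [← hconj]
        exact hstar
      have hback : G.reflAlong γ
          = cs'.simple i * G.reflAlong (G.ρ (cs'.simple i) γ) * cs'.simple i := by
        rw [← hconj]
        exact (sandwich (cs'.simple_mul_simple_self i)).symm
      by_cases hiΨ : G.α i ∈ Ψ
      · have hγ1Ψ : G.ρ (cs'.simple i) γ ∈ Ψ := by
          have := hΨ.2.2 (G.α i) hiΨ γ hγΨ
          rwa [G.reflAlong_simple] at this
        have hmem : G.reflAlong (G.ρ (cs'.simple i) γ) ∈ G.HGrp Ψ := by
          apply ih (n - 1) (by omega) Ψ hΨ _ hγ1Ψ hγ1pos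
          omega
        have hsimp_mem : cs'.simple i ∈ G.HGrp Ψ := by
          apply Subgroup.subset_closure
          exact ⟨G.α i, G.simple_mem_sigma hiΨ, G.reflAlong_simple i⟩
        rw [hback]
        exact mul_mem (mul_mem hsimp_mem hmem) hsimp_mem
      · have hRC1 : G.RC ((fun v => G.ρ (cs'.simple i) v) '' Ψ) := G.rc_conj hΨ i
        have hγ1Ψ1 : G.ρ (cs'.simple i) γ ∈ (fun v => G.ρ (cs'.simple i) v) '' Ψ :=
          ⟨γ, hγΨ, rfl⟩
        have hmem : G.reflAlong (G.ρ (cs'.simple i) γ)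
            ∈ G.HGrp ((fun v => G.ρ (cs'.simple i) v) '' Ψ) := by
          apply ih (n - 1) (by omega) _ hRC1 _ hγ1Ψ1 hγ1pos
          omega
        rw [G.hgrp_conj hΨ hiΨ] at hmem
        obtain ⟨h, hh, hhe⟩ := hmem
        simp only [MulEquiv.coe_toMonoidHom, MulAut.conj_apply] at hhe
        rw [cs'.inv_simple] at hhe
        have h4 : cs'.simple i * G.reflAlong γ * cs'.simple i
            = cs'.simple i * h * cs'.simple i := by
          rw [hconj, hhe]
        have h5 : G.reflAlong γ = h := mul_left_cancel (mul_right_cancel h4)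
        rw [h5]
        exact hh

/-- Any product of reflections along roots of `Ψ` maps `Ψ` into itself. -/
lemma list_prod_stable {Ψ : Set V} (hΨ : G.RC Ψ) :
    ∀ (L : List V), (∀ δ ∈ L, δ ∈ Ψ) → ∀ β ∈ Ψ,
      G.ρ ((L.map G.reflAlong).prod) β ∈ Ψ := by
  intro L
  induction L with
  | nil => intro _ β hβ; simpa using hβ
  | cons δ L' ih =>
    intro hL β hβ
    rw [List.map_cons, List.prod_cons, ← G.rho_rho]
    have h1 : G.ρ ((L'.map G.reflAlong).prod) β ∈ Ψ :=
      ih (fun x hx => hL x (List.mem_cons_of_mem δ hx)) β hβ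
    exact hΨ.2.2 δ (hL δ (List.mem_cons_self (a := δ) (l := L'))) _ h1

/-- The flip lemma. -/
lemma flip_lemma {Ψ : Set V} (hΨ : G.RC Ψ) :
    ∀ (L : List V), (∀ δ ∈ L, δ ∈ G.SigmaSet Ψ) → ∀ (β : V), β ∈ Ψ → β ∈ G.PhiPos →
    G.ρ ((L.map G.reflAlong).prod) β ∈ G.PhiNeg →
    ∃ L₁ L₂ δ, L = L₁ ++ δ :: L₂ ∧
      ((L.map G.reflAlong).prod) * G.reflAlong β = (((L₁ ++ L₂).map G.reflAlong)).prod := by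
  intro L
  induction L with
  | nil =>
    intro _ β hβΨ hβpos hβneg
    exfalso
    rw [List.map_nil, List.prod_nil, G.rho_one_apply] at hβneg
    exact G.pos_neg_disjoint hβpos.1 hβpos hβneg
  | cons δ L' ih =>
    intro hL β hβΨ hβpos hβneg
    have hdelS : δ ∈ G.SigmaSet Ψ := hL δ (List.mem_cons_self (a := δ) (l := L'))
    have hL' : ∀ x ∈ L', x ∈ G.SigmaSet Ψ := fun x hx => hL x (List.mem_cons_of_mem δ hx)
    rw [List.map_cons, List.prod_cons, ← G.rho_rho] at hβneg
    have hxβΨ : G.ρ ((L'.map G.reflAlong).prod) β ∈ Ψ :=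
      G.list_prod_stable hΨ L' (fun x hx => (hL' x hx).1) β hβΨ
    rcases G.root_pos_or_neg (hΨ.1 hxβΨ) with hpos | hneg
    · have heq : G.ρ ((L'.map G.reflAlong).prod) β = δ := by
        by_contra hneq
        exact G.pos_neg_disjoint (G.phi_w_stable (hΨ.1 hxβΨ) (G.reflAlong δ))
          (hdelS.2.2 _ hxβΨ hpos hneq) hβneg
      have h4 := G.reflAlong_conj hβpos.1 ((L'.map G.reflAlong).prod)
      rw [heq] at h4
      -- h4 : x * s_β * x⁻¹ = reflAlong δ
      have hconj : G.reflAlong δ * (L'.map G.reflAlong).prod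
          = (L'.map G.reflAlong).prod * G.reflAlong β := by
        rw [← h4]
        group
      refine ⟨[], L', δ, rfl, ?_⟩
      rw [List.map_cons, List.prod_cons, List.nil_append, mul_assoc, ← hconj, ← mul_assoc,
        G.reflAlong_sq (hΨ.1 hdelS.1), one_mul]
    · obtain ⟨L₁, L₂, δ', hsplit, hprod⟩ := ih hL' β hβΨ hβpos hneg
      refine ⟨δ :: L₁, L₂, δ', by rw [hsplit]; rfl, ?_⟩
      rw [List.map_cons, List.prod_cons, List.cons_append, List.map_cons, List.prod_cons,
        mul_assoc, hprod]

end GeomRep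
namespace GeomRep

variable {M' : CoxeterMatrix B} {cs' : CoxeterSystem M' W} (G : GeomRep M' cs' V)

open CoxeterSystem
set_option maxHeartbeats 1000000

lemma prod_refl_inv : ∀ (L : List V), (∀ δ ∈ L, δ ∈ G.Phi) →
    ((L.map G.reflAlong).prod)⁻¹ = (L.reverse.map G.reflAlong).prod := by
  intro L
  induction L with
  | nil => simp
  | cons δ L' ih =>
    intro hL
    rw [List.map_cons, List.prod_cons, mul_inv_rev, List.reverse_cons, List.map_append,
      List.prod_append, List.map_singleton, List.prod_singleton]
    rw [ih (fun x hx => hL x (List.mem_cons_of_mem δ hx)),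
      G.reflAlong_inv (hL δ (List.mem_cons_self (a := δ) (l := L')))]

lemma mem_hgrp_list {Ψ : Set V} (hΨ : G.RC Ψ) {u : W} (hu : u ∈ G.HGrp Ψ) :
    ∃ L : List V, (∀ δ ∈ L, δ ∈ G.SigmaSet Ψ) ∧ u = (L.map G.reflAlong).prod := by
  induction hu using Subgroup.closure_induction with
  | mem x hx =>
    obtain ⟨δ, hδ, rfl⟩ := hx
    exact ⟨[δ], by simpa using hδ, by simp⟩
  | one => exact ⟨[], by simp, by simp⟩
  | mul x y hx hy ihx ihy =>
    obtain ⟨L₁, hL₁, rfl⟩ := ihx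
    obtain ⟨L₂, hL₂, rfl⟩ := ihy
    refine ⟨L₁ ++ L₂, ?_, by rw [List.map_append, List.prod_append]⟩
    intro δ hδ
    rcases List.mem_append.mp hδ with h | h
    · exact hL₁ δ h
    · exact hL₂ δ h
  | inv x hx ihx =>
    obtain ⟨L, hL, rfl⟩ := ihx
    refine ⟨L.reverse, fun δ hδ => hL δ (List.mem_reverse.mp hδ), ?_⟩
    exact G.prod_refl_inv L (fun δ hδ => hΨ.1 (hL δ hδ).1)

lemma wr_le_hgrp {Ψ : Set V} (hΨ : G.RC Ψ) : G.WR Ψ ≤ G.HGrp Ψ := by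
  rw [WR]
  apply Subgroup.closure_le _ |>.mpr
  rintro _ ⟨γ, hγ, rfl⟩
  have hγΦ : γ ∈ G.Phi := hΨ.1 hγ
  rcases G.root_pos_or_neg hγΦ with hpos | hneg
  · exact G.refl_mem_hgrp (cs'.length (G.reflAlong γ)) Ψ hΨ γ hγ hpos le_rfl
  · have h1 : -γ ∈ Ψ := hΨ.2.1 γ hγ
    have h2 : -γ ∈ G.PhiPos := hneg
    rw [← G.reflAlong_neg hγΦ]
    exact G.refl_mem_hgrp _ Ψ hΨ (-γ) h1 h2 le_rfl

/-- Core of conjunct 6: an element of the reflection subgroup of `Ψ` keeping the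
positive part of `Ψ` positive is trivial. -/
theorem eq_one_aux {Ψ : Set V} (hΨ : G.RC Ψ) : ∀ (n : ℕ) (L : List V), L.length ≤ n →
    (∀ δ ∈ L, δ ∈ G.SigmaSet Ψ) →
    (∀ γ, γ ∈ Ψ → γ ∈ G.PhiPos → G.ρ ((L.map G.reflAlong).prod) γ ∈ G.PhiPos) →
    (L.map G.reflAlong).prod = 1 := by
  intro n
  induction n using Nat.strong_induction_on with
  | _ n ih =>
    intro L hLn hLS hLfix
    rcases List.eq_nil_or_concat L with rfl | ⟨L₀, β, rfl⟩
    · simp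
    · simp only [List.concat_eq_append] at hLn hLS hLfix ⊢
      have hβ : β ∈ G.SigmaSet Ψ := hLS β (by simp)
      have hβΨ : β ∈ Ψ := hβ.1
      have hβpos : β ∈ G.PhiPos := hβ.2.1
      have hprod : ((L₀ ++ [β]).map G.reflAlong).prod
          = (L₀.map G.reflAlong).prod * G.reflAlong β := by
        rw [List.map_append, List.prod_append, List.map_singleton, List.prod_singleton]
      have hupos : G.ρ (((L₀ ++ [β]).map G.reflAlong).prod) β ∈ G.PhiPos :=
        hLfix β hβΨ hβpos
      have hvneg : G.ρ ((L₀.map G.reflAlong).prod) β ∈ G.PhiNeg := by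
        have e : G.ρ ((L₀.map G.reflAlong).prod) β
            = - G.ρ (((L₀ ++ [β]).map G.reflAlong).prod) β := by
          rw [hprod, ← G.rho_rho, G.reflAlong_self hβpos.1, map_neg, neg_neg]
        rw [e]
        show - - G.ρ (((L₀ ++ [β]).map G.reflAlong).prod) β ∈ G.PhiPos
        rwa [neg_neg]
      obtain ⟨L₁, L₂, δ, hsplit, hshort⟩ := G.flip_lemma hΨ L₀
        (fun x hx => hLS x (List.mem_append.mpr (Or.inl hx))) β hβΨ hβpos hvneg
      have hueq : ((L₀ ++ [β]).map G.reflAlong).prod = ((L₁ ++ L₂).map G.reflAlong).prod := by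
        rw [hprod, hshort]
      have hlen : (L₁ ++ L₂).length + 2 = (L₀ ++ [β]).length := by
        have := congrArg List.length hsplit
        simp at this ⊢
        omega
      rw [hueq]
      apply ih (n - 1) (by simp at hLn; omega) (L₁ ++ L₂) (by omega)
      · intro x hx
        apply hLS
        rw [hsplit]
        rcases List.mem_append.mp hx with h | h
        · exact List.mem_append.mpr (Or.inl (List.mem_append.mpr (Or.inl h)))
        · exact List.mem_append.mpr (Or.inl (List.mem_append.mpr (Or.inr
            (List.mem_cons_of_mem δ h))))
      · intro γ hγΨ hγpos
        rw [← hueq]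
        exact hLfix γ hγΨ hγpos

theorem wr_fix_pos_eq_one {Ψ : Set V} (hΨ : G.RC Ψ) {u : W} (hu : u ∈ G.WR Ψ)
    (hfix : ∀ γ, γ ∈ Ψ → γ ∈ G.PhiPos → G.ρ u γ ∈ G.PhiPos) : u = 1 := by
  obtain ⟨L, hL, rfl⟩ := G.mem_hgrp_list hΨ (G.wr_le_hgrp hΨ hu)
  exact G.eq_one_aux hΨ L.length L le_rfl hL hfix

end GeomRep
namespace GeomRep

variable {M' : CoxeterMatrix B} {cs' : CoxeterSystem M' W} (G : GeomRep M' cs' V)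

open CoxeterSystem
set_option maxHeartbeats 1000000

lemma alpha_ne_zero (i : B) : G.α i ≠ 0 := G.root_ne_zero (G.alpha_mem_phi i)

lemma perp_subset_phi (I : Set B) : G.perp I ⊆ G.Phi := fun _ h => h.1

lemma perp_neg_closed {I : Set B} {γ : V} (h : γ ∈ G.perp I) : -γ ∈ G.perp I := by
  refine ⟨G.phi_neg_closed h.1, fun s hs => ?_⟩
  rw [map_neg, LinearMap.neg_apply, h.2 s hs, neg_zero]

lemma rc_perp (I : Set B) : G.RC (G.perp I) := by
  refine ⟨G.perp_subset_phi I, fun γ hγ => G.perp_neg_closed hγ, ?_⟩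
  intro γ hγ δ hδ
  refine ⟨G.phi_w_stable hδ.1 _, fun s hs => ?_⟩
  rw [G.reflAlong_act hγ.1, map_sub, LinearMap.sub_apply, hδ.2 s hs, map_smul,
    LinearMap.smul_apply, hγ.2 s hs, smul_eq_mul, mul_zero, zero_sub, neg_zero]

/-- Simple reflections indexed by `I` fix `Φ^{⊥I}` pointwise. -/
lemma simple_fixes_perp {I : Set B} {s : B} (hs : s ∈ I) {γ : V} (hγ : γ ∈ G.perp I) :
    G.ρ (cs'.simple s) γ = γ := by
  rw [G.simple_act]
  have : G.form (G.α s) γ = 0 := by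
    rw [G.symm]
    exact hγ.2 s hs
  rw [this]
  simp

lemma par_fixes_perp {I : Set B} {u : W} (hu : u ∈ par cs' I) {γ : V}
    (hγ : γ ∈ G.perp I) : G.ρ u γ = γ := by
  induction hu using Subgroup.closure_induction with
  | mem x hx =>
    obtain ⟨s, hs, rfl⟩ := hx
    exact G.simple_fixes_perp hs hγ
  | one => exact G.rho_one_apply γ
  | mul x y _ _ ihx ihy => rw [← G.rho_rho, ihy, ihx]
  | inv x _ ihx =>
    have := congrArg (fun v => G.ρ x⁻¹ v) ihx
    rw [G.rho_inv_cancel'] at this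
    exact this.symm

lemma simple_mem_par {I : Set B} {s : B} (hs : s ∈ I) : cs'.simple s ∈ par cs' I :=
  Subgroup.subset_closure ⟨s, hs, rfl⟩

/-- A reflection along a `Φ^{⊥I}`-root centralizes `W_I`. -/
lemma reflAlong_perp_mem_centralizer {I : Set B} {δ : V} (hδ : δ ∈ G.perp I) :
    G.reflAlong δ ∈ Subgroup.centralizer ((par cs' I : Set W)) := by
  rw [Subgroup.mem_centralizer_iff]
  intro g hg
  have h1 : G.ρ g δ = δ := G.par_fixes_perp hg hδ
  have h2 := G.reflAlong_conj hδ.1 g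
  rw [h1] at h2
  calc g * G.reflAlong δ = (g * G.reflAlong δ * g⁻¹) * g := by group
    _ = G.reflAlong δ * g := by rw [h2]

lemma wperp_le_centralizer (I : Set B) :
    G.Wperp I ≤ Subgroup.centralizer ((par cs' I : Set W)) := by
  apply Subgroup.closure_le _ |>.mpr
  rintro _ ⟨δ, hδ, rfl⟩
  exact G.reflAlong_perp_mem_centralizer hδ

lemma fix_of_simple_fix {s : B} {v : V} (h : G.ρ (cs'.simple s) v = v) :
    G.form (G.α s) v = 0 := by
  rw [G.simple_act] at h
  have h2 := sub_eq_self.mp h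
  rcases smul_eq_zero.mp h2 with h3 | h3
  · linarith
  · exact absurd h3 (G.alpha_ne_zero s)

/-- Elements of the centralizer of `W_I` preserve `Φ^{⊥I}`. -/
lemma centralizer_preserves_perp {I : Set B} {g : W}
    (hg : g ∈ Subgroup.centralizer ((par cs' I : Set W))) {γ : V} (hγ : γ ∈ G.perp I) :
    G.ρ g γ ∈ G.perp I := by
  refine ⟨G.phi_w_stable hγ.1 g, fun s hs => ?_⟩
  rw [Subgroup.mem_centralizer_iff] at hg
  have hcomm : cs'.simple s * g = g * cs'.simple s := hg _ (simple_mem_par hs)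
  have h1 : G.ρ (cs'.simple s) (G.ρ g γ) = G.ρ g γ := by
    rw [G.rho_rho, hcomm, ← G.rho_rho, G.simple_fixes_perp hs hγ]
  rw [G.symm]
  exact G.fix_of_simple_fix h1

/-- Conjugation by a centralizer element preserves `W^{⊥I}`. -/
lemma centralizer_conj_wperp {I : Set B} {g u : W}
    (hg : g ∈ Subgroup.centralizer ((par cs' I : Set W))) (hu : u ∈ G.Wperp I) :
    g * u * g⁻¹ ∈ G.Wperp I := by
  have key : Subgroup.map (MulEquiv.toMonoidHom (MulAut.conj g)) (G.Wperp I) ≤ G.Wperp I := by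
    rw [Wperp, WR, MonoidHom.map_closure]
    apply Subgroup.closure_le _ |>.mpr
    rintro _ ⟨_, ⟨δ, hδ, rfl⟩, rfl⟩
    apply Subgroup.subset_closure
    refine ⟨G.ρ g δ, G.centralizer_preserves_perp hg hδ, ?_⟩
    rw [← G.reflAlong_conj hδ.1 g]
    rfl
  apply key
  exact ⟨u, hu, rfl⟩

/-- Letters not occurring in a word do not change coordinates. -/
lemma coord_word_invariant : ∀ (ω : List B) {k : B}, k ∉ ω → ∀ v : V,
    G.coord k (G.ρ (cs'.wordProd ω) v) = G.coord k v := by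
  intro ω
  induction ω with
  | nil => intro k _ v; rw [cs'.wordProd_nil, G.rho_one_apply]
  | cons t ω' ih =>
    intro k hk v
    rw [cs'.wordProd_cons, ← G.rho_rho, G.simple_act, coord_sub, coord_smul, G.coord_alpha]
    have hkt : t ≠ k := by
      intro h
      exact hk (by rw [h]; exact List.mem_cons_self (a := k) (l := ω'))
    rw [if_neg hkt]
    rw [ih (fun h => hk (List.mem_cons_of_mem t h)) v]
    ring

lemma par_word {I : Set B} {u : W} (hu : u ∈ par cs' I) :
    ∃ ω : List B, (∀ t ∈ ω, t ∈ I) ∧ u = cs'.wordProd ω := by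
  induction hu using Subgroup.closure_induction with
  | mem x hx =>
    obtain ⟨s, hs, rfl⟩ := hx
    exact ⟨[s], by simpa using hs, by simp⟩
  | one => exact ⟨[], by simp, by simp⟩
  | mul x y _ _ ihx ihy =>
    obtain ⟨ω₁, h1, rfl⟩ := ihx
    obtain ⟨ω₂, h2, rfl⟩ := ihy
    refine ⟨ω₁ ++ ω₂, ?_, by rw [cs'.wordProd_append]⟩
    intro t ht
    rcases List.mem_append.mp ht with h | h
    · exact h1 t h
    · exact h2 t h
  | inv x _ ihx =>
    obtain ⟨ω, h1, rfl⟩ := ihx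
    refine ⟨ω.reverse, fun t ht => h1 t (List.mem_reverse.mp ht), ?_⟩
    rw [cs'.wordProd_reverse]

lemma coord_par_invariant {I : Set B} {u : W} (hu : u ∈ par cs' I) {k : B} (hk : k ∉ I)
    (v : V) : G.coord k (G.ρ u v) = G.coord k v := by
  obtain ⟨ω, hω, rfl⟩ := par_word hu
  apply G.coord_word_invariant
  intro h
  exact hk (hω k h)

/-- An element of a standard parabolic fixing all its simple roots is trivial. -/
lemma fix_pi_eq_one {I : Set B} {u : W} (hu : u ∈ par cs' I)
    (hfix : ∀ s ∈ I, G.ρ u (G.α s) = G.α s) : u = 1 := by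
  by_contra hne
  obtain ⟨j, hj⟩ := cs'.exists_rightDescent_of_ne_one hne
  have hneg : G.ρ u (G.α j) ∈ G.PhiNeg := G.neg_of_descent hj
  by_cases hjI : j ∈ I
  · rw [hfix j hjI] at hneg
    exact G.pos_neg_disjoint (G.alpha_mem_phi j) (G.alpha_mem_phiPos j) hneg
  · have h1 : G.coord j (G.ρ u (G.α j)) = 1 := by
      rw [G.coord_par_invariant hu hjI, G.coord_alpha, if_pos rfl]
    have h2 : G.ρ u (G.α j) ∈ G.PhiPos :=
      G.pos_of_pos_coord (G.phi_w_stable (G.alpha_mem_phi j) u) (by rw [h1]; norm_num)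
    exact G.pos_neg_disjoint (G.phi_w_stable (G.alpha_mem_phi j) u) h2 hneg

/-- Centralizer elements send each `α s`, `s ∈ I`, to `± α s`. -/
lemma centralizer_sign {I : Set B} {g : W}
    (hg : g ∈ Subgroup.centralizer ((par cs' I : Set W))) {s : B} (hs : s ∈ I) :
    G.ρ g (G.α s) = G.α s ∨ G.ρ g (G.α s) = - G.α s := by
  rw [Subgroup.mem_centralizer_iff] at hg
  have hcomm : cs'.simple s * g = g * cs'.simple s := hg _ (simple_mem_par hs)
  have h1 : G.ρ (cs'.simple s) (G.ρ g (G.α s)) = - G.ρ g (G.α s) := by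
    rw [G.rho_rho, hcomm, ← G.rho_rho, G.simple_act_self, map_neg]
  rw [G.simple_act] at h1
  have h2 : G.ρ g (G.α s) = (G.form (G.α s) (G.ρ g (G.α s))) • G.α s := by
    linear_combination (norm := module) (1/2 : ℝ) • h1
  rcases G.root_prop_simple (G.phi_w_stable (G.alpha_mem_phi s) g) h2 with h | h
  · left; rw [h2, h, one_smul]
  · right; rw [h2, h]; module

/-- An element sending each `α s`, `s ∈ I`, to `± α s` centralizes `W_I`. -/
lemma centralizer_of_pm {I : Set B} {g : W}
    (hpm : ∀ s ∈ I, G.ρ g (G.α s) = G.α s ∨ G.ρ g (G.α s) = - G.α s) :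
    g ∈ Subgroup.centralizer ((par cs' I : Set W)) := by
  rw [Subgroup.mem_centralizer_iff]
  intro x hx
  induction hx using Subgroup.closure_induction with
  | mem y hy =>
    obtain ⟨s, hs, rfl⟩ := hy
    have key : g * cs'.simple s * g⁻¹ = cs'.simple s := by
      have h1 := G.reflAlong_conj (G.alpha_mem_phi s) g
      rw [G.reflAlong_simple] at h1
      rcases hpm s hs with h | h
      · rw [h, G.reflAlong_simple] at h1
        exact h1
      · rw [h, G.reflAlong_neg (G.alpha_mem_phi s), G.reflAlong_simple] at h1
        exact h1
    calc cs'.simple s * g = (g * cs'.simple s * g⁻¹) * g := by rw [key]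
      _ = g * cs'.simple s := by group
  | one => rw [one_mul, mul_one]
  | mul x y _ _ ihx ihy =>
    calc x * y * g = x * (y * g) := by group
      _ = x * g * y := by rw [ihy]; group
      _ = g * (x * y) := by rw [ihx]; group
  | inv x _ ihx =>
    calc x⁻¹ * g = x⁻¹ * (g * x) * x⁻¹ := by group
      _ = x⁻¹ * (x * g) * x⁻¹ := by rw [← ihx]
      _ = g * x⁻¹ := by group

end GeomRep
namespace GeomRep

variable {M' : CoxeterMatrix B} {cs' : CoxeterSystem M' W} (G : GeomRep M' cs' V)

open CoxeterSystem
set_option maxHeartbeats 1000000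

lemma adj_symm {a b : B} (h : adj M' a b) : adj M' b a := by
  refine ⟨h.1.symm, ?_⟩
  rw [M'.symmetric]
  exact h.2

lemma connIn_symm {A : Set B} {a b : B} (h : connIn M' A a b) : connIn M' A b a := by
  apply (@Relation.ReflTransGen.stdSymm _ _ ⟨?_⟩).symm _ _ h
  rintro x y ⟨h1, h2, h3⟩
  exact ⟨h2, h1, adj_symm h3⟩

lemma mem_component_self {I : Set B} {s : B} (hs : s ∈ I) : s ∈ component M' I s :=
  ⟨hs, Relation.ReflTransGen.refl⟩

lemma component_subset {I : Set B} {s : B} : component M' I s ⊆ I := fun _ h => h.1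

lemma adj_mem_component {I : Set B} {s t : B} (hs : s ∈ I) (ht : t ∈ I)
    (h : adj M' s t) : t ∈ component M' I s :=
  ⟨ht, Relation.ReflTransGen.single ⟨hs, ht, h⟩⟩

lemma component_eq {I : Set B} {s t : B} (h : t ∈ component M' I s) :
    component M' I t = component M' I s := by
  ext u
  constructor
  · rintro ⟨hu, hconn⟩
    exact ⟨hu, h.2.trans hconn⟩
  · rintro ⟨hu, hconn⟩
    exact ⟨hu, (connIn_symm h.2).trans hconn⟩

lemma not_adj_form_zero {t u : B} (hne : t ≠ u) (hnadj : ¬ adj M' t u) :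
    G.form (G.α t) (G.α u) = 0 := by
  have hM : M' t u = 2 := by
    by_contra h
    exact hnadj ⟨hne, h⟩
  rw [G.form_simple_fin t u (by rw [hM]; norm_num), hM]
  push_cast
  rw [Real.cos_pi_div_two]
  norm_num

lemma comp_orth {I : Set B} {s₀ t u : B} (ht : t ∈ I) (htn : t ∉ component M' I s₀)
    (hu : u ∈ component M' I s₀) : G.form (G.α t) (G.α u) = 0 := by
  have hne : t ≠ u := by
    rintro rfl
    exact htn hu
  apply G.not_adj_form_zero hne
  intro hadj
  apply htn
  rw [← component_eq hu]
  exact adj_mem_component hu.1 ht (adj_symm hadj)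

lemma adj_form_ne_zero {s t : B} (h : adj M' s t) : G.form (G.α s) (G.α t) ≠ 0 := by
  rcases eq_or_ne (M' s t) 0 with h0 | h0
  · rw [G.form_simple_inf s t h0]
    norm_num
  · have h3 : 3 ≤ M' s t := by
      have h1 := M'.off_diagonal s t h.1
      have h2 := h.2
      omega
    rw [G.form_simple_fin s t h0]
    have hcos : 0 < Real.cos (Real.pi / (M' s t : ℝ)) := by
      apply Real.cos_pos_of_mem_Ioo
      constructor
      · have : 0 < Real.pi / (M' s t : ℝ) := by
          apply div_pos Real.pi_pos
          exact_mod_cast Nat.pos_of_ne_zero h0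
        linarith [Real.pi_pos]
      · calc Real.pi / (M' s t : ℝ) ≤ Real.pi / 3 := by
              apply div_le_div_of_nonneg_left Real.pi_pos.le (by norm_num)
              exact_mod_cast h3
          _ < Real.pi / 2 :=
              div_lt_div_of_pos_left Real.pi_pos (by norm_num) (by norm_num)
    linarith

lemma sign_const {I : Set B} {g : W}
    (hg : g ∈ Subgroup.centralizer ((par cs' I : Set W))) {s t : B}
    (hconn : connIn M' I s t) (hsneg : G.ρ g (G.α s) = - G.α s) :
    G.ρ g (G.α t) = - G.α t := by
  induction hconn with
  | refl => exact hsneg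
  | @tail b c hab hbc ih =>
    obtain ⟨hbI, hcI, hadj⟩ := hbc
    rcases G.centralizer_sign hg hcI with h | h
    · exfalso
      have hinv := G.invariant g (G.α b) (G.α c)
      rw [ih, h] at hinv
      simp only [map_neg, LinearMap.neg_apply] at hinv
      have := G.adj_form_ne_zero hadj
      apply this
      linarith
    · exact h

lemma neg_set_finite (g : W) : {s : B | G.ρ g (G.α s) = - G.α s}.Finite := by
  obtain ⟨ω, rfl⟩ := cs'.wordProd_surjective g
  apply Set.Finite.subset (List.finite_toSet ω)
  intro s hs
  by_contra hmem
  have h1 : G.coord s (G.ρ (cs'.wordProd ω) (G.α s)) = G.coord s (G.α s) :=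
    G.coord_word_invariant ω hmem (G.α s)
  rw [Set.mem_setOf_eq] at hs
  rw [hs, coord_neg, G.coord_alpha, if_pos rfl] at h1
  norm_num at h1

lemma form_alpha_span_zero {J : Set B} {t : B}
    (horth : ∀ u ∈ J, G.form (G.α t) (G.α u) = 0) {v : V}
    (hv : v ∈ Submodule.span ℝ (G.α '' J)) : G.form (G.α t) v = 0 := by
  induction hv using Submodule.span_induction with
  | mem x hx =>
    obtain ⟨u, hu, rfl⟩ := hx
    exact horth u hu
  | zero => simp
  | add x y _ _ ihx ihy => rw [map_add, ihx, ihy, add_zero]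
  | smul a x _ ihx => rw [map_smul, smul_eq_mul, ihx, mul_zero]

lemma span_fix {J : Set B} {t : B}
    (horth : ∀ u ∈ J, G.form (G.α t) (G.α u) = 0) {v : V}
    (hv : v ∈ Submodule.span ℝ (G.α '' J)) : G.ρ (cs'.simple t) v = v := by
  rw [G.simple_act, G.form_alpha_span_zero horth hv]
  simp

lemma span_stable {J : Set B} {t : B} (ht : t ∈ J) {v : V}
    (hv : v ∈ Submodule.span ℝ (G.α '' J)) :
    G.ρ (cs'.simple t) v ∈ Submodule.span ℝ (G.α '' J) := by
  rw [G.simple_act]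
  apply Submodule.sub_mem _ hv
  apply Submodule.smul_mem
  apply Submodule.subset_span
  exact ⟨t, ht, rfl⟩

lemma word_span_stable {J : Set B} : ∀ (ω : List B), (∀ t ∈ ω, t ∈ J) → ∀ v,
    v ∈ Submodule.span ℝ (G.α '' J) →
    G.ρ (cs'.wordProd ω) v ∈ Submodule.span ℝ (G.α '' J) := by
  intro ω
  induction ω with
  | nil => intro _ v hv; rw [cs'.wordProd_nil, G.rho_one_apply]; exact hv
  | cons t ω' ih =>
    intro hω v hv
    rw [cs'.wordProd_cons, ← G.rho_rho]
    exact G.span_stable (hω t (List.mem_cons_self (a := t) (l := ω')))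
      (ih (fun x hx => hω x (List.mem_cons_of_mem t hx)) v hv)

lemma word_mem_par {J : Set B} : ∀ (ω : List B), (∀ t ∈ ω, t ∈ J) →
    cs'.wordProd ω ∈ par cs' J := by
  intro ω
  induction ω with
  | nil => intro _; rw [cs'.wordProd_nil]; exact one_mem _
  | cons t ω' ih =>
    intro hω
    rw [cs'.wordProd_cons]
    exact mul_mem (simple_mem_par (hω t (List.mem_cons_self (a := t) (l := ω'))))
      (ih (fun x hx => hω x (List.mem_cons_of_mem t hx)))

/-- Extraction of the `J`-part of a word, for `J` orthogonal to the rest of `I`. -/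
lemma extract {I J : Set B}
    (horth : ∀ t ∈ I, t ∉ J → ∀ u ∈ J, G.form (G.α t) (G.α u) = 0) :
    ∀ (ω : List B), (∀ t ∈ ω, t ∈ I) →
    ∃ ω' : List B, (∀ t ∈ ω', t ∈ J) ∧ ∀ v ∈ Submodule.span ℝ (G.α '' J),
      G.ρ (cs'.wordProd ω) v = G.ρ (cs'.wordProd ω') v := by
  intro ω
  induction ω with
  | nil => exact fun _ => ⟨[], by simp, fun v _ => rfl⟩
  | cons t ω₀ ih =>
    intro hω
    obtain ⟨ω', hω', hact⟩ := ih (fun x hx => hω x (List.mem_cons_of_mem t hx))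
    by_cases htJ : t ∈ J
    · refine ⟨t :: ω', fun x hx => ?_, fun v hv => ?_⟩
      · rcases List.mem_cons.mp hx with rfl | h
        · exact htJ
        · exact hω' x h
      · rw [cs'.wordProd_cons, cs'.wordProd_cons, ← G.rho_rho, ← G.rho_rho, hact v hv]
    · refine ⟨ω', hω', fun v hv => ?_⟩
      rw [cs'.wordProd_cons, ← G.rho_rho, hact v hv]
      apply G.span_fix (horth t (hω t (List.mem_cons_self (a := t) (l := ω₀))) htJ)
      exact G.word_span_stable ω' hω' v hv

lemma support_span {J : Set B} {γ : V} (h : ∀ k, k ∉ J → G.coord k γ = 0) :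
    γ ∈ Submodule.span ℝ (G.α '' J) := by
  have h2 : ((G.bas.repr γ).sum fun i r => r • G.α i) ∈ Submodule.span ℝ (G.α '' J) := by
    apply Submodule.finsuppSum_mem
    intro i hi
    by_cases hiJ : i ∈ J
    · exact Submodule.smul_mem _ _ (Submodule.subset_span ⟨i, hiJ, rfl⟩)
    · exfalso
      exact hi (h i hiJ)
  have e := G.combo_of_coords γ
  rw [← e] at h2
  exact h2

lemma span_neg_act {J : Set B} {z : W} (hneg : ∀ t ∈ J, G.ρ z (G.α t) = - G.α t)
    {v : V} (hv : v ∈ Submodule.span ℝ (G.α '' J)) : G.ρ z v = - v := by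
  induction hv using Submodule.span_induction with
  | mem x hx =>
    obtain ⟨u, hu, rfl⟩ := hx
    exact hneg u hu
  | zero => simp
  | add x y _ _ ihx ihy => rw [map_add, ihx, ihy]; module
  | smul a x _ ihx => rw [map_smul, ihx]; module

end GeomRep
namespace GeomRep

variable {M' : CoxeterMatrix B} {cs' : CoxeterSystem M' W} (G : GeomRep M' cs' V)

open CoxeterSystem
set_option maxHeartbeats 1000000

/-- The roots supported on `J`. -/
def PhiJ (J : Set B) : Set V := {γ ∈ G.Phi | ∀ k, k ∉ J → G.coord k γ = 0}

lemma phiJ_finite {J : Set B} {z : W} (hz : z ∈ par cs' J)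
    (hneg : ∀ t ∈ J, G.ρ z (G.α t) = - G.α t) : (G.PhiJ J).Finite := by
  have hsub : G.PhiJ J ∩ G.PhiPos ⊆ G.NSet z := by
    rintro γ ⟨⟨hγΦ, hγsupp⟩, hγpos⟩
    refine ⟨hγpos, ?_⟩
    have h1 : G.ρ z γ = -γ := G.span_neg_act hneg (G.support_span hγsupp)
    rw [h1]
    show - - γ ∈ G.PhiPos
    rwa [neg_neg]
  have hposfin : (G.PhiJ J ∩ G.PhiPos).Finite := Set.Finite.subset (G.nset_finite z) hsub
  have hcover : G.PhiJ J ⊆ (G.PhiJ J ∩ G.PhiPos) ∪ (fun γ => -γ) '' (G.PhiJ J ∩ G.PhiPos) := by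
    intro γ hγ
    rcases G.root_pos_or_neg hγ.1 with h | h
    · exact Or.inl ⟨hγ, h⟩
    · right
      refine ⟨-γ, ⟨⟨G.phi_neg_closed hγ.1, fun k hk => ?_⟩, h⟩, by show - - γ = γ; rw [neg_neg]⟩
      rw [coord_neg, hγ.2 k hk, neg_zero]
  exact Set.Finite.subset (hposfin.union (hposfin.image _)) hcover

lemma alpha_mem_phiJ {J : Set B} {t : B} (ht : t ∈ J) : G.α t ∈ G.PhiJ J := by
  refine ⟨G.alpha_mem_phi t, fun k hk => ?_⟩
  rw [G.coord_alpha]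
  rw [if_neg]
  rintro rfl
  exact hk ht

lemma par_J_stable_phiJ {J : Set B} {u : W} (hu : u ∈ par cs' J) {γ : V}
    (hγ : γ ∈ G.PhiJ J) : G.ρ u γ ∈ G.PhiJ J := by
  refine ⟨G.phi_w_stable hγ.1 u, fun k hk => ?_⟩
  rw [G.coord_par_invariant hu hk]
  exact hγ.2 k hk

/-- The standard parabolic on a set `J` admitting a "`-1`" element is finite. -/
lemma par_finite {J : Set B} (hJfin : J.Finite) {z : W} (hz : z ∈ par cs' J)
    (hneg : ∀ t ∈ J, G.ρ z (G.α t) = - G.α t) : (par cs' J : Set W).Finite := by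
  classical
  have hphi := G.phiJ_finite hz hneg
  haveI : Fintype ↥(hJfin.toFinset : Finset B) := FinsetCoe.fintype _
  set f : W → (↥(hJfin.toFinset : Finset B) → V) := fun u t => G.ρ u (G.α t) with hf
  have hinj : Set.InjOn f (par cs' J : Set W) := by
    intro u hu u' hu' he
    have hfix : ∀ s ∈ J, G.ρ (u'⁻¹ * u) (G.α s) = G.α s := by
      intro s hs
      have h1 : f u ⟨s, hJfin.mem_toFinset.mpr hs⟩ = f u' ⟨s, hJfin.mem_toFinset.mpr hs⟩ := by
        rw [he]
      simp only [hf] at h1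
      rw [← G.rho_rho, h1, G.rho_inv_cancel']
    have := G.fix_pi_eq_one (mul_mem (inv_mem hu') hu) hfix
    calc u = u' * (u'⁻¹ * u) := by group
      _ = u' := by rw [this, mul_one]
  have himg : (f '' (par cs' J : Set W)).Finite := by
    apply Set.Finite.subset (Set.Finite.pi (fun _ : ↥(hJfin.toFinset : Finset B) => hphi))
    rintro _ ⟨u, hu, rfl⟩
    intro t _
    have htJ : (t : B) ∈ J := by
      have h := t.2
      rwa [hJfin.mem_toFinset] at h
    exact G.par_J_stable_phiJ hu (G.alpha_mem_phiJ htJ)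
  exact Set.Finite.of_finite_image himg hinj

lemma w0_spec {J : Set B} (hfin : finType cs' J) :
    w0 cs' J ∈ par cs' J ∧ ∀ u ∈ par cs' J, cs'.length u ≤ cs'.length (w0 cs' J) := by
  have hex : ∃ w ∈ par cs' J, ∀ u ∈ par cs' J, cs'.length u ≤ cs'.length w := by
    obtain ⟨a, ha, hmax⟩ := Set.Finite.exists_maximalFor cs'.length (par cs' J : Set W)
      hfin ⟨1, one_mem _⟩
    refine ⟨a, ha, fun u hu => ?_⟩
    rcases le_or_gt (cs'.length u) (cs'.length a) with h | h
    · exact h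
    · exact hmax hu h.le
  rw [w0, dif_pos hex]
  exact ⟨hex.choose_spec.1, hex.choose_spec.2⟩

/-- If some element of `par J` acts as `-1` on the simple roots of `J`, so does the
longest element. -/
lemma w0_neg {J : Set B} (hfin : finType cs' J) {z : W} (hz : z ∈ par cs' J)
    (hneg : ∀ t ∈ J, G.ρ z (G.α t) = - G.α t) :
    ∀ t ∈ J, G.ρ (w0 cs' J) (G.α t) = - G.α t := by
  obtain ⟨hw0mem, hw0max⟩ := w0_spec (cs' := cs') hfin
  have hdesc : ∀ t ∈ J, G.ρ (w0 cs' J) (G.α t) ∈ G.PhiNeg := by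
    intro t ht
    apply G.neg_of_descent
    have h1 : cs'.length (w0 cs' J * cs'.simple t) ≤ cs'.length (w0 cs' J) :=
      hw0max _ (mul_mem hw0mem (simple_mem_par ht))
    have h2 := cs'.length_mul_simple_ne (w0 cs' J) t
    omega
  have hu1 : w0 cs' J * z = 1 := by
    by_contra hne
    obtain ⟨j, hj⟩ := cs'.exists_rightDescent_of_ne_one hne
    have hmem : w0 cs' J * z ∈ par cs' J := mul_mem hw0mem hz
    have hneg' : G.ρ (w0 cs' J * z) (G.α j) ∈ G.PhiNeg := G.neg_of_descent hj
    by_cases hjJ : j ∈ J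
    · have hpos : G.ρ (w0 cs' J * z) (G.α j) ∈ G.PhiPos := by
        rw [← G.rho_rho, hneg j hjJ, map_neg]
        have := hdesc j hjJ
        show - G.ρ (w0 cs' J) (G.α j) ∈ G.PhiPos
        exact this
      exact G.pos_neg_disjoint (G.phi_w_stable (G.alpha_mem_phi j) _) hpos hneg'
    · have h1 : G.coord j (G.ρ (w0 cs' J * z) (G.α j)) = 1 := by
        rw [G.coord_par_invariant hmem hjJ, G.coord_alpha, if_pos rfl]
      have h2 : G.ρ (w0 cs' J * z) (G.α j) ∈ G.PhiPos :=
        G.pos_of_pos_coord (G.phi_w_stable (G.alpha_mem_phi j) _) (by rw [h1]; norm_num)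
      exact G.pos_neg_disjoint (G.phi_w_stable (G.alpha_mem_phi j) _) h2 hneg'
  intro t ht
  have hzinv : w0 cs' J = z⁻¹ := by
    rw [← one_mul z⁻¹, ← hu1]
    group
  rw [hzinv]
  have h1 : G.ρ z (- G.α t) = G.α t := by
    rw [map_neg, hneg t ht, neg_neg]
  have h2 : G.ρ z⁻¹ (G.ρ z (- G.α t)) = - G.α t := G.rho_inv_cancel' z _
  rw [h1] at h2
  exact h2

lemma component_irred (I : Set B) (s₀ : B) : IsIrred M' (component M' I s₀) := by
  have key : ∀ x, connIn M' I s₀ x → connIn M' (component M' I s₀) s₀ x := by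
    intro x hx
    induction hx with
    | refl => exact Relation.ReflTransGen.refl
    | @tail b c hab hbc ih =>
      obtain ⟨hbI, hcI, hadj⟩ := hbc
      have hbJ : b ∈ component M' I s₀ := ⟨hbI, hab⟩
      have hcJ : c ∈ component M' I s₀ := ⟨hcI, hab.tail ⟨hbI, hcI, hadj⟩⟩
      exact ih.tail ⟨hbJ, hcJ, hadj⟩
  intro a ha b hb
  exact (connIn_symm (key a ha.2)).trans (key b hb.2)

/-- Main builder for conjunct 3: a component on which some element of `W_I` acts by `-1`
is of `(-1)`-type. -/
lemma minus_one_type_of_neg {I : Set B} {g : W} (hg : g ∈ par cs' I) {s₀ : B}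
    (hneg : ∀ t ∈ component M' I s₀, G.ρ g (G.α t) = - G.α t) :
    IsMinusOneType cs' G (component M' I s₀) := by
  set J := component M' I s₀ with hJ
  -- extract an element of `par J` acting as `-1`
  have horth : ∀ t ∈ I, t ∉ J → ∀ u ∈ J, G.form (G.α t) (G.α u) = 0 :=
    fun t ht htn u hu => G.comp_orth ht htn hu
  obtain ⟨ω, hω, rfl⟩ := par_word hg
  obtain ⟨ω', hω', hact⟩ := G.extract horth ω hω
  set z := cs'.wordProd ω' with hz
  have hzpar : z ∈ par cs' J := word_mem_par ω' hω'
  have hzneg : ∀ t ∈ J, G.ρ z (G.α t) = - G.α t := by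
    intro t ht
    rw [← hact (G.α t) (Submodule.subset_span ⟨t, ht, rfl⟩)]
    exact hneg t ht
  have hJfin : J.Finite := by
    apply Set.Finite.subset (G.neg_set_finite (cs'.wordProd ω))
    intro t ht
    exact hneg t ht
  have hfin : finType cs' J := G.par_finite hJfin hzpar hzneg
  exact ⟨component_irred (M' := M') I s₀, hfin, G.w0_neg hfin hzpar hzneg⟩

end GeomRep
section Assembly

set_option maxHeartbeats 1000000

open CoxeterSystem

variable {I : Set B}

lemma zwi_mem_par {z : W} (hz : z ∈ ZWI cs I) : z ∈ par cs I := hz.1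

lemma zwi_mem_centralizer {z : W} (hz : z ∈ ZWI cs I) :
    z ∈ Subgroup.centralizer ((par cs I : Set W)) := by
  rw [Subgroup.mem_centralizer_iff]
  intro g hg
  exact (hz.2 g hg).symm

/-- Conjunct 1: `Z(W_I) ⊆ B̃_I`. -/
lemma conj1 {z : W} (hz : z ∈ ZWI cs I) : z ∈ Btilde cs G I := by
  refine ⟨zwi_mem_centralizer cs hz, ?_⟩
  have hfix : ∀ γ ∈ G.perp I ∩ G.PhiPos, G.ρ z γ = γ :=
    fun γ hγ => G.par_fixes_perp (zwi_mem_par cs hz) hγ.1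
  ext γ
  constructor
  · rintro ⟨δ, hδ, rfl⟩
    show G.ρ z δ ∈ _
    rw [hfix δ hδ]
    exact hδ
  · intro hγ
    exact ⟨γ, hγ, hfix γ hγ⟩

lemma btilde_mem_centralizer {w : W} (hw : w ∈ Btilde cs G I) :
    w ∈ Subgroup.centralizer ((par cs I : Set W)) := hw.1

lemma btilde_image {w : W} (hw : w ∈ Btilde cs G I) {γ : V}
    (hγ : γ ∈ G.perp I ∩ G.PhiPos) : G.ρ w γ ∈ G.perp I ∩ G.PhiPos := by
  have h1 : G.ρ w γ ∈ (fun v => G.ρ w v) '' (G.perp I ∩ G.PhiPos) := ⟨γ, hγ, rfl⟩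
  rwa [hw.2] at h1

lemma btilde_inv {w : W} (hw : w ∈ Btilde cs G I) : w⁻¹ ∈ Btilde cs G I := by
  refine ⟨inv_mem hw.1, ?_⟩
  ext γ
  constructor
  · rintro ⟨δ, hδ, rfl⟩
    show G.ρ w⁻¹ δ ∈ _
    have h1 : δ ∈ (fun v => G.ρ w v) '' (G.perp I ∩ G.PhiPos) := by rw [hw.2]; exact hδ
    obtain ⟨x, hx, rfl⟩ := h1
    show G.ρ w⁻¹ (G.ρ w x) ∈ _
    rw [G.rho_inv_cancel']
    exact hx
  · intro hγ
    refine ⟨G.ρ w γ, btilde_image cs G hw hγ, ?_⟩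
    show G.ρ w⁻¹ (G.ρ w γ) = γ
    rw [G.rho_inv_cancel']

lemma btilde_mul {w w' : W} (hw : w ∈ Btilde cs G I) (hw' : w' ∈ Btilde cs G I) :
    w * w' ∈ Btilde cs G I := by
  refine ⟨mul_mem hw.1 hw'.1, ?_⟩
  ext γ
  constructor
  · rintro ⟨δ, hδ, rfl⟩
    show G.ρ (w * w') δ ∈ _
    rw [← G.rho_rho]
    exact btilde_image cs G hw (btilde_image cs G hw' hδ)
  · intro hγ
    have h1 : G.ρ w⁻¹ γ ∈ G.perp I ∩ G.PhiPos := btilde_image cs G (btilde_inv cs G hw) hγ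
    have h2 : G.ρ w'⁻¹ (G.ρ w⁻¹ γ) ∈ G.perp I ∩ G.PhiPos :=
      btilde_image cs G (btilde_inv cs G hw') h1
    refine ⟨G.ρ w'⁻¹ (G.ρ w⁻¹ γ), h2, ?_⟩
    show G.ρ (w * w') (G.ρ w'⁻¹ (G.ρ w⁻¹ γ)) = γ
    rw [G.rho_rho, G.rho_rho]
    have e : w * w' * w'⁻¹ * w⁻¹ = 1 := by group
    rw [e, G.rho_one_apply]

lemma par_mono {J : Set B} (h : J ⊆ I) : par cs J ≤ par cs I :=
  Subgroup.closure_mono (Set.image_mono h)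

/-- Action of a product of longest elements of distinct `(-1)`-type components. -/
lemma prod_w0_action (L : List (Set B))
    (hcomp : ∀ J ∈ L, (∃ s ∈ I, J = component M I s) ∧ IsMinusOneType cs G J)
    (hnodup : L.Nodup) :
    ∀ s ∈ I, G.ρ ((L.map (fun J => w0 cs J)).prod) (G.α s)
      = if ∃ J ∈ L, s ∈ J then - G.α s else G.α s := by
  induction L with
  | nil =>
    intro s _
    simp only [List.map_nil, List.prod_nil, List.not_mem_nil]
    rw [if_neg (by simp), G.rho_one_apply]
  | cons J L' ih =>
    intro s hs
    have hJ := hcomp J (List.mem_cons_self (a := J) (l := L'))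
    obtain ⟨⟨s', hs', hJ'⟩, hmt⟩ := hJ
    have hw0J : w0 cs J ∈ par cs J := (GeomRep.w0_spec (cs' := cs) hmt.2.1).1
    have hnodup' : L'.Nodup := (List.nodup_cons.mp hnodup).2
    have hJnotin : J ∉ L' := (List.nodup_cons.mp hnodup).1
    have ihs := ih (fun X hX => hcomp X (List.mem_cons_of_mem J hX)) hnodup' s hs
    rw [List.map_cons, List.prod_cons, ← G.rho_rho, ihs]
    by_cases hsJ : s ∈ J
    · -- s is in no other component of the list
      have hnot' : ¬ ∃ X ∈ L', s ∈ X := by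
        rintro ⟨X, hX, hsX⟩
        obtain ⟨⟨t, ht, hXt⟩, _⟩ := hcomp X (List.mem_cons_of_mem J hX)
        apply hJnotin
        have e1 : component M I s = J := by
          rw [hJ']
          apply GeomRep.component_eq (M' := M)
          rw [← hJ']
          exact hsJ
        have e2 : component M I s = X := by
          rw [hXt]
          apply GeomRep.component_eq (M' := M)
          rw [← hXt]
          exact hsX
        rw [← e1, e2]
        exact hX
      rw [if_neg hnot', if_pos ⟨J, List.mem_cons_self (a := J) (l := L'), hsJ⟩]
      exact hmt.2.2 s hsJ
    · -- w0 J fixes α s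
      have hfix : G.ρ (w0 cs J) (G.α s) = G.α s := by
        apply G.par_fixes_perp (I := J) hw0J
        refine ⟨G.alpha_mem_phi s, fun t ht => ?_⟩
        have h1 : s ∉ component M I s' := by rw [← hJ']; exact hsJ
        have h2 : t ∈ component M I s' := by rw [← hJ']; exact ht
        exact G.comp_orth hs h1 h2
      by_cases hex : ∃ X ∈ L', s ∈ X
      · have hex' : ∃ X ∈ J :: L', s ∈ X := by
          obtain ⟨X, h1, h2⟩ := hex
          exact ⟨X, List.mem_cons_of_mem J h1, h2⟩
        rw [if_pos hex, if_pos hex', map_neg, hfix]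
      · have hex' : ¬ ∃ X ∈ J :: L', s ∈ X := by
          rintro ⟨X, hX, hsX⟩
          rcases List.mem_cons.mp hX with rfl | h1
          · exact hsJ hsX
          · exact hex ⟨X, h1, hsX⟩
        rw [if_neg hex, if_neg hex']
        exact hfix

end Assembly
section Assembly2

set_option maxHeartbeats 1000000

open CoxeterSystem

variable {I : Set B}

lemma alpha_ne_neg_alpha (s : B) : G.α s ≠ - G.α s := by
  intro h
  have h2 : (2 : ℝ) • G.α s = 0 := by
    linear_combination (norm := module) (1 : ℝ) • h
  rcases smul_eq_zero.mp h2 with h3 | h3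
  · norm_num at h3
  · exact G.alpha_ne_zero s h3

/-- Conjunct 4: `B̃_I = Z(W_I) ⬝ B_I`. -/
lemma conj4 {w : W} (hw : w ∈ Btilde cs G I) :
    ∃ z ∈ ZWI cs I, ∃ b ∈ BI cs G I, w = z * b := by
  classical
  set TT : Set B :=
    {s | s ∈ I ∧ IsMinusOneType cs G (component M I s) ∧ G.ρ w (G.α s) = - G.α s} with hTT
  have hTTfin : TT.Finite :=
    Set.Finite.subset (G.neg_set_finite w) (fun s hs => hs.2.2)
  set L : List (Set B) :=
    (hTTfin.toFinset.toList.map (fun s => component M I s)).dedup with hL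
  have hcomp : ∀ J ∈ L, (∃ s ∈ I, J = component M I s) ∧ IsMinusOneType cs G J := by
    intro J hJ
    rw [hL, List.mem_dedup] at hJ
    obtain ⟨s, hsmem, rfl⟩ := List.mem_map.mp hJ
    rw [Finset.mem_toList, Set.Finite.mem_toFinset] at hsmem
    exact ⟨⟨s, hsmem.1, rfl⟩, hsmem.2.1⟩
  have hnodup : L.Nodup := List.nodup_dedup _
  set z := (L.map (fun J => w0 cs J)).prod with hz
  have hact := prod_w0_action cs G L hcomp hnodup
  have hmemL : ∀ s ∈ TT, ∃ J ∈ L, s ∈ J := by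
    intro s hs
    refine ⟨component M I s, ?_, GeomRep.mem_component_self (M' := M) hs.1⟩
    rw [hL, List.mem_dedup]
    exact List.mem_map.mpr ⟨s, Finset.mem_toList.mpr (hTTfin.mem_toFinset.mpr hs), rfl⟩
  have hTT_of_mem : ∀ s ∈ I, (∃ J ∈ L, s ∈ J) → s ∈ TT := by
    rintro s hs ⟨J, hJL, hsJ⟩
    obtain ⟨⟨s', hs', rfl⟩, hmt⟩ := hcomp J hJL
    have hs'TT : s' ∈ TT := by
      rw [hL, List.mem_dedup] at hJL
      obtain ⟨t, htmem, hteq⟩ := List.mem_map.mp hJL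
      rw [Finset.mem_toList, Set.Finite.mem_toFinset] at htmem
      -- t ∈ TT and components agree; transfer the sign from t to s'
      have hconn : connIn M I t s' := by
        have h1 : s' ∈ component M I t := by
          rw [hteq]
          exact GeomRep.mem_component_self (M' := M) hs'
        exact h1.2
      refine ⟨hs', ?_, ?_⟩
      · rw [GeomRep.component_eq (M' := M) ⟨hs', hconn⟩]
        exact htmem.2.1
      · exact G.sign_const hw.1 hconn htmem.2.2
    have hconn2 : connIn M I s' s := hsJ.2
    refine ⟨hs, ?_, G.sign_const hw.1 hconn2 hs'TT.2.2⟩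
    rw [GeomRep.component_eq (M' := M) hsJ]
    exact hmt
  have hzpar : z ∈ par cs I := by
    rw [hz]
    apply list_prod_mem
    intro x hx
    obtain ⟨J, hJ, rfl⟩ := List.mem_map.mp hx
    obtain ⟨⟨s, hs, rfl⟩, hmt⟩ := hcomp J hJ
    exact par_mono cs (GeomRep.component_subset (M' := M))
      (GeomRep.w0_spec (cs' := cs) hmt.2.1).1
  have hzpm : ∀ s ∈ I, G.ρ z (G.α s) = G.α s ∨ G.ρ z (G.α s) = - G.α s := by
    intro s hs
    rw [hact s hs]
    split
    · right; rfl
    · left; rfl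
  have hzZWI : z ∈ ZWI cs I := by
    refine ⟨hzpar, fun u hu => ?_⟩
    have h1 := Subgroup.mem_centralizer_iff.mp
      (G.centralizer_of_pm (fun s hs => hzpm s hs)) u hu
    exact h1.symm
  refine ⟨z, hzZWI, z⁻¹ * w, ⟨btilde_mul cs G (btilde_inv cs G (conj1 cs G hzZWI)) hw, ?_⟩,
    by group⟩
  intro s hs hmt
  rcases G.centralizer_sign hw.1 hs with hpos | hneg
  · have hznot : G.ρ z (G.α s) = G.α s := by
      rw [hact s hs, if_neg]
      rintro ⟨J, hJL, hsJ⟩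
      have := (hTT_of_mem s hs ⟨J, hJL, hsJ⟩).2.2
      rw [hpos] at this
      exact alpha_ne_neg_alpha cs G s this
    show G.ρ (z⁻¹ * w) (G.α s) = G.α s
    rw [← G.rho_rho, hpos]
    have h2 : G.ρ z⁻¹ (G.ρ z (G.α s)) = G.α s := G.rho_inv_cancel' z _
    rwa [hznot] at h2
  · have hsTT : s ∈ TT := ⟨hs, hmt, hneg⟩
    have hzneg : G.ρ z (G.α s) = - G.α s := by
      rw [hact s hs, if_pos (hmemL s hsTT)]
    show G.ρ (z⁻¹ * w) (G.α s) = G.α s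
    rw [← G.rho_rho, hneg]
    have h2 : G.ρ z⁻¹ (G.ρ z (G.α s)) = G.α s := G.rho_inv_cancel' z _
    rwa [hzneg] at h2

/-- Conjunct 3: `Z(W_I) ∩ B_I = 1`. -/
lemma conj3 {w : W} (hz : w ∈ ZWI cs I) (hb : w ∈ BI cs G I) : w = 1 := by
  have hcen := zwi_mem_centralizer cs hz
  apply G.fix_pi_eq_one hz.1
  intro s hs
  rcases G.centralizer_sign hcen hs with hpos | hneg
  · exact hpos
  · exfalso
    have hnegall : ∀ t ∈ component M I s, G.ρ w (G.α t) = - G.α t :=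
      fun t ht => G.sign_const hcen ht.2 hneg
    have hmt : IsMinusOneType cs G (component M I s) :=
      G.minus_one_type_of_neg hz.1 hnegall
    have := hb.2 s hs hmt
    rw [this] at hneg
    exact alpha_ne_neg_alpha cs G s hneg

/-- Conjunct 6: `W^{⊥I} ∩ B̃_I = 1`. -/
lemma conj6 {u : W} (hu : u ∈ G.Wperp I) (hb : u ∈ Btilde cs G I) : u = 1 := by
  apply G.wr_fix_pos_eq_one (G.rc_perp I) hu
  intro γ hγ hγpos
  exact (btilde_image cs G hb ⟨hγ, hγpos⟩).2

/-- Conjunct 9. -/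
lemma conj9 {p : W} (hdec : ∃ z ∈ ZWI cs I, ∃ u ∈ G.Wperp I, p = z * u)
    (hb : p ∈ BI cs G I) : p = 1 := by
  obtain ⟨z, hz, u, hu, rfl⟩ := hdec
  have hufix : ∀ γ, γ ∈ G.perp I → γ ∈ G.PhiPos → G.ρ u γ ∈ G.PhiPos := by
    intro γ hγ hγpos
    have h1 : G.ρ (z * u) γ ∈ G.perp I ∩ G.PhiPos := btilde_image cs G hb.1 ⟨hγ, hγpos⟩
    have h2 : G.ρ (z * u) γ = G.ρ z (G.ρ u γ) := (G.rho_rho z u γ).symm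
    have h3 : G.ρ u γ ∈ G.perp I := by
      have := G.wperp_le_centralizer I hu
      exact G.centralizer_preserves_perp this hγ
    have h4 : G.ρ z (G.ρ u γ) = G.ρ u γ := G.par_fixes_perp hz.1 h3
    rw [h2, h4] at h1
    exact h1.2
  have hu1 : u = 1 := G.wr_fix_pos_eq_one (G.rc_perp I) hu hufix
  rw [hu1, mul_one] at hb ⊢
  exact conj3 cs G hz hb

/-- Conjunct 10. -/
lemma conj10_aux : ∀ (n : ℕ) (g : W), cs.length g = n →
    g ∈ Subgroup.centralizer ((par cs I : Set W)) →
    ∃ z ∈ ZWI cs I, ∃ u ∈ G.Wperp I, ∃ b ∈ BI cs G I, g = z * u * b := by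
  intro n
  induction n using Nat.strong_induction_on with
  | _ n ih =>
    intro g hgn hg
    by_cases hall : ∀ γ, γ ∈ G.perp I → γ ∈ G.PhiPos → G.ρ g γ ∈ G.PhiPos
    · have hbt : g ∈ Btilde cs G I := by
        refine ⟨hg, ?_⟩
        ext γ
        constructor
        · rintro ⟨δ, hδ, rfl⟩
          exact ⟨G.centralizer_preserves_perp hg hδ.1, hall δ hδ.1 hδ.2⟩
        · intro hγ
          refine ⟨G.ρ g⁻¹ γ, ⟨G.centralizer_preserves_perp (inv_mem hg) hγ.1, ?_⟩,
            G.rho_inv_cancel g γ⟩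
          rcases G.root_pos_or_neg (G.phi_w_stable hγ.1.1 g⁻¹) with h | h
          · exact h
          · exfalso
            have hδ : - G.ρ g⁻¹ γ ∈ G.perp I :=
              G.perp_neg_closed (G.centralizer_preserves_perp (inv_mem hg) hγ.1)
            have hδpos : - G.ρ g⁻¹ γ ∈ G.PhiPos := h
            have h2 := hall _ hδ hδpos
            rw [map_neg, G.rho_inv_cancel] at h2
            exact G.pos_neg_disjoint hγ.1.1 hγ.2 h2
      obtain ⟨z, hz, b, hb, hzb⟩ := conj4 cs G hbt
      exact ⟨z, hz, 1, one_mem _, b, hb, by rw [mul_one, hzb]⟩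
    · push_neg at hall
      obtain ⟨γ, hγ, hγpos, hγneg⟩ := hall
      have hγneg' : G.ρ g γ ∈ G.PhiNeg := by
        rcases G.root_pos_or_neg (G.phi_w_stable hγpos.1 g) with h | h
        · exact absurd h hγneg
        · exact h
      set δ := - G.ρ g γ with hδ
      have hδperp : δ ∈ G.perp I :=
        G.perp_neg_closed (G.centralizer_preserves_perp hg hγ)
      have hδpos : δ ∈ G.PhiPos := hγneg'
      have hlen : cs.length (G.reflAlong δ * g) < cs.length g := by
        apply G.length_reflAlong_mul_lt hδpos
        have e : G.ρ g⁻¹ δ = - γ := by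
          rw [hδ, map_neg, G.rho_inv_cancel']
        rw [e]
        show - - γ ∈ G.PhiPos
        rwa [neg_neg]
      have hg' : G.reflAlong δ * g ∈ Subgroup.centralizer ((par cs I : Set W)) :=
        mul_mem (G.reflAlong_perp_mem_centralizer hδperp) hg
      obtain ⟨z, hz, u, hu, b, hb, heq⟩ :=
        ih (cs.length (G.reflAlong δ * g)) (by omega) _ rfl hg'
      have hzs : z * G.reflAlong δ = G.reflAlong δ * z := by
        have h1 := Subgroup.mem_centralizer_iff.mp
          (G.reflAlong_perp_mem_centralizer hδperp) z hz.1
        exact h1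
      refine ⟨z, hz, G.reflAlong δ * u,
        mul_mem (Subgroup.subset_closure ⟨δ, hδperp, rfl⟩) hu, b, hb, ?_⟩
      have hginv : g = G.reflAlong δ * (G.reflAlong δ * g) := by
        rw [← mul_assoc, G.reflAlong_sq hδpos.1, one_mul]
      rw [hginv, heq]
      calc G.reflAlong δ * (z * u * b) = (G.reflAlong δ * z) * u * b := by group
        _ = (z * G.reflAlong δ) * u * b := by rw [hzs]
        _ = z * (G.reflAlong δ * u) * b := by group

end Assembly2
section Assembly3

set_option maxHeartbeats 1000000

variable {I : Set B}

lemma orbit_sub_perp : G.orbit (G.perp I) ⊆ G.perp I := by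
  rintro _ ⟨u, hu, a, ha, rfl⟩
  exact G.centralizer_preserves_perp (G.wperp_le_centralizer I hu) ha

lemma btilde_maps_orbit {b : W} (hb : b ∈ Btilde cs G I) {x : V}
    (hx : x ∈ G.orbit (G.perp I)) : G.ρ b x ∈ G.orbit (G.perp I) := by
  obtain ⟨u, hu, a, ha, rfl⟩ := hx
  refine ⟨b * u * b⁻¹, G.centralizer_conj_wperp hb.1 hu, G.ρ b a,
    G.centralizer_preserves_perp hb.1 ha, ?_⟩
  rw [G.rho_rho, G.rho_rho]
  congr 1
  group

lemma btilde_maps_orbit_pos {b : W} (hb : b ∈ Btilde cs G I) {x : V}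
    (hx : x ∈ G.orbit (G.perp I) ∩ G.PhiPos) :
    G.ρ b x ∈ G.orbit (G.perp I) ∩ G.PhiPos := by
  refine ⟨btilde_maps_orbit cs G hb hx.1, ?_⟩
  exact (btilde_image cs G hb ⟨orbit_sub_perp cs G hx.1, hx.2⟩).2

lemma btilde_maps_simpleSet {b : W} (hb : b ∈ Btilde cs G I) {γ : V}
    (hγ : γ ∈ G.simpleSet (G.perp I)) : G.ρ b γ ∈ G.simpleSet (G.perp I) := by
  obtain ⟨hγ1, hmin⟩ := hγ
  refine ⟨btilde_maps_orbit_pos cs G hb hγ1, ?_⟩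
  intro n c β hc hβ heq
  have heq' : γ = ∑ k, c k • G.ρ b⁻¹ (β k) := by
    have h2 := congrArg (fun v => G.ρ b⁻¹ v) heq
    rw [G.rho_inv_cancel'] at h2
    rw [h2, map_sum]
    apply Finset.sum_congr rfl
    intro k _
    rw [map_smul]
  have hβ' : ∀ k, G.ρ b⁻¹ (β k) ∈ G.orbit (G.perp I) ∩ G.PhiPos :=
    fun k => btilde_maps_orbit_pos cs G (btilde_inv cs G hb) (hβ k)
  intro k
  have h3 := hmin n c (fun k => G.ρ b⁻¹ (β k)) hc hβ' heq' k
  rw [← h3]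
  exact (G.rho_inv_cancel b (β k)).symm

/-- Conjunct 11. -/
lemma conj11 {b : W} (hb : b ∈ BI cs G I) :
    (fun r => b * r * b⁻¹) '' G.RI I = G.RI I := by
  have hbB := hb.1
  ext r
  constructor
  · rintro ⟨r', hr', rfl⟩
    obtain ⟨γ, hγ, rfl⟩ := hr'
    have hγΦ : γ ∈ G.Phi := hγ.1.2.1
    show b * G.reflAlong γ * b⁻¹ ∈ _
    rw [G.reflAlong_conj hγΦ b]
    exact ⟨G.ρ b γ, btilde_maps_simpleSet cs G hbB hγ, rfl⟩
  · intro hr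
    obtain ⟨γ, hγ, rfl⟩ := hr
    have hγΦ : γ ∈ G.Phi := hγ.1.2.1
    have hmem : G.ρ b⁻¹ γ ∈ G.simpleSet (G.perp I) :=
      btilde_maps_simpleSet cs G (btilde_inv cs G hbB) hγ
    have hxΦ : G.ρ b⁻¹ γ ∈ G.Phi := hmem.1.2.1
    refine ⟨G.reflAlong (G.ρ b⁻¹ γ), ⟨G.ρ b⁻¹ γ, hmem, rfl⟩, ?_⟩
    show b * G.reflAlong (G.ρ b⁻¹ γ) * b⁻¹ = G.reflAlong γ
    rw [G.reflAlong_conj hxΦ b, G.rho_inv_cancel]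

end Assembly3
/-- Theorem `exactsequence_B`. Let `I ⊆ S`, `B̃_I` as above, and
`B_I = {w ∈ B̃_I : w·α_s = α_s for every s ∈ I lying in an irreducible component of I of
(-1)-type}`. Then `B̃_I` is the internal direct product `Z(W_I) × B_I`, and
`Z_W(W_I) = W^{⊥I} ⋊ (Z(W_I) × B_I) = (Z(W_I) × W^{⊥I}) ⋊ B_I`, where `B_I` acts on
`W^{⊥I}` by automorphisms of the Coxeter system `(W^{⊥I}, R^I)`. -/
theorem statement_14 (I : Set B) :
    (∀ z : W, z ∈ ZWI cs I → z ∈ Btilde cs G I) ∧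
    (∀ z ∈ ZWI cs I, ∀ b ∈ BI cs G I, z * b = b * z) ∧
    (∀ w : W, w ∈ ZWI cs I → w ∈ BI cs G I → w = 1) ∧
    (∀ w ∈ Btilde cs G I, ∃ z ∈ ZWI cs I, ∃ b ∈ BI cs G I, w = z * b) ∧
    (∀ g ∈ Subgroup.centralizer ((par cs I : Set W)), ∀ u ∈ G.Wperp I,
      g * u * g⁻¹ ∈ G.Wperp I) ∧
    (∀ u : W, u ∈ G.Wperp I → u ∈ Btilde cs G I → u = 1) ∧
    (∀ z ∈ ZWI cs I, ∀ u ∈ G.Wperp I, z * u = u * z) ∧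
    (∀ g ∈ Subgroup.centralizer ((par cs I : Set W)), ∀ p : W,
      (∃ z ∈ ZWI cs I, ∃ u ∈ G.Wperp I, p = z * u) →
      ∃ z ∈ ZWI cs I, ∃ u ∈ G.Wperp I, g * p * g⁻¹ = z * u) ∧
    (∀ p : W, (∃ z ∈ ZWI cs I, ∃ u ∈ G.Wperp I, p = z * u) → p ∈ BI cs G I → p = 1) ∧
    (∀ g ∈ Subgroup.centralizer ((par cs I : Set W)),
      ∃ z ∈ ZWI cs I, ∃ u ∈ G.Wperp I, ∃ b ∈ BI cs G I, g = z * u * b) ∧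
    (∀ b ∈ BI cs G I, (fun r => b * r * b⁻¹) '' G.RI I = G.RI I) := by
  refine ⟨?_, ?_, ?_, ?_, ?_, ?_, ?_, ?_, ?_, ?_, ?_⟩
  · exact fun z hz => conj1 cs G hz
  · intro z hz b hb
    have h1 := Subgroup.mem_centralizer_iff.mp hb.1.1 z hz.1
    exact h1
  · exact fun w hz hb => conj3 cs G hz hb
  · exact fun w hw => conj4 cs G hw
  · exact fun g hg u hu => G.centralizer_conj_wperp hg hu
  · exact fun u hu hb => conj6 cs G hu hb
  · intro z hz u hu
    have h1 := Subgroup.mem_centralizer_iff.mp (G.wperp_le_centralizer I hu) z hz.1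
    exact h1
  · rintro g hg p ⟨z, hz, u, hu, rfl⟩
    refine ⟨z, hz, g * u * g⁻¹, G.centralizer_conj_wperp hg hu, ?_⟩
    have hgz : g * z = z * g := (Subgroup.mem_centralizer_iff.mp hg z hz.1).symm
    calc g * (z * u) * g⁻¹ = (g * z) * u * g⁻¹ := by group
      _ = (z * g) * u * g⁻¹ := by rw [hgz]
      _ = z * (g * u * g⁻¹) := by group
  · exact fun p hdec hb => conj9 cs G hdec hb
  · exact fun g hg => conj10_aux cs G (cs.length g) g rfl hg
  · exact fun b hb => conj11 cs G hb
end CoxCentralizer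
end
end
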